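/- arXiv:1206.4572 — 13 statements merged into one kernel-verified Lean document; each statement's English description precedes it below -/
import Mathlib

section
/- Let a be a binary sequence of length n, set a_0 := 0 and a_{n+1} := 0, and let δ = (δ_1,…,δ_{n+1}) be defined by δ_i := a_i − a_{i−1} for i = 1,…,n+1. Then for every k with 1 ≤ k ≤ n−1, C_{k+1}(a) − 2·C_k(a) + C_{k−1}(a) = −C_k(δ), where C_k(δ) := Σ_{i=1}^{n+1−k} δ_i·δ_{i+k}. -/
/-- The `k`-th aperiodic autocorrelation of a sequence `a` of length `n`:
`C_k(a) = ∑_{i=1}^{n-k} a_i a_{i+k}` (so `C_n(a) = 0`). -/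
def aperCorr (a : ℕ → ℤ) (n k : ℕ) : ℤ :=
  ∑ i ∈ Finset.Icc 1 (n - k), a i * a (i + k)

theorem stmt_1 (n : ℕ) (a : ℕ → ℤ)
    (hbin : ∀ i, 1 ≤ i → i ≤ n → a i = 1 ∨ a i = -1)
    (h0 : a 0 = 0) (htop : a (n + 1) = 0)
    (δ : ℕ → ℤ) (hδ : ∀ i, 1 ≤ i → i ≤ n + 1 → δ i = a i - a (i - 1))
    (k : ℕ) (hk1 : 1 ≤ k) (hk2 : k ≤ n - 1) :
    aperCorr a n (k + 1) - 2 * aperCorr a n k + aperCorr a n (k - 1)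
      = -(∑ i ∈ Finset.Icc 1 (n + 1 - k), δ i * δ (i + k)) := by
  have hkn : k + 1 ≤ n := by omega
  set N := n - k with hN
  have hN1 : 1 ≤ N := by omega
  -- express the correlations as range sums
  have e1 : aperCorr a n k = ∑ i ∈ Finset.range N, a (1 + i) * a (1 + i + k) := by
    rw [aperCorr, ← Finset.Ico_add_one_right_eq_Icc, Finset.sum_Ico_eq_sum_range]
    congr 1 <;> omega
  have e2 : aperCorr a n (k - 1) = ∑ i ∈ Finset.range (N + 1), a (1 + i) * a (i + k) := by
    rw [aperCorr, ← Finset.Ico_add_one_right_eq_Icc, Finset.sum_Ico_eq_sum_range]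
    refine Finset.sum_congr (by congr 1 <;> omega) ?_
    intro i _
    congr 2
    omega
  have e3 : aperCorr a n (k + 1) = ∑ i ∈ Finset.range (N - 1), a (1 + i) * a (i + k + 2) := by
    rw [aperCorr, ← Finset.Ico_add_one_right_eq_Icc, Finset.sum_Ico_eq_sum_range]
    refine Finset.sum_congr (by congr 1 <;> omega) ?_
    intro i _
    congr 2
    omega
  -- express the δ sum as a range sum with δ expanded
  have e4 : (∑ i ∈ Finset.Icc 1 (n + 1 - k), δ i * δ (i + k))
      = ∑ i ∈ Finset.range (N + 1), (a (1 + i) - a i) * (a (1 + i + k) - a (i + k)) := by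
    rw [← Finset.Ico_add_one_right_eq_Icc, Finset.sum_Ico_eq_sum_range]
    refine Finset.sum_congr (by congr 1 <;> omega) ?_
    intro i hi
    rw [Finset.mem_range] at hi
    rw [hδ (1 + i) (by omega) (by omega), hδ (1 + i + k) (by omega) (by omega),
      show 1 + i - 1 = i from by omega, show 1 + i + k - 1 = i + k from by omega]
  -- the four component sums
  have hA : (∑ i ∈ Finset.range (N + 1), a (1 + i) * a (1 + i + k)) = aperCorr a n k := by
    rw [Finset.sum_range_succ, show 1 + N + k = n + 1 from by omega, htop, mul_zero, add_zero, e1]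
  have hD : (∑ i ∈ Finset.range (N + 1), a i * a (i + k)) = aperCorr a n k := by
    rw [Finset.sum_range_succ', h0, zero_mul, add_zero, e1]
    refine Finset.sum_congr rfl ?_
    intro i _
    congr 2 <;> omega
  have hB : (∑ i ∈ Finset.range (N + 1), a (1 + i) * a (i + k)) = aperCorr a n (k - 1) := e2.symm
  have hC : (∑ i ∈ Finset.range (N + 1), a i * a (1 + i + k)) = aperCorr a n (k + 1) := by
    rw [Finset.sum_range_succ', h0, zero_mul, add_zero,
      show N = (N - 1) + 1 from by omega, Finset.sum_range_succ,
      show 1 + ((N - 1) + 1) + k = n + 1 from by omega, htop, mul_zero, add_zero, e3]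
    refine Finset.sum_congr rfl ?_
    intro i _
    congr 2 <;> omega
  have hsplit : (∑ i ∈ Finset.range (N + 1), (a (1 + i) - a i) * (a (1 + i + k) - a (i + k)))
      = (∑ i ∈ Finset.range (N + 1), a (1 + i) * a (1 + i + k))
        - (∑ i ∈ Finset.range (N + 1), a (1 + i) * a (i + k))
        - (∑ i ∈ Finset.range (N + 1), a i * a (1 + i + k))
        + (∑ i ∈ Finset.range (N + 1), a i * a (i + k)) := by
    rw [← Finset.sum_sub_distrib, ← Finset.sum_sub_distrib, ← Finset.sum_add_distrib]
    refine Finset.sum_congr rfl ?_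
    intro i _
    ring
  rw [e4, hsplit, hA, hB, hC, hD]
  ring
end

section
/- Let a be a binary sequence of length n, set a_0 := 0 and a_{n+1} := 0, and let δ_i := a_i − a_{i−1} for i = 1,…,n+1. Then for every k with 1 ≤ k ≤ n−1, Σ_{i=1}^{n+1−k} δ_i·δ_{i+k} = 2·R_k(a), i.e. the k-th correlation of δ equals twice the k-th component of the run vector of a. -/
/-- The `k`-th component of the run vector of the sequence `a` of length `n`
(with `a 0 = 0` and `a (n+1) = 0`): minus the sum of the weights of all run
blocks `a(i, i+k)` of `a` of length `k`, where a run block `a(i,j)` satisfies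
`a (i-1) ≠ a i` and `a (j-1) ≠ a j`, and its weight is `2 * a i * a (j-1)` if it
is inner (`1 < i` and `j < n+1`) and `a i * a (j-1)` otherwise. -/
def runVec (a : ℕ → ℤ) (n k : ℕ) : ℤ :=
  -∑ i ∈ Finset.Icc 1 (n + 1 - k),
    (if a (i - 1) ≠ a i ∧ a (i + k - 1) ≠ a (i + k) then
      (if 1 < i ∧ i + k < n + 1 then 2 else 1) * (a i * a (i + k - 1))
    else 0)

lemma neg_of_bin_ne {x y : ℤ} (hx : x = 1 ∨ x = -1) (hy : y = 1 ∨ y = -1)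
    (h : x ≠ y) : x = -y := by
  rcases hx with hx | hx <;> rcases hy with hy | hy <;> simp_all

theorem stmt_2 (n : ℕ) (a : ℕ → ℤ)
    (hbin : ∀ i, 1 ≤ i → i ≤ n → a i = 1 ∨ a i = -1)
    (h0 : a 0 = 0) (htop : a (n + 1) = 0)
    (δ : ℕ → ℤ) (hδ : ∀ i, 1 ≤ i → i ≤ n + 1 → δ i = a i - a (i - 1))
    (k : ℕ) (hk1 : 1 ≤ k) (hk2 : k ≤ n - 1) :
    (∑ i ∈ Finset.Icc 1 (n + 1 - k), δ i * δ (i + k)) = 2 * runVec a n k := by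
  have hn2 : 2 ≤ n := by omega
  rw [runVec, mul_neg, ← neg_mul, Finset.mul_sum]
  refine Finset.sum_congr rfl ?_
  intro i hi
  rw [Finset.mem_Icc] at hi
  obtain ⟨h1i, hik⟩ := hi
  have hile : i ≤ n := by omega
  have hikle : i + k ≤ n + 1 := by omega
  have eδi : δ i = a i - a (i - 1) := hδ i h1i (by omega)
  have eδik : δ (i + k) = a (i + k) - a (i + k - 1) := hδ (i + k) (by omega) hikle
  by_cases hc : a (i - 1) ≠ a i ∧ a (i + k - 1) ≠ a (i + k)
  · -- compute δ i
    have e1 : δ i = (if 1 < i then 2 else 1) * a i := by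
      by_cases h1 : 1 < i
      · have hb1 : a (i - 1) = 1 ∨ a (i - 1) = -1 := hbin (i - 1) (by omega) (by omega)
        have hb2 : a i = 1 ∨ a i = -1 := hbin i h1i hile
        have := neg_of_bin_ne hb1 hb2 hc.1
        simp [h1, eδi, this]; ring
      · have : i = 1 := by omega
        subst this
        simp [eδi, h0]
    have e2 : δ (i + k) = -((if i + k < n + 1 then 2 else 1) * a (i + k - 1)) := by
      by_cases h2 : i + k < n + 1
      · have hb1 : a (i + k - 1) = 1 ∨ a (i + k - 1) = -1 := hbin (i + k - 1) (by omega) (by omega)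
        have hb2 : a (i + k) = 1 ∨ a (i + k) = -1 := hbin (i + k) (by omega) (by omega)
        have := neg_of_bin_ne hb1 hb2 hc.2
        simp [h2, eδik, this]; ring
      · have heq : i + k = n + 1 := by omega
        rw [eδik, heq, htop]
        simp [h2]
    rw [if_pos hc, e1, e2]
    have hne : ¬ (i = 1 ∧ i + k = n + 1) := by omega
    by_cases h1 : 1 < i <;> by_cases h2 : i + k < n + 1 <;>
      simp only [h1, h2, if_true, if_false, and_true, and_false, true_and, false_and,
        if_pos, ite_true, ite_false] <;> ring_nf <;> omega
  · rw [if_neg hc]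
    rw [not_and_or, not_not, not_not] at hc
    rcases hc with hc | hc
    · rw [eδi, hc]; ring
    · rw [eδik, hc]; ring
end

section
/- Let a be a binary sequence of length n. Then for every k with 1 ≤ k ≤ n−1, C_{k+1}(a) − 2·C_k(a) + C_{k−1}(a) = −2·R_k(a). -/
lemma term_inner (x y u v : ℤ) (hx : x = 1 ∨ x = -1) (hy : y = 1 ∨ y = -1)
    (hu : u = 1 ∨ u = -1) (hv : v = 1 ∨ v = -1) :
    (x - y) * (u - v) = -2 * (if x ≠ y ∧ u ≠ v then 2 * (y * u) else 0) := by
  rcases hx with rfl | rfl <;> rcases hy with rfl | rfl <;> rcases hu with rfl | rfl <;>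
    rcases hv with rfl | rfl <;> norm_num

lemma term_left (y u v : ℤ) (hy : y = 1 ∨ y = -1)
    (hu : u = 1 ∨ u = -1) (hv : v = 1 ∨ v = -1) :
    ((0 : ℤ) - y) * (u - v) = -2 * (if (0 : ℤ) ≠ y ∧ u ≠ v then 1 * (y * u) else 0) := by
  rcases hy with rfl | rfl <;> rcases hu with rfl | rfl <;> rcases hv with rfl | rfl <;> norm_num

lemma term_right (x y u : ℤ) (hx : x = 1 ∨ x = -1) (hy : y = 1 ∨ y = -1)
    (hu : u = 1 ∨ u = -1) :
    (x - y) * (u - 0) = -2 * (if x ≠ y ∧ u ≠ (0 : ℤ) then 1 * (y * u) else 0) := by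
  rcases hx with rfl | rfl <;> rcases hy with rfl | rfl <;> rcases hu with rfl | rfl <;> norm_num

theorem stmt_3 (n : ℕ) (a : ℕ → ℤ)
    (hbin : ∀ i, 1 ≤ i → i ≤ n → a i = 1 ∨ a i = -1)
    (h0 : a 0 = 0) (htop : a (n + 1) = 0)
    (k : ℕ) (hk1 : 1 ≤ k) (hk2 : k ≤ n - 1) :
    aperCorr a n (k + 1) - 2 * aperCorr a n k + aperCorr a n (k - 1)
      = -2 * runVec a n k := by
  obtain ⟨l, rfl⟩ : ∃ l, k = l + 1 := ⟨k - 1, by omega⟩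
  obtain ⟨m, rfl⟩ : ∃ m, n = l + 2 + m := ⟨n - (l + 2), by omega⟩
  -- abbreviate the four range-indexed sums
  set A : ℤ := ∑ j ∈ Finset.range m, a (j + 1) * a (j + l + 3) with hA
  set B : ℤ := ∑ j ∈ Finset.range (m + 1), a (j + 1) * a (j + l + 2) with hB
  set D : ℤ := ∑ j ∈ Finset.range (m + 2), a (j + 1) * a (j + l + 1) with hD
  set W : ℤ := ∑ j ∈ Finset.range (m + 2),
      (if a j ≠ a (j + 1) ∧ a (j + l + 1) ≠ a (j + l + 2) then
        (if 1 < j + 1 ∧ j + l + 2 < l + 2 + m + 1 then (2 : ℤ) else 1) *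
          (a (j + 1) * a (j + l + 1))
      else 0) with hW
  have eA : aperCorr a (l + 2 + m) (l + 1 + 1) = A := by
    unfold aperCorr
    rw [show l + 2 + m - (l + 1 + 1) = m from by omega, ← Finset.Ico_add_one_right_eq_Icc, Finset.sum_Ico_eq_sum_range,
      show m + 1 - 1 = m from by omega, hA]
    refine Finset.sum_congr rfl fun j _ => ?_
    rw [show 1 + j + (l + 1 + 1) = j + l + 3 from by omega, show 1 + j = j + 1 from by omega]
  have eB : aperCorr a (l + 2 + m) (l + 1) = B := by
    unfold aperCorr
    rw [show l + 2 + m - (l + 1) = m + 1 from by omega, ← Finset.Ico_add_one_right_eq_Icc, Finset.sum_Ico_eq_sum_range,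
      show m + 1 + 1 - 1 = m + 1 from by omega, hB]
    refine Finset.sum_congr rfl fun j _ => ?_
    rw [show 1 + j + (l + 1) = j + l + 2 from by omega, show 1 + j = j + 1 from by omega]
  have eD : aperCorr a (l + 2 + m) (l + 1 - 1) = D := by
    unfold aperCorr
    rw [show l + 1 - 1 = l from by omega, show l + 2 + m - l = m + 2 from by omega,
      ← Finset.Ico_add_one_right_eq_Icc, Finset.sum_Ico_eq_sum_range, show m + 2 + 1 - 1 = m + 2 from by omega, hD]
    refine Finset.sum_congr rfl fun j _ => ?_
    rw [show 1 + j + l = j + l + 1 from by omega, show 1 + j = j + 1 from by omega]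
  have eW : runVec a (l + 2 + m) (l + 1) = -W := by
    unfold runVec
    rw [show l + 2 + m + 1 - (l + 1) = m + 2 from by omega, ← Finset.Ico_add_one_right_eq_Icc, Finset.sum_Ico_eq_sum_range,
      show m + 2 + 1 - 1 = m + 2 from by omega, hW]
    congr 1
    refine Finset.sum_congr rfl fun j _ => ?_
    rw [show 1 + j + (l + 1) - 1 = j + l + 1 from by omega,
      show 1 + j + (l + 1) = j + l + 2 from by omega,
      show 1 + j - 1 = j from by omega, show 1 + j = j + 1 from by omega]
  rw [eA, eB, eD, eW]
  -- the key telescoping sum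
  have key : ∀ j ∈ Finset.range (m + 2),
      (a j - a (j + 1)) * (a (j + l + 1) - a (j + l + 2))
        = -2 * (if a j ≠ a (j + 1) ∧ a (j + l + 1) ≠ a (j + l + 2) then
            (if 1 < j + 1 ∧ j + l + 2 < l + 2 + m + 1 then (2 : ℤ) else 1) *
              (a (j + 1) * a (j + l + 1))
          else 0) := by
    intro j hj
    rw [Finset.mem_range] at hj
    rcases Nat.eq_zero_or_pos j with rfl | hj0
    · rw [if_neg (by omega : ¬(1 < 0 + 1 ∧ 0 + l + 2 < l + 2 + m + 1))]
      simp only [Nat.zero_add, zero_add]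
      rw [h0]
      exact term_left _ _ _ (hbin 1 (by omega) (by omega)) (hbin (l + 1) (by omega) (by omega))
        (hbin (l + 2) (by omega) (by omega))
    · rcases Nat.lt_or_ge j (m + 1) with hjm | hjm
      · rw [if_pos (by omega : 1 < j + 1 ∧ j + l + 2 < l + 2 + m + 1)]
        exact term_inner _ _ _ _ (hbin j (by omega) (by omega))
          (hbin (j + 1) (by omega) (by omega)) (hbin (j + l + 1) (by omega) (by omega))
          (hbin (j + l + 2) (by omega) (by omega))
      · have hjeq : j = m + 1 := by omega
        subst hjeq
        rw [if_neg (by omega : ¬(1 < m + 1 + 1 ∧ m + 1 + l + 2 < l + 2 + m + 1))]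
        rw [show m + 1 + l + 2 = l + 2 + m + 1 from by omega, htop]
        exact term_right _ _ _ (hbin (m + 1) (by omega) (by omega))
          (hbin (m + 1 + 1) (by omega) (by omega)) (hbin (m + 1 + l + 1) (by omega) (by omega))
  have hS : ∑ j ∈ Finset.range (m + 2),
      (a j - a (j + 1)) * (a (j + l + 1) - a (j + l + 2)) = -2 * W := by
    rw [hW, Finset.mul_sum]
    exact Finset.sum_congr rfl key
  -- expand the telescoping sum into the correlation sums
  have hT1 : ∑ j ∈ Finset.range (m + 2), a j * a (j + l + 1) = B := by
    rw [show m + 2 = m + 1 + 1 from rfl, Finset.sum_range_succ']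
    rw [show (0:ℕ) + l + 1 = l + 1 from by omega] -- adjust
    rw [h0, zero_mul, add_zero, hB]
    refine Finset.sum_congr rfl fun j _ => ?_
    rw [show j + 1 + l + 1 = j + l + 2 from by omega]
  have hT2 : ∑ j ∈ Finset.range (m + 2), a (j + 1) * a (j + l + 2) = B := by
    rw [show m + 2 = m + 1 + 1 from rfl, Finset.sum_range_succ]
    rw [show m + 1 + l + 2 = l + 2 + m + 1 from by omega, htop, mul_zero, add_zero, hB]
  have hT3 : ∑ j ∈ Finset.range (m + 2), a j * a (j + l + 2) = A := by
    rw [show m + 2 = m + 1 + 1 from rfl, Finset.sum_range_succ']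
    rw [h0, zero_mul, add_zero, Finset.sum_range_succ]
    rw [show m + 1 + l + 2 = l + 2 + m + 1 from by omega, htop, mul_zero, add_zero, hA]
    refine Finset.sum_congr rfl fun j _ => ?_
    rw [show j + 1 + l + 2 = j + l + 3 from by omega]
  have hexp : ∑ j ∈ Finset.range (m + 2),
      (a j - a (j + 1)) * (a (j + l + 1) - a (j + l + 2))
      = (∑ j ∈ Finset.range (m + 2), a j * a (j + l + 1))
        + (∑ j ∈ Finset.range (m + 2), a (j + 1) * a (j + l + 2))
        - (∑ j ∈ Finset.range (m + 2), a j * a (j + l + 2))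
        - (∑ j ∈ Finset.range (m + 2), a (j + 1) * a (j + l + 1)) := by
    rw [← Finset.sum_add_distrib, ← Finset.sum_sub_distrib, ← Finset.sum_sub_distrib]
    exact Finset.sum_congr rfl fun j _ => by ring
  rw [hT1, hT2, hT3, hS] at hexp
  linarith [hexp]
end

section
/- Let a be a binary sequence of length n with γ runs. Then for every k with 0 ≤ k ≤ n, C_k(a) = n + (1 − 2γ)·k − 2·Σ_{j=1}^{k−1} (k−j)·R_j(a). -/
/-- The number of runs of the sequence `a` of length `n` (with `a 0 = 0`). -/
def numRuns (a : ℕ → ℤ) (n : ℕ) : ℕ :=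
  ((Finset.Icc 1 n).filter (fun i => a i ≠ a (i - 1))).card

lemma sum_shift01 (f : ℕ → ℤ) (m : ℕ) :
    ∑ i ∈ Finset.Icc 1 (m + 1), f (i - 1) = f 0 + ∑ i ∈ Finset.Icc 1 m, f i := by
  have h1 : ∑ i ∈ Finset.Icc 1 (m + 1), f (i - 1) = ∑ i ∈ Finset.Icc 0 m, f i := by
    apply Finset.sum_nbij' (fun i => i - 1) (fun i => i + 1) <;> intros <;> simp_all
  rw [h1, show Finset.Icc 0 m = insert 0 (Finset.Icc 1 m) by ext x; simp; omega,
    Finset.sum_insert (by simp)]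

lemma c0 (n : ℕ) (a : ℕ → ℤ)
    (hbin : ∀ i, 1 ≤ i → i ≤ n → a i = 1 ∨ a i = -1) :
    aperCorr a n 0 = n := by
  have h : ∀ i ∈ Finset.Icc 1 n, a i * a (i + 0) = 1 := by
    intro i hi
    simp only [Finset.mem_Icc] at hi
    rcases hbin i hi.1 hi.2 with h | h <;> simp [h]
  rw [aperCorr, Nat.sub_zero, Finset.sum_congr rfl h, Finset.sum_const, Nat.card_Icc]
  simp

lemma runs_sum (n : ℕ) (a : ℕ → ℤ) :
    (numRuns a n : ℤ) = ∑ i ∈ Finset.Icc 1 n, (if a i ≠ a (i - 1) then 1 else 0) := by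
  rw [numRuns, Finset.card_filter]
  push_cast
  simp [apply_ite]

lemma c1 (n : ℕ) (hn : 1 ≤ n) (a : ℕ → ℤ)
    (hbin : ∀ i, 1 ≤ i → i ≤ n → a i = 1 ∨ a i = -1)
    (h0 : a 0 = 0) :
    aperCorr a n 1 = (n : ℤ) + 1 - 2 * (numRuns a n : ℤ) := by
  have key : ∑ i ∈ Finset.Icc 1 n, a (i - 1) * a i
      = (∑ i ∈ Finset.Icc 1 n, (if i = 1 then (1:ℤ) else 0))
        + (∑ i ∈ Finset.Icc 1 n, (1:ℤ))
        - 2 * ∑ i ∈ Finset.Icc 1 n, (if a i ≠ a (i - 1) then (1:ℤ) else 0) := by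
    rw [Finset.mul_sum, ← Finset.sum_add_distrib, ← Finset.sum_sub_distrib]
    apply Finset.sum_congr rfl
    intro i hi
    simp only [Finset.mem_Icc] at hi
    rcases hbin i hi.1 hi.2 with hy | hy
    · rcases Nat.eq_or_lt_of_le hi.1 with h1 | h1
      · subst h1; simp [h0, hy]
      · rcases hbin (i - 1) (by omega) (by omega) with hx | hx <;>
          simp [hx, hy, show ¬ i = 1 by omega]
    · rcases Nat.eq_or_lt_of_le hi.1 with h1 | h1
      · subst h1; simp [h0, hy]
      · rcases hbin (i - 1) (by omega) (by omega) with hx | hx <;>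
          simp [hx, hy, show ¬ i = 1 by omega]
  have shift : ∑ i ∈ Finset.Icc 1 n, a (i - 1) * a i = aperCorr a n 1 := by
    obtain ⟨m, rfl⟩ : ∃ m, n = m + 1 := ⟨n - 1, by omega⟩
    have e : ∀ i ∈ Finset.Icc 1 (m + 1), a (i - 1) * a i
        = (fun j => a j * a (j + 1)) (i - 1) := by
      intro i hi; simp only [Finset.mem_Icc] at hi
      show a (i - 1) * a i = a (i - 1) * a (i - 1 + 1)
      rw [show i - 1 + 1 = i by omega]
    rw [Finset.sum_congr rfl e, sum_shift01 (fun j => a j * a (j + 1)) m, aperCorr]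
    simp [h0]
  rw [← shift, key, runs_sum]
  have h1 : ∑ i ∈ Finset.Icc 1 n, (if i = 1 then (1:ℤ) else 0) = 1 := by
    rw [Finset.sum_ite_eq' (Finset.Icc 1 n) 1 (fun _ => (1:ℤ))]
    simp [hn]
  rw [h1, Finset.sum_const, Nat.card_Icc, nsmul_eq_mul]
  push_cast [show n + 1 - 1 = n by omega]
  ring

lemma key_term (x y z w : ℤ) (p q : Prop) [Decidable p] [Decidable q]
    (hpq : p ∨ q)
    (hy : y = 1 ∨ y = -1) (hz : z = 1 ∨ z = -1)
    (hx : (p ∧ (x = 1 ∨ x = -1)) ∨ (¬p ∧ x = 0))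
    (hw : (q ∧ (w = 1 ∨ w = -1)) ∨ (¬q ∧ w = 0)) :
    (y - x) * (w - z) =
      -(2 * (if x ≠ y ∧ z ≠ w then (if p ∧ q then 2 else 1) * (y * z) else 0)) := by
  rcases hx with ⟨hp, hx | hx⟩ | ⟨hp, hx⟩ <;> rcases hw with ⟨hq, hw | hw⟩ | ⟨hq, hw⟩ <;>
    rcases hy with hy | hy <;> rcases hz with hz | hz <;>
    subst hx hw hy hz <;> simp_all

lemma rec_lem (n : ℕ) (a : ℕ → ℤ)
    (hbin : ∀ i, 1 ≤ i → i ≤ n → a i = 1 ∨ a i = -1)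
    (h0 : a 0 = 0) (htop : a (n + 1) = 0)
    (m : ℕ) (hm : m + 2 ≤ n) :
    aperCorr a n (m + 2)
      = 2 * aperCorr a n (m + 1) - aperCorr a n m - 2 * runVec a n (m + 1) := by
  have hS : ∑ j ∈ Finset.Icc 1 (n - m),
      (a j - a (j - 1)) * (a (j + (m + 1)) - a (j + m)) = 2 * runVec a n (m + 1) := by
    rw [runVec, show n + 1 - (m + 1) = n - m by omega, mul_neg, Finset.mul_sum,
      ← Finset.sum_neg_distrib]
    apply Finset.sum_congr rfl
    intro j hj
    simp only [Finset.mem_Icc] at hj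
    rw [show j + (m + 1) - 1 = j + m by omega]
    apply key_term (a (j - 1)) (a j) (a (j + m)) (a (j + (m + 1)))
      (1 < j) (j + (m + 1) < n + 1)
    · omega
    · exact hbin j (by omega) (by omega)
    · exact hbin (j + m) (by omega) (by omega)
    · by_cases h : 1 < j
      · exact Or.inl ⟨h, hbin (j - 1) (by omega) (by omega)⟩
      · exact Or.inr ⟨h, by rw [show j - 1 = 0 by omega]; exact h0⟩
    · by_cases h : j + (m + 1) < n + 1
      · exact Or.inl ⟨h, hbin (j + (m + 1)) (by omega) (by omega)⟩
      · exact Or.inr ⟨h, by rw [show j + (m + 1) = n + 1 by omega]; exact htop⟩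
  have hA : ∑ j ∈ Finset.Icc 1 (n - m),
      (a j - a (j - 1)) * (a (j + (m + 1)) - a (j + m))
      = 2 * aperCorr a n (m + 1) - aperCorr a n m - aperCorr a n (m + 2) := by
    have e : ∀ j ∈ Finset.Icc 1 (n - m),
        (a j - a (j - 1)) * (a (j + (m + 1)) - a (j + m))
        = a j * a (j + (m + 1)) - a j * a (j + m)
          - ((fun i => a i * a (i + (m + 2))) (j - 1)
            - (fun i => a i * a (i + (m + 1))) (j - 1)) := by
      intro j hj
      simp only [Finset.mem_Icc] at hj
      show _ = a j * a (j + (m + 1)) - a j * a (j + m)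
          - (a (j - 1) * a (j - 1 + (m + 2)) - a (j - 1) * a (j - 1 + (m + 1)))
      rw [show j - 1 + (m + 2) = j + (m + 1) by omega, show j - 1 + (m + 1) = j + m by omega]
      ring
    rw [Finset.sum_congr rfl e, Finset.sum_sub_distrib, Finset.sum_sub_distrib,
      Finset.sum_sub_distrib]
    have t1 : ∑ j ∈ Finset.Icc 1 (n - m), a j * a (j + (m + 1)) = aperCorr a n (m + 1) := by
      rw [show n - m = (n - (m + 1)) + 1 by omega, Finset.sum_Icc_succ_top (by omega),
        show n - (m + 1) + 1 + (m + 1) = n + 1 by omega, htop, mul_zero, add_zero]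
      rfl
    have t2 : ∑ j ∈ Finset.Icc 1 (n - m), a j * a (j + m) = aperCorr a n m := rfl
    have t3 : ∑ j ∈ Finset.Icc 1 (n - m), (fun i => a i * a (i + (m + 2))) (j - 1)
        = aperCorr a n (m + 2) := by
      rw [show n - m = (n - m - 1) + 1 by omega,
        sum_shift01 (fun i => a i * a (i + (m + 2))) (n - m - 1)]
      simp only [h0, zero_mul, zero_add]
      rw [show n - m - 1 = (n - (m + 2)) + 1 by omega, Finset.sum_Icc_succ_top (by omega),
        show n - (m + 2) + 1 + (m + 2) = n + 1 by omega, htop, mul_zero, add_zero]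
      rfl
    have t4 : ∑ j ∈ Finset.Icc 1 (n - m), (fun i => a i * a (i + (m + 1))) (j - 1)
        = aperCorr a n (m + 1) := by
      rw [show n - m = (n - m - 1) + 1 by omega,
        sum_shift01 (fun i => a i * a (i + (m + 1))) (n - m - 1)]
      simp only [h0, zero_mul, zero_add]
      rw [show n - m - 1 = n - (m + 1) by omega]
      rfl
    rw [t1, t2, t3, t4]
    ring
  linarith [hS, hA]

theorem stmt_4 (n : ℕ) (hn : 1 ≤ n) (a : ℕ → ℤ)
    (hbin : ∀ i, 1 ≤ i → i ≤ n → a i = 1 ∨ a i = -1)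
    (h0 : a 0 = 0) (htop : a (n + 1) = 0)
    (k : ℕ) (hk : k ≤ n) :
    aperCorr a n k = (n : ℤ) + (1 - 2 * (numRuns a n : ℤ)) * k
      - 2 * ∑ j ∈ Finset.Icc 1 (k - 1), ((k : ℤ) - j) * runVec a n j := by
  have main : ∀ k, k ≤ n → aperCorr a n k = (n : ℤ) + (1 - 2 * (numRuns a n : ℤ)) * k
      - 2 * ∑ j ∈ Finset.Icc 1 (k - 1), ((k : ℤ) - j) * runVec a n j := by
    intro k
    induction k using Nat.strong_induction_on with
    | _ k ih =>
      intro hk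
      match k, ih with
      | 0, ih =>
        simpa using c0 n a hbin
      | 1, ih =>
        rw [c1 n hn a hbin h0]
        simp
        ring
      | (m + 2), ih =>
        have ih1 := ih (m + 1) (by omega) (by omega)
        have ih0 := ih m (by omega) (by omega)
        rw [rec_lem n a hbin h0 htop m hk, ih1, ih0]
        have hs1 : ∑ j ∈ Finset.Icc 1 (m + 1), (((m + 1 : ℕ) : ℤ) - j) * runVec a n j
            = ∑ j ∈ Finset.Icc 1 ((m + 1) - 1), (((m + 1 : ℕ) : ℤ) - j) * runVec a n j := by
          rw [show (m + 1) - 1 = m by omega, Finset.sum_Icc_succ_top (by omega)]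
          push_cast
          ring
        have hs2 : ∑ j ∈ Finset.Icc 1 (m + 1), ((m : ℤ) - j) * runVec a n j
            = ∑ j ∈ Finset.Icc 1 (m - 1), ((m : ℤ) - j) * runVec a n j - runVec a n (m + 1) := by
          cases m with
          | zero => simp
          | succ m' =>
            rw [Finset.sum_Icc_succ_top (by omega), Finset.sum_Icc_succ_top (by omega)]
            push_cast
            ring
        have hs3 : ∑ j ∈ Finset.Icc 1 ((m + 2) - 1), (((m + 2 : ℕ) : ℤ) - j) * runVec a n j
            = 2 * (∑ j ∈ Finset.Icc 1 (m + 1), (((m + 1 : ℕ) : ℤ) - j) * runVec a n j)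
              - ∑ j ∈ Finset.Icc 1 (m + 1), ((m : ℤ) - j) * runVec a n j := by
          rw [show (m + 2) - 1 = m + 1 by omega, Finset.mul_sum, ← Finset.sum_sub_distrib]
          apply Finset.sum_congr rfl
          intro j hj
          push_cast
          ring
        rw [hs3, hs1, hs2]
        push_cast
        ring
  exact main k hk
end

section
/- Let a be a binary sequence of length n with γ runs. Then for every k with 0 ≤ k ≤ n, C_k(a) = (−1)^{γ+1}·(n−k) − 2·Σ_{j=k+1}^{n−1} (j−k)·R_j(a). -/
private lemma icc_one_sum (m : ℕ) (f : ℕ → ℤ) :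
    ∑ i ∈ Finset.Icc 1 m, f i = ∑ j ∈ Finset.range m, f (j + 1) := by
  rw [← Finset.Ico_add_one_right_eq_Icc, Finset.sum_Ico_eq_sum_range]
  simp [add_comm]

private lemma term_eq (x y u v w : ℤ) (hy : y = 1 ∨ y = -1) (hu : u = 1 ∨ u = -1)
    (hcase : (x = 0 ∧ (v = 1 ∨ v = -1) ∧ w = 1) ∨
      ((x = 1 ∨ x = -1) ∧ v = 0 ∧ w = 1) ∨
      ((x = 1 ∨ x = -1) ∧ (v = 1 ∨ v = -1) ∧ w = 2)) :
    (x - y) * (u - v) = -2 * (if x ≠ y ∧ u ≠ v then w * (y * u) else 0) := by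
  rcases hcase with ⟨hx, hv, hw⟩ | ⟨hx, hv, hw⟩ | ⟨hx, hv, hw⟩ <;> subst hw <;>
    first
    | (subst hx; rcases hy with rfl | rfl <;> rcases hu with rfl | rfl <;>
        rcases hv with rfl | rfl <;> norm_num)
    | (subst hv; rcases hx with rfl | rfl <;> rcases hy with rfl | rfl <;>
        rcases hu with rfl | rfl <;> norm_num)
    | (rcases hx with rfl | rfl <;> rcases hy with rfl | rfl <;>
        rcases hu with rfl | rfl <;> rcases hv with rfl | rfl <;> norm_num)

/-- The key second-difference identity:
`C_l - 2 C_{l+1} + C_{l+2} = -2 R_{l+1}` for `l + 2 ≤ n`. -/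
private lemma keyA (n : ℕ) (a : ℕ → ℤ)
    (hbin : ∀ i, 1 ≤ i → i ≤ n → a i = 1 ∨ a i = -1)
    (h0 : a 0 = 0) (htop : a (n + 1) = 0)
    (l : ℕ) (hl : l + 2 ≤ n) :
    aperCorr a n l - 2 * aperCorr a n (l + 1) + aperCorr a n (l + 2)
      = -2 * runVec a n (l + 1) := by
  obtain ⟨q, rfl⟩ : ∃ q, n = q + l + 2 := ⟨n - l - 2, by omega⟩
  have hC0 : aperCorr a (q + l + 2) l
      = ∑ j ∈ Finset.range (q + 2), a (j + 1) * a (j + l + 1) := by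
    unfold aperCorr
    rw [show q + l + 2 - l = q + 2 by omega, icc_one_sum]
    exact Finset.sum_congr rfl fun j _ => by rw [show j + 1 + l = j + l + 1 by omega]
  have hC1 : aperCorr a (q + l + 2) (l + 1)
      = ∑ j ∈ Finset.range (q + 1), a (j + 1) * a (j + l + 2) := by
    unfold aperCorr
    rw [show q + l + 2 - (l + 1) = q + 1 by omega, icc_one_sum]
    exact Finset.sum_congr rfl fun j _ => by rw [show j + 1 + (l + 1) = j + l + 2 by omega]
  have hC2 : aperCorr a (q + l + 2) (l + 2)
      = ∑ j ∈ Finset.range q, a (j + 1) * a (j + l + 3) := by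
    unfold aperCorr
    rw [show q + l + 2 - (l + 2) = q by omega, icc_one_sum]
    exact Finset.sum_congr rfl fun j _ => by rw [show j + 1 + (l + 2) = j + l + 3 by omega]
  set G : ℕ → ℤ := fun j =>
    if a j ≠ a (j + 1) ∧ a (j + l + 1) ≠ a (j + l + 2) then
      (if 1 < j + 1 ∧ j + l + 2 < q + l + 2 + 1 then 2 else 1) * (a (j + 1) * a (j + l + 1))
    else 0 with hG
  have hR : runVec a (q + l + 2) (l + 1) = -∑ j ∈ Finset.range (q + 2), G j := by
    unfold runVec
    rw [show q + l + 2 + 1 - (l + 1) = q + 2 by omega, icc_one_sum]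
    congr 1
    refine Finset.sum_congr rfl fun j _ => ?_
    rw [show j + 1 - 1 = j by omega, show j + 1 + (l + 1) - 1 = j + l + 1 by omega,
      show j + 1 + (l + 1) = j + l + 2 by omega]
  have key : ∀ j ∈ Finset.range (q + 2),
      (a j - a (j + 1)) * (a (j + l + 1) - a (j + l + 2)) = -2 * G j := by
    intro j hj
    rw [Finset.mem_range] at hj
    have hy : a (j + 1) = 1 ∨ a (j + 1) = -1 := hbin _ (by omega) (by omega)
    have hu : a (j + l + 1) = 1 ∨ a (j + l + 1) = -1 := hbin _ (by omega) (by omega)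
    simp only [hG]
    rcases Nat.eq_zero_or_pos j with hj0 | hj0
    · subst hj0
      rw [if_neg (show ¬(1 < 0 + 1 ∧ 0 + l + 2 < q + l + 2 + 1) by omega)]
      have hv : a (0 + l + 2) = 1 ∨ a (0 + l + 2) = -1 := hbin _ (by omega) (by omega)
      exact term_eq _ _ _ _ _ hy hu (Or.inl ⟨h0, hv, rfl⟩)
    · have hx : a j = 1 ∨ a j = -1 := hbin _ (by omega) (by omega)
      by_cases hjq : j = q + 1
      · subst hjq
        have hv : a (q + 1 + l + 2) = 0 := by
          rw [show q + 1 + l + 2 = q + l + 2 + 1 by omega]; exact htop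
        rw [if_neg (show ¬(1 < q + 1 + 1 ∧ q + 1 + l + 2 < q + l + 2 + 1) by omega)]
        exact term_eq _ _ _ _ _ hy hu (Or.inr (Or.inl ⟨hx, hv, rfl⟩))
      · have hv : a (j + l + 2) = 1 ∨ a (j + l + 2) = -1 := hbin _ (by omega) (by omega)
        rw [if_pos (show 1 < j + 1 ∧ j + l + 2 < q + l + 2 + 1 by omega)]
        exact term_eq _ _ _ _ _ hy hu (Or.inr (Or.inr ⟨hx, hv, rfl⟩))
  have expand : ∑ j ∈ Finset.range (q + 2), (a j - a (j + 1)) * (a (j + l + 1) - a (j + l + 2))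
      = 2 * (∑ j ∈ Finset.range (q + 1), a (j + 1) * a (j + l + 2))
        - (∑ j ∈ Finset.range q, a (j + 1) * a (j + l + 3))
        - (∑ j ∈ Finset.range (q + 2), a (j + 1) * a (j + l + 1)) := by
    have hA1 : ∑ j ∈ Finset.range (q + 2), a j * a (j + l + 1)
        = ∑ j ∈ Finset.range (q + 1), a (j + 1) * a (j + l + 2) := by
      rw [show q + 2 = q + 1 + 1 by omega, Finset.sum_range_succ']
      simp only [h0, zero_mul, add_zero]
      exact Finset.sum_congr rfl fun j _ => by rw [show j + 1 + l + 1 = j + l + 2 by omega]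
    have hA2 : ∑ j ∈ Finset.range (q + 2), a j * a (j + l + 2)
        = ∑ j ∈ Finset.range q, a (j + 1) * a (j + l + 3) := by
      rw [show q + 2 = q + 1 + 1 by omega, Finset.sum_range_succ']
      simp only [h0, zero_mul, add_zero]
      rw [Finset.sum_range_succ]
      have : a (q + 1 + l + 2) = 0 := by
        rw [show q + 1 + l + 2 = q + l + 2 + 1 by omega]; exact htop
      rw [this, mul_zero, add_zero]
      exact Finset.sum_congr rfl fun j _ => by rw [show j + 1 + l + 2 = j + l + 3 by omega]
    have hA4 : ∑ j ∈ Finset.range (q + 2), a (j + 1) * a (j + l + 2)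
        = ∑ j ∈ Finset.range (q + 1), a (j + 1) * a (j + l + 2) := by
      rw [show q + 2 = q + 1 + 1 by omega, Finset.sum_range_succ]
      have : a (q + 1 + 1 + (l + 1)) = 0 := by
        rw [show q + 1 + 1 + (l + 1) = q + l + 2 + 1 by omega]; exact htop
      rw [show q + 1 + l + 2 = q + l + 2 + 1 by omega, htop, mul_zero, add_zero]
    calc ∑ j ∈ Finset.range (q + 2), (a j - a (j + 1)) * (a (j + l + 1) - a (j + l + 2))
        = ∑ j ∈ Finset.range (q + 2),
            (a j * a (j + l + 1) - a j * a (j + l + 2)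
              - (a (j + 1) * a (j + l + 1) - a (j + 1) * a (j + l + 2))) := by
          exact Finset.sum_congr rfl fun j _ => by ring
      _ = _ := by
          rw [Finset.sum_sub_distrib, Finset.sum_sub_distrib, Finset.sum_sub_distrib,
            hA1, hA2, hA4]
          ring
  have hsum : ∑ j ∈ Finset.range (q + 2), (a j - a (j + 1)) * (a (j + l + 1) - a (j + l + 2))
      = -2 * ∑ j ∈ Finset.range (q + 2), G j := by
    rw [Finset.mul_sum]; exact Finset.sum_congr rfl key
  rw [hC0, hC1, hC2, hR]
  rw [expand] at hsum
  linarith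

/-- `a 1 * a n = (-1) ^ (γ + 1)` where `γ` is the number of runs. -/
private lemma parity (n : ℕ) (hn : 1 ≤ n) (a : ℕ → ℤ)
    (hbin : ∀ i, 1 ≤ i → i ≤ n → a i = 1 ∨ a i = -1)
    (h0 : a 0 = 0) :
    a 1 * a n = (-1 : ℤ) ^ (numRuns a n + 1) := by
  suffices h : ∀ m, 1 ≤ m → m ≤ n →
      a 1 * a m = (-1 : ℤ) ^ ((((Finset.Icc 1 m).filter (fun i => a i ≠ a (i - 1))).card) + 1) by
    exact h n hn le_rfl
  intro m
  induction m with
  | zero => omega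
  | succ p ih =>
    intro _ hpn
    rcases Nat.eq_zero_or_pos p with hp | hp
    · subst hp
      have h1 : a 1 = 1 ∨ a 1 = -1 := hbin 1 le_rfl (by omega)
      have hfil : ((Finset.Icc 1 1).filter (fun i => a i ≠ a (i - 1))).card = 1 := by
        rw [Finset.Icc_self, Finset.filter_singleton, if_pos]
        · simp
        · show a 1 ≠ a (1 - 1)
          rcases h1 with h1 | h1 <;> simp [h1, h0]
      rw [hfil]
      rcases h1 with h1 | h1 <;> norm_num [h1]
    · have ihp := ih hp (by omega)
      have hins : Finset.Icc 1 (p + 1) = insert (p + 1) (Finset.Icc 1 p) := by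
        ext x
        simp only [Finset.mem_Icc, Finset.mem_insert]
        omega
      have hnotmem : p + 1 ∉ Finset.Icc 1 p := by simp
      have hap : a p = 1 ∨ a p = -1 := hbin p hp (by omega)
      have hap1 : a (p + 1) = 1 ∨ a (p + 1) = -1 := hbin (p + 1) (by omega) hpn
      rw [hins, Finset.filter_insert]
      by_cases hch : a (p + 1) ≠ a (p + 1 - 1)
      · rw [if_pos hch, Finset.card_insert_of_notMem
          (fun hm => hnotmem (Finset.mem_filter.mp hm).1)]
        have : a (p + 1) = -a p := by
          rw [show p + 1 - 1 = p by omega] at hch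
          rcases hap with h | h <;> rcases hap1 with h' | h' <;> simp_all
        rw [this, pow_succ, mul_comm (a 1) (-a p), neg_mul, mul_comm (a p) (a 1), ihp]
        ring
      · rw [if_neg hch]
        have : a (p + 1) = a p := by
          rw [show p + 1 - 1 = p by omega] at hch
          push_neg at hch
          exact hch
        rw [this, ihp]

theorem stmt_7 (n : ℕ) (hn : 1 ≤ n) (a : ℕ → ℤ)
    (hbin : ∀ i, 1 ≤ i → i ≤ n → a i = 1 ∨ a i = -1)
    (h0 : a 0 = 0) (htop : a (n + 1) = 0)
    (k : ℕ) (hk : k ≤ n) :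
    aperCorr a n k = (-1 : ℤ) ^ (numRuns a n + 1) * ((n : ℤ) - k)
      - 2 * ∑ j ∈ Finset.Icc (k + 1) (n - 1), ((j : ℤ) - k) * runVec a n j := by
  have hpow : a 1 * a n = (-1 : ℤ) ^ (numRuns a n + 1) := parity n hn a hbin h0
  have hCn : aperCorr a n n = 0 := by
    unfold aperCorr; rw [Nat.sub_self]; simp
  -- first differences
  have hQ : ∀ d k', k' + d = n - 1 →
      aperCorr a n k' - aperCorr a n (k' + 1)
        = (-1 : ℤ) ^ (numRuns a n + 1)
          - 2 * ∑ j ∈ Finset.Icc (k' + 1) (n - 1), runVec a n j := by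
    intro d
    induction d with
    | zero =>
      intro k' hk'
      have hke : k' = n - 1 := by omega
      subst hke
      rw [show n - 1 + 1 = n by omega, hCn]
      rw [Finset.Icc_eq_empty (show ¬n ≤ n - 1 by omega), Finset.sum_empty]
      have hC : aperCorr a n (n - 1) = a 1 * a n := by
        unfold aperCorr
        rw [show n - (n - 1) = 1 by omega, Finset.Icc_self, Finset.sum_singleton,
          show 1 + (n - 1) = n by omega]
      rw [hC, hpow]
      ring
    | succ d ihd =>
      intro k' hk'
      have hkey := keyA n a hbin h0 htop k' (by omega)
      have ih := ihd (k' + 1) (by omega)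
      rw [show k' + 1 + 1 = k' + 2 by omega] at ih
      have hmem : k' + 1 ∈ Finset.Icc (k' + 1) (n - 1) := by
        simp only [Finset.mem_Icc]; omega
      have hsplit : ∑ j ∈ Finset.Icc (k' + 1) (n - 1), runVec a n j
          = ∑ j ∈ Finset.Icc (k' + 2) (n - 1), runVec a n j + runVec a n (k' + 1) := by
        rw [Finset.sum_eq_sum_sdiff_singleton_add hmem]
        congr 2
        ext x
        simp only [Finset.mem_sdiff, Finset.mem_Icc, Finset.mem_singleton]
        omega
      rw [hsplit]
      linarith
  have hQ' : ∀ k', k' ≤ n - 1 →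
      aperCorr a n k' - aperCorr a n (k' + 1)
        = (-1 : ℤ) ^ (numRuns a n + 1)
          - 2 * ∑ j ∈ Finset.Icc (k' + 1) (n - 1), runVec a n j :=
    fun k' hk' => hQ (n - 1 - k') k' (by omega)
  -- main statement by downward induction
  suffices hP : ∀ d k', k' + d = n →
      aperCorr a n k' = (-1 : ℤ) ^ (numRuns a n + 1) * ((n : ℤ) - k')
        - 2 * ∑ j ∈ Finset.Icc (k' + 1) (n - 1), ((j : ℤ) - k') * runVec a n j by
    exact hP (n - k) k (by omega)
  intro d
  induction d with
  | zero =>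
    intro k' hk'
    have hke : k' = n := by omega
    subst hke
    rw [hCn, Finset.Icc_eq_empty (by omega), Finset.sum_empty]
    ring
  | succ d ihd =>
    intro k' hk'
    have ih := ihd (k' + 1) (by omega)
    rw [show k' + 1 + 1 = k' + 2 by omega] at ih
    have hQk := hQ' k' (by omega)
    have hxsplit : ∑ j ∈ Finset.Icc (k' + 1) (n - 1), ((j : ℤ) - k') * runVec a n j
        = ∑ j ∈ Finset.Icc (k' + 2) (n - 1), ((j : ℤ) - (k' + 1 : ℕ)) * runVec a n j
          + ∑ j ∈ Finset.Icc (k' + 1) (n - 1), runVec a n j := by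
      have h1 : ∑ j ∈ Finset.Icc (k' + 2) (n - 1), ((j : ℤ) - (k' + 1 : ℕ)) * runVec a n j
          = ∑ j ∈ Finset.Icc (k' + 1) (n - 1), ((j : ℤ) - (k' + 1 : ℕ)) * runVec a n j := by
        apply Finset.sum_subset
        · intro x hx
          simp only [Finset.mem_Icc] at *
          omega
        · intro x hx hnx
          have hx1 : x = k' + 1 := by
            simp only [Finset.mem_Icc] at hx hnx
            omega
          subst hx1
          push_cast
          ring
      rw [h1, ← Finset.sum_add_distrib]
      refine Finset.sum_congr rfl fun j _ => ?_
      push_cast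
      ring
    rw [hxsplit]
    push_cast at ih ⊢
    linear_combination ih + hQk
end

section
/- Let a be a binary sequence of length n ≥ 2 with γ runs. Then Σ_{k=1}^{n−1} R_k(a) = −γ if γ is even, and Σ_{k=1}^{n−1} R_k(a) = 1 − γ if γ is odd. -/
open Finset

lemma stmt8_E_eval (m : ℕ) : ∑ u ∈ Icc 1 m, (-1:ℤ)^u = if Even m then 0 else -1 := by
  induction m with
  | zero => simp
  | succ m ih =>
    rw [Finset.sum_Icc_succ_top (by omega), ih]
    rcases Nat.even_or_odd m with h | h
    · simp [h, Nat.even_add_one, h.neg_one_pow]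
    · simp [h, Nat.even_add_one, Nat.not_odd_iff_even, h.neg_one_pow,
        Nat.not_even_iff_odd.mpr h]

lemma stmt8_E2_eval (m : ℕ) (hm : 1 ≤ m) :
    ∑ u ∈ Icc 2 m, (-1:ℤ)^u = (if Even m then 0 else -1) + 1 := by
  have h : Icc 1 m = insert 1 (Icc 2 m) := by ext u; simp [mem_Icc]; omega
  have h2 : (1:ℕ) ∉ Icc 2 m := by simp
  have := stmt8_E_eval m
  rw [h, Finset.sum_insert h2] at this
  linarith [this]

lemma stmt8_T_eval (G : ℕ) (hG : 2 ≤ G) :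
    ∑ r ∈ (Icc 1 G ×ˢ Icc 1 G).filter (fun r => r.1 < r.2 ∧ ¬(r.1 = 1 ∧ r.2 = G)),
      ((if 1 < r.1 ∧ r.2 < G then 2 else 1) * (-1:ℤ)^(r.1+r.2)) =
    (1 - G) + (if Even G then 1 else 0) := by
  rw [Finset.sum_filter, Finset.sum_product_right]
  have key : ∀ v ∈ Icc 1 G,
      (∑ u ∈ Icc 1 G, if ((u,v).1 < (u,v).2 ∧ ¬((u,v).1 = 1 ∧ (u,v).2 = G)) then
        ((if 1 < (u,v).1 ∧ (u,v).2 < G then 2 else 1) * (-1:ℤ)^((u,v).1+(u,v).2)) else 0)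
      = if v = G then ((-1:ℤ)^G * ((if Even (G-1) then 0 else -1) + 1))
        else (if v = 1 then 0 else -1) := by
    intro v hv
    simp only [mem_Icc] at hv
    simp only []
    rw [← Finset.sum_filter]
    by_cases hvG : v = G
    · rw [hvG] at *
      have hf : (Icc 1 G).filter (fun u => u < G ∧ ¬(u = 1 ∧ G = G)) = Icc 2 (G-1) := by
        ext u; simp [mem_Icc, mem_filter]; omega
      rw [hf]
      rw [if_pos rfl]
      have : ∀ u ∈ Icc 2 (G-1), ((if 1 < u ∧ G < G then (2:ℤ) else 1) * (-1:ℤ)^(u+G))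
          = (-1)^G * (-1)^u := by
        intro u hu; simp only [mem_Icc] at hu
        rw [if_neg (by omega), pow_add]; ring
      rw [Finset.sum_congr rfl this, ← Finset.mul_sum, stmt8_E2_eval (G-1) (by omega)]
    · rw [if_neg hvG]
      by_cases hv1 : v = 1
      · subst hv1
        have hf : (Icc 1 G).filter (fun u => u < 1 ∧ ¬(u = 1 ∧ 1 = G)) = ∅ := by
          ext u; simp [mem_Icc, mem_filter]; omega
        rw [hf, if_pos rfl, Finset.sum_empty]
      · rw [if_neg hv1]
        have hf : (Icc 1 G).filter (fun u => u < v ∧ ¬(u = 1 ∧ v = G)) = Icc 1 (v-1) := by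
          ext u; simp [mem_Icc, mem_filter]; omega
        rw [hf]
        have h1 : Icc 1 (v-1) = insert 1 (Icc 2 (v-1)) := by
          ext u; simp [mem_Icc]; omega
        rw [h1, Finset.sum_insert (by simp)]
        have : ∀ u ∈ Icc 2 (v-1), ((if 1 < u ∧ v < G then (2:ℤ) else 1) * (-1:ℤ)^(u+v))
            = (2 * (-1)^v) * (-1)^u := by
          intro u hu; simp only [mem_Icc] at hu
          rw [if_pos ⟨by omega, by omega⟩, pow_add]; ring
        rw [Finset.sum_congr rfl this, ← Finset.mul_sum, stmt8_E2_eval (v-1) (by omega)]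
        rw [if_neg (by omega : ¬(1 < 1 ∧ v < G)), one_mul]
        rcases Nat.even_or_odd v with h | h
        · have hv1' : ¬ Even (v-1) := by
            rw [Nat.not_even_iff_odd]
            exact Nat.Even.sub_odd (by omega) h (by norm_num)
          rw [if_neg hv1', pow_add, h.neg_one_pow]; ring
        · have hv1' : Even (v-1) := by
            have := Nat.Odd.sub_odd h (by norm_num : Odd 1); simpa using this
          rw [if_pos hv1', pow_add, h.neg_one_pow]; ring
  rw [Finset.sum_congr rfl key]
  have hG1 : G = (G-1) + 1 := by omega
  rw [hG1, Finset.sum_Icc_succ_top (by omega), ← hG1, if_pos rfl]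
  have h2 : ∀ v ∈ Icc 1 (G-1), (if v = G then ((-1:ℤ)^G * ((if Even (G-1) then 0 else -1) + 1))
        else (if v = 1 then 0 else -1)) = (if v = 1 then 0 else -1) := by
    intro v hv; simp only [mem_Icc] at hv
    rw [if_neg (by omega)]
  rw [Finset.sum_congr rfl h2]
  have h1 : Icc 1 (G-1) = insert 1 (Icc 2 (G-1)) := by
    ext u; simp [mem_Icc]; omega
  rw [h1, Finset.sum_insert (by simp), if_pos rfl]
  have h3 : ∀ v ∈ Icc 2 (G-1), (if v = 1 then (0:ℤ) else -1) = -1 := by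
    intro v hv; simp only [mem_Icc] at hv; rw [if_neg (by omega)]
  rw [Finset.sum_congr rfl h3, Finset.sum_const, Nat.card_Icc]
  rcases Nat.even_or_odd G with h | h
  · have hE : ¬ Even (G-1) := by
      rw [Nat.not_even_iff_odd]; exact Nat.Even.sub_odd (by omega) h (by norm_num)
    rw [if_pos h, if_neg hE, h.neg_one_pow]
    simp only [nsmul_eq_mul]
    push_cast
    omega
  · have hE : Even (G-1) := by
      have := Nat.Odd.sub_odd h (by norm_num : Odd 1); simpa using this
    rw [if_neg (Nat.not_even_iff_odd.mpr h), if_pos hE, h.neg_one_pow]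
    simp only [nsmul_eq_mul]
    push_cast
    omega

theorem stmt_8 (n : ℕ) (hn : 2 ≤ n) (a : ℕ → ℤ)
    (hbin : ∀ i, 1 ≤ i → i ≤ n → a i = 1 ∨ a i = -1)
    (h0 : a 0 = 0) (htop : a (n + 1) = 0) :
    (Even (numRuns a n) →
      ∑ k ∈ Finset.Icc 1 (n - 1), runVec a n k = -(numRuns a n : ℤ)) ∧
    (Odd (numRuns a n) →
      ∑ k ∈ Finset.Icc 1 (n - 1), runVec a n k = 1 - (numRuns a n : ℤ)) := by
  classical
  set p : ℕ → ℕ := fun i => ((Finset.Icc 1 i).filter (fun j => a (j - 1) ≠ a j)).card with hp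
  have hpdef : ∀ i, p i = ((Finset.Icc 1 i).filter (fun j => a (j - 1) ≠ a j)).card :=
    fun i => rfl
  have ha1 : a 1 = 1 ∨ a 1 = -1 := hbin 1 le_rfl (by omega)
  have han : a n = 1 ∨ a n = -1 := hbin n (by omega) le_rfl
  have hbd1 : a 0 ≠ a 1 := by rcases ha1 with h | h <;> rw [h0, h] <;> norm_num
  have hbdtop : a n ≠ a (n + 1) := by rcases han with h | h <;> rw [htop, h] <;> norm_num
  have psucc : ∀ i, p (i + 1) = if a i ≠ a (i + 1) then p i + 1 else p i := by
    intro i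
    rw [hpdef, hpdef, show Icc 1 (i+1) = insert (i+1) (Icc 1 i) by ext u; simp [mem_Icc]; omega,
      filter_insert]
    simp only [Nat.add_sub_cancel]
    split
    · rw [card_insert_of_notMem (by simp [mem_filter])]
    · rfl
  have p1 : p 1 = 1 := by
    rw [hpdef, show Icc 1 1 = {1} by rfl, filter_singleton, if_pos (by simpa using hbd1)]
    rfl
  have pmono : ∀ i j, i ≤ j → p i ≤ p j := by
    intro i j h
    exact card_le_card (filter_subset_filter _ (Icc_subset_Icc le_rfl h))
  have pstep : ∀ j, 1 ≤ j → a (j-1) ≠ a j → p j = p (j-1) + 1 := by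
    intro j hj hb
    have h1 : j - 1 + 1 = j := by omega
    have := psucc (j-1)
    rw [h1, if_pos hb] at this
    exact this
  have pstrict : ∀ i j, i < j → a (j-1) ≠ a j → p i < p j := by
    intro i j hij hb
    rw [pstep j (by omega) hb]
    have := pmono i (j-1) (by omega)
    omega
  have pinj : ∀ i j, a (i-1) ≠ a i → a (j-1) ≠ a j → p i = p j → i = j := by
    intro i j hbi hbj hpe
    rcases Nat.lt_trichotomy i j with h | h | h
    · exact absurd hpe (by have := pstrict i j h hbj; omega)
    · exact h
    · exact absurd hpe (by have := pstrict j i h hbi; omega)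
  set γ := numRuns a n with hγdef
  have pn : p n = γ := by
    rw [hpdef, hγdef, numRuns]
    congr 1
    exact filter_congr (fun x _ => by rw [ne_comm])
  have hbdtop' : a ((n+1)-1) ≠ a (n+1) := by simpa using hbdtop
  have pn1 : p (n+1) = γ + 1 := by
    rw [pstep (n+1) (by omega) hbdtop', Nat.add_sub_cancel, pn]
  have plb : ∀ i, 1 ≤ i → 1 ≤ p i := fun i hi => p1 ▸ pmono 1 i hi
  have pub : ∀ i, i ≤ n + 1 → p i ≤ γ + 1 := fun i hi => pn1 ▸ pmono i (n+1) hi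
  have hsq : a 1 * a 1 = 1 := by rcases ha1 with h | h <;> rw [h] <;> norm_num
  have sign : ∀ i, 1 ≤ i → i ≤ n → a i = (-1)^(p i + 1) * a 1 := by
    intro i hi
    induction i, hi using Nat.le_induction with
    | base => intro _; rw [p1]; norm_num
    | succ i hi ih =>
      intro hin
      have hia := ih (by omega)
      have hps := psucc i
      by_cases hb : a i ≠ a (i + 1)
      · rw [if_pos hb] at hps
        have hai := hbin i hi (by omega)
        have hai1 := hbin (i+1) (by omega) hin
        have hneg : a (i+1) = -a i := by
          rcases hai with h | h <;> rcases hai1 with h' | h'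
          · exact absurd (h.trans h'.symm) hb
          · simp [h, h']
          · simp [h, h']
          · exact absurd (h.trans h'.symm) hb
        rw [hneg, hia, hps, pow_succ]
        ring
      · push_neg at hb
        rw [if_neg (not_not_intro hb)] at hps
        rw [← hb, hps]
        exact hia
  -- product of endpoint values of a run block
  have hprod : ∀ i j, 1 ≤ i → i < j → j ≤ n+1 → a (j-1) ≠ a j →
      a i * a (j-1) = (-1:ℤ)^(p i + p j + 1) := by
    intro i j hi hij hj hbj
    have hpj := pstep j (by omega) hbj
    rw [sign i hi (by omega), sign (j-1) (by omega) (by omega)]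
    have h1 : ((-1:ℤ))^(p i + 1) * a 1 * ((-1)^(p (j-1) + 1) * a 1)
        = (-1)^((p i + 1) + (p (j-1) + 1)) * (a 1 * a 1) := by rw [pow_add]; ring
    rw [h1, hsq, mul_one]
    congr 1
    omega
  have hiff1 : ∀ i, 1 ≤ i → a (i-1) ≠ a i → (1 < i ↔ 1 < p i) := by
    intro i hi hbi
    constructor
    · intro h
      have := pstrict 1 i h hbi
      omega
    · intro h
      by_contra hc
      have : i = 1 := by omega
      rw [this, p1] at h
      omega
  have hiff2 : ∀ j, j ≤ n+1 → a (j-1) ≠ a j → (j < n+1 ↔ p j < γ+1) := by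
    intro j hj hbj
    constructor
    · intro h
      have := pstrict j (n+1) h hbdtop'
      omega
    · intro h
      by_contra hc
      have : j = n+1 := by omega
      rw [this, pn1] at h
      omega
  have hchar1 : ∀ i, a (i-1) ≠ a i → p i = 1 → i = 1 :=
    fun i hbi hpi => pinj i 1 hbi (by simpa using hbd1) (by rw [hpi, p1])
  have hcharn : ∀ j, a (j-1) ≠ a j → p j = γ+1 → j = n+1 :=
    fun j hbj hpj => pinj j (n+1) hbj hbdtop' (by rw [hpj, pn1])
  -- surjectivity of p onto Icc 1 (γ+1)
  have himg : ((Icc 1 (n+1)).filter (fun j => a (j-1) ≠ a j)).image p = Icc 1 (γ+1) := by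
    apply Finset.eq_of_subset_of_card_le
    · intro u hu
      simp only [mem_image, mem_filter, mem_Icc] at hu
      obtain ⟨i, ⟨⟨hi1, hi2⟩, _⟩, rfl⟩ := hu
      exact mem_Icc.mpr ⟨plb i hi1, pub i hi2⟩
    · rw [Finset.card_image_of_injOn, Nat.card_Icc]
      · have : p (n+1) = ((Icc 1 (n+1)).filter (fun j => a (j-1) ≠ a j)).card := hpdef (n+1)
        omega
      · intro i hi j hj hij
        simp only [coe_filter, Set.mem_setOf_eq, mem_Icc] at hi hj
        exact pinj i j hi.2 hj.2 hij
  have psurj : ∀ u, 1 ≤ u → u ≤ γ+1 →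
      ∃ i, (1 ≤ i ∧ i ≤ n+1 ∧ a (i-1) ≠ a i) ∧ p i = u := by
    intro u h1 h2
    have hu : u ∈ Icc 1 (γ+1) := mem_Icc.mpr ⟨h1, h2⟩
    rw [← himg] at hu
    simp only [mem_image, mem_filter, mem_Icc] at hu
    obtain ⟨i, ⟨⟨hi1, hi2⟩, hb⟩, hpi⟩ := hu
    exact ⟨i, ⟨hi1, hi2, hb⟩, hpi⟩
  -- Step B : reindex the double sum over run blocks as a sum over pairs
  have eB : ∑ k ∈ Finset.Icc 1 (n - 1), runVec a n k
      = -∑ q ∈ ((Icc 1 (n+1)) ×ˢ (Icc 1 (n+1))).filter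
            (fun q => q.1 < q.2 ∧ ¬(q.1 = 1 ∧ q.2 = n+1)),
          (if a (q.1 - 1) ≠ a q.1 ∧ a (q.2 - 1) ≠ a q.2 then
            (if 1 < q.1 ∧ q.2 < n + 1 then 2 else 1) * (a q.1 * a (q.2 - 1))
          else 0) := by
    simp only [runVec, ← Finset.sum_neg_distrib]
    rw [Finset.sum_sigma' (Icc 1 (n-1)) (fun k => Icc 1 (n+1-k))]
    apply Finset.sum_nbij' (i := fun x : (_ : ℕ) × ℕ => (x.2, x.2 + x.1))
      (j := fun q : ℕ × ℕ => ⟨q.2 - q.1, q.1⟩)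
    · intro x hx
      simp only [mem_sigma, mem_Icc] at hx
      simp only [mem_filter, mem_product, mem_Icc]
      omega
    · intro q hq
      simp only [mem_filter, mem_product, mem_Icc] at hq
      simp only [mem_sigma, mem_Icc]
      omega
    · rintro ⟨k, i⟩ hx
      simp only [mem_sigma, mem_Icc] at hx
      simp only [Sigma.ext_iff, heq_eq_eq, and_true, true_and]
      omega
    · rintro ⟨i, j⟩ hq
      simp only [mem_filter, mem_product, mem_Icc] at hq
      simp only [Prod.ext_iff, and_true, true_and]
      omega
    · intro x hx
      rfl
  -- Step C/D : restrict to run blocks and transport along p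
  have eD : ∑ q ∈ ((Icc 1 (n+1)) ×ˢ (Icc 1 (n+1))).filter
            (fun q => q.1 < q.2 ∧ ¬(q.1 = 1 ∧ q.2 = n+1)),
          (if a (q.1 - 1) ≠ a q.1 ∧ a (q.2 - 1) ≠ a q.2 then
            (if 1 < q.1 ∧ q.2 < n + 1 then 2 else 1) * (a q.1 * a (q.2 - 1))
          else 0)
      = ∑ r ∈ ((Icc 1 (γ+1)) ×ˢ (Icc 1 (γ+1))).filter
            (fun r => r.1 < r.2 ∧ ¬(r.1 = 1 ∧ r.2 = γ+1)),
          ((if 1 < r.1 ∧ r.2 < γ+1 then 2 else 1) * (-1:ℤ)^(r.1+r.2+1)) := by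
    rw [← Finset.sum_filter]
    apply Finset.sum_bij (i := fun q _ => (p q.1, p q.2))
    · intro q hq
      simp only [mem_filter, mem_product, mem_Icc] at hq
      obtain ⟨⟨⟨⟨h11, h12⟩, h21, h22⟩, hlt, hne⟩, hb1, hb2⟩ := hq
      simp only [mem_filter, mem_product, mem_Icc]
      refine ⟨⟨⟨plb _ h11, pub _ h12⟩, plb _ h21, pub _ h22⟩, pstrict _ _ hlt hb2, ?_⟩
      rintro ⟨e1, e2⟩
      exact hne ⟨hchar1 q.1 hb1 e1, hcharn q.2 hb2 e2⟩
    · intro q1 hq1 q2 hq2 he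
      simp only [mem_filter, mem_product, mem_Icc] at hq1 hq2
      simp only [Prod.ext_iff] at he ⊢
      exact ⟨pinj _ _ hq1.2.1 hq2.2.1 he.1, pinj _ _ hq1.2.2 hq2.2.2 he.2⟩
    · intro r hr
      simp only [mem_filter, mem_product, mem_Icc] at hr
      obtain ⟨⟨⟨hr11, hr12⟩, hr21, hr22⟩, hlt, hne⟩ := hr
      obtain ⟨i, ⟨hi1, hi2, hbi⟩, hpi⟩ := psurj r.1 hr11 hr12
      obtain ⟨j, ⟨hj1, hj2, hbj⟩, hpj⟩ := psurj r.2 hr21 hr22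
      have hij : i < j := by
        by_contra hc
        have := pmono j i (by omega)
        omega
      refine ⟨(i, j), ?_, ?_⟩
      · simp only [mem_filter, mem_product, mem_Icc]
        refine ⟨⟨⟨⟨hi1, hi2⟩, hj1, hj2⟩, hij, ?_⟩, hbi, hbj⟩
        rintro ⟨rfl, rfl⟩
        rw [p1] at hpi
        rw [pn1] at hpj
        exact hne ⟨hpi.symm ▸ rfl, hpj.symm ▸ rfl⟩
      · simp only [Prod.ext_iff]
        exact ⟨hpi, hpj⟩
    · intro q hq
      simp only [mem_filter, mem_product, mem_Icc] at hq
      obtain ⟨⟨⟨⟨h11, h12⟩, h21, h22⟩, hlt, hne⟩, hb1, hb2⟩ := hq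
      simp only []
      rw [hprod q.1 q.2 h11 hlt h22 hb2]
      congr 1
      exact if_congr (and_congr (hiff1 q.1 h11 hb1) (hiff2 q.2 h22 hb2)) rfl rfl
  have hg1 : 1 ≤ γ := by
    have h1 := plb n (by omega)
    omega
  -- evaluate
  have main : ∑ k ∈ Finset.Icc 1 (n - 1), runVec a n k
      = (1 - ((γ:ℤ)+1)) + (if Even (γ+1) then 1 else 0) := by
    rw [eB, eD]
    have hterm : ∀ r ∈ ((Icc 1 (γ+1)) ×ˢ (Icc 1 (γ+1))).filter
          (fun r => r.1 < r.2 ∧ ¬(r.1 = 1 ∧ r.2 = γ+1)),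
        ((if 1 < r.1 ∧ r.2 < γ+1 then (2:ℤ) else 1) * (-1:ℤ)^(r.1+r.2+1))
        = -((if 1 < r.1 ∧ r.2 < γ+1 then 2 else 1) * (-1:ℤ)^(r.1+r.2)) := by
      intro r _
      rw [pow_succ]
      ring
    rw [Finset.sum_congr rfl hterm, Finset.sum_neg_distrib, neg_neg,
      stmt8_T_eval (γ+1) (by omega)]
    push_cast
    ring
  constructor
  · intro hev
    rw [main, if_neg (by simp [Nat.even_add_one, hev])]
    push_cast
    ring
  · intro hodd
    rw [main, if_pos (Odd.add_one hodd)]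
    push_cast
    ring
end

section
/- Let a be a binary sequence of length n, let m > 1, and let b be the binary sequence of length n·m obtained by repeating each element of a exactly m times, i.e. b_{(i−1)m+t} = a_i for 1 ≤ i ≤ n and 1 ≤ t ≤ m. Then for all k and s with 0 ≤ k < n and 0 ≤ s < m, C_{km+s}(b) = (m−s)·C_k(a) + s·C_{k+1}(a), where C_n(a) := 0. -/
private lemma sum_range_mul_aux (f : ℕ → ℤ) (M : ℕ) :
    ∀ N, ∑ j ∈ Finset.range (N * M), f j
      = ∑ i ∈ Finset.range N, ∑ t ∈ Finset.range M, f (i * M + t)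
  | 0 => by simp
  | (N + 1) => by
    rw [Nat.succ_mul, Finset.sum_range_add, sum_range_mul_aux f M N,
      Finset.sum_range_succ]

private lemma icc_sum_eq (f : ℕ → ℤ) :
    ∀ L, ∑ i ∈ Finset.Icc 1 L, f i = ∑ i ∈ Finset.range L, f (i + 1)
  | 0 => by simp
  | (L + 1) => by
    rw [Finset.sum_Icc_succ_top (by omega), icc_sum_eq f L, Finset.sum_range_succ]

theorem stmt_9 (n m : ℕ) (hm : 1 < m) (a b : ℕ → ℤ)
    (hbin : ∀ i, 1 ≤ i → i ≤ n → a i = 1 ∨ a i = -1)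
    (hb : ∀ i t, 1 ≤ i → i ≤ n → 1 ≤ t → t ≤ m → b ((i - 1) * m + t) = a i)
    (k s : ℕ) (hk : k < n) (hs : s < m) :
    aperCorr b (n * m) (k * m + s)
      = ((m : ℤ) - s) * aperCorr a n k + (s : ℤ) * aperCorr a n (k + 1) := by
  obtain ⟨N, rfl⟩ : ∃ N, n = k + N + 1 := ⟨n - k - 1, by omega⟩
  obtain ⟨d, rfl⟩ : ∃ d, m = s + d + 1 := ⟨m - s - 1, by omega⟩
  clear hk hs hm hbin
  have hb' : ∀ i t, i ≤ k + N → 1 ≤ t → t ≤ s + d + 1 →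
      b (i * (s + d + 1) + t) = a (i + 1) := by
    intro i t hi h1 h2
    have := hb (i + 1) t (by omega) (by omega) h1 h2
    simpa using this
  unfold aperCorr
  have e1 : (k + N + 1) * (s + d + 1) - (k * (s + d + 1) + s)
      = N * (s + d + 1) + (d + 1) := by
    have h : (k + N + 1) * (s + d + 1)
        = (k * (s + d + 1) + s) + (N * (s + d + 1) + (d + 1)) := by ring
    rw [h, Nat.add_sub_cancel_left]
  have e2 : k + N + 1 - k = N + 1 := by omega
  have e3 : k + N + 1 - (k + 1) = N := by omega
  rw [e1, e2, e3, icc_sum_eq, icc_sum_eq, icc_sum_eq, Finset.sum_range_add,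
    sum_range_mul_aux]
  -- tail sum
  have tailEq : ∑ t ∈ Finset.range (d + 1),
      b (N * (s + d + 1) + t + 1) * b (N * (s + d + 1) + t + 1 + (k * (s + d + 1) + s))
      = ((d : ℤ) + 1) * (a (N + 1) * a (N + 1 + k)) := by
    have pT : ∀ t ∈ Finset.range (d + 1),
        b (N * (s + d + 1) + t + 1) * b (N * (s + d + 1) + t + 1 + (k * (s + d + 1) + s))
        = a (N + 1) * a (N + 1 + k) := by
      intro t ht
      simp only [Finset.mem_range] at ht
      rw [show N * (s + d + 1) + t + 1 = N * (s + d + 1) + (t + 1) by ring,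
        show N * (s + d + 1) + (t + 1) + (k * (s + d + 1) + s)
          = (N + k) * (s + d + 1) + (t + s + 1) by ring,
        hb' N (t + 1) (by omega) (by omega) (by omega),
        hb' (N + k) (t + s + 1) (by omega) (by omega) (by omega),
        show N + k + 1 = N + 1 + k by ring]
    rw [Finset.sum_congr rfl pT, Finset.sum_const, Finset.card_range]
    simp [nsmul_eq_mul]
  rw [tailEq]
  -- main sum
  have mainEq : ∀ i ∈ Finset.range N, ∑ t ∈ Finset.range (s + d + 1),
      b (i * (s + d + 1) + t + 1) * b (i * (s + d + 1) + t + 1 + (k * (s + d + 1) + s))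
      = ((d : ℤ) + 1) * (a (i + 1) * a (i + 1 + k)) + (s : ℤ) * (a (i + 1) * a (i + 1 + (k + 1))) := by
    intro i hi
    simp only [Finset.mem_range] at hi
    rw [show Finset.range (s + d + 1) = Finset.range ((d + 1) + s) by congr 1; omega,
      Finset.sum_range_add]
    have p1 : ∀ t ∈ Finset.range (d + 1),
        b (i * (s + d + 1) + t + 1) * b (i * (s + d + 1) + t + 1 + (k * (s + d + 1) + s))
        = a (i + 1) * a (i + 1 + k) := by
      intro t ht
      simp only [Finset.mem_range] at ht
      rw [show i * (s + d + 1) + t + 1 = i * (s + d + 1) + (t + 1) by ring,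
        show i * (s + d + 1) + (t + 1) + (k * (s + d + 1) + s)
          = (i + k) * (s + d + 1) + (t + s + 1) by ring,
        hb' i (t + 1) (by omega) (by omega) (by omega),
        hb' (i + k) (t + s + 1) (by omega) (by omega) (by omega),
        show i + k + 1 = i + 1 + k by ring]
    have p2 : ∀ u ∈ Finset.range s,
        b (i * (s + d + 1) + (d + 1 + u) + 1)
          * b (i * (s + d + 1) + (d + 1 + u) + 1 + (k * (s + d + 1) + s))
        = a (i + 1) * a (i + 1 + (k + 1)) := by
      intro u hu
      simp only [Finset.mem_range] at hu
      rw [show i * (s + d + 1) + (d + 1 + u) + 1 = i * (s + d + 1) + (d + u + 2) by ring,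
        show i * (s + d + 1) + (d + u + 2) + (k * (s + d + 1) + s)
          = (i + k + 1) * (s + d + 1) + (u + 1) by ring,
        hb' i (d + u + 2) (by omega) (by omega) (by omega),
        hb' (i + k + 1) (u + 1) (by omega) (by omega) (by omega),
        show i + k + 1 + 1 = i + 1 + (k + 1) by ring]
    rw [Finset.sum_congr rfl p1, Finset.sum_congr rfl p2, Finset.sum_const,
      Finset.sum_const, Finset.card_range, Finset.card_range]
    simp [nsmul_eq_mul]
  rw [Finset.sum_congr rfl mainEq, Finset.sum_range_succ, Finset.sum_add_distrib,
    ← Finset.mul_sum, ← Finset.mul_sum]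
  push_cast
  ring
end

section
/- Let a be a binary sequence of length n with γ runs and run length encoding r = (r_1,…,r_γ). Then for every k with 1 ≤ k ≤ n−1, R_k(a) = f_S(k) + (−1)^γ·f_S(n−k) + 2·Σ_{j=1}^{γ−1} (−1)^j·f_S(s_j − k). -/
/-- Localization of a sum at the (injectively enumerated) points where it can be nonzero. -/
private lemma sum_loc (m γ : ℕ) (I : ℕ → ℕ) (F : ℕ → ℤ)
    (hinj : ∀ j ∈ Finset.Icc 1 γ, ∀ j' ∈ Finset.Icc 1 γ, I j = I j' → j = j')
    (hloc : ∀ i ∈ Finset.Icc 1 m, F i ≠ 0 → ∃ j ∈ Finset.Icc 1 γ, I j = i) :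
    ∑ i ∈ Finset.Icc 1 m, F i
      = ∑ j ∈ Finset.Icc 1 γ, if I j ∈ Finset.Icc 1 m then F (I j) else 0 := by
  have h1 : ∀ i ∈ Finset.Icc 1 m, F i = ∑ j ∈ Finset.Icc 1 γ, if I j = i then F i else 0 := by
    intro i hi
    by_cases h : F i = 0
    · simp [h]
    · obtain ⟨j, hj, hji⟩ := hloc i hi h
      rw [Finset.sum_eq_single j]
      · simp [hji]
      · intro j' hj' hne
        have : I j' ≠ i := fun hc => hne (hinj j' hj' j hj (hc.trans hji.symm))
        simp [this]
      · intro hc; exact absurd hj hc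
  rw [Finset.sum_congr rfl h1, Finset.sum_comm]
  refine Finset.sum_congr rfl fun j hj => ?_
  rw [← Finset.sum_filter]
  by_cases h : I j ∈ Finset.Icc 1 m
  · rw [if_pos h, Finset.filter_eq, if_pos h, Finset.sum_singleton]
  · rw [if_neg h, Finset.filter_eq, if_neg h, Finset.sum_empty]

/-- Localization over a singleton-valued sum: `∑ j, if x = g j then c j else 0`. -/
private lemma sum_loc_eval (γ : ℕ) (g : ℕ → ℕ) (c : ℕ → ℤ) (x : ℤ) (v : ℤ)
    (hinj : ∀ j ∈ Finset.Icc 1 γ, ∀ j' ∈ Finset.Icc 1 γ, g j = g j' → j = j')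
    (h1 : ∀ j ∈ Finset.Icc 1 γ, x = (g j : ℤ) → v = c j)
    (h0 : (∀ j ∈ Finset.Icc 1 γ, x ≠ (g j : ℤ)) → v = 0) :
    v = ∑ j ∈ Finset.Icc 1 γ, if x = (g j : ℤ) then c j else 0 := by
  by_cases h : ∃ j ∈ Finset.Icc 1 γ, x = (g j : ℤ)
  · obtain ⟨j, hj, hx⟩ := h
    rw [Finset.sum_eq_single j]
    · rw [if_pos hx]; exact h1 j hj hx
    · intro j' hj' hne
      have : x ≠ (g j' : ℤ) := by
        intro hc
        exact hne (hinj j' hj' j hj (by exact_mod_cast hc.symm.trans hx))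
      simp [this]
    · intro hc; exact absurd hj hc
  · push_neg at h
    rw [Finset.sum_congr rfl (fun j hj => if_neg (h j hj)), Finset.sum_const_zero]
    exact h0 h


private lemma sum_shift (γ : ℕ) (hγ : 1 ≤ γ) (f : ℕ → ℤ) :
    ∑ j ∈ Finset.Icc 2 γ, f j = ∑ j0 ∈ Finset.Icc 1 (γ-1), f (j0+1) := by
  have h : Finset.Icc 2 γ = Finset.map (addRightEmbedding 1) (Finset.Icc 1 (γ-1)) := by
    rw [Finset.map_add_right_Icc]
    congr 1
    omega
  rw [h, Finset.sum_map]
  rfl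

theorem stmt_11 (n γ : ℕ) (hn : 1 ≤ n) (a : ℕ → ℤ)
    (hbin : ∀ i, 1 ≤ i → i ≤ n → a i = 1 ∨ a i = -1)
    (h0 : a 0 = 0) (htop : a (n + 1) = 0)
    -- `I j` (for `1 ≤ j ≤ γ+1`) are the starting positions of the runs of `a`:
    (I : ℕ → ℕ) (hI1 : I 1 = 1) (hIlast : I (γ + 1) = n + 1)
    (hImono : ∀ j, 1 ≤ j → j ≤ γ → I j < I (j + 1))
    (hchange : ∀ j, 2 ≤ j → j ≤ γ → a (I j - 1) ≠ a (I j))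
    (hconst : ∀ j, 1 ≤ j → j ≤ γ → ∀ p, I j ≤ p → p < I (j + 1) → a p = a (I j))
    -- the run length encoding `r` and the partial sums `s`:
    (r : ℕ → ℕ) (hr : ∀ j, 1 ≤ j → j ≤ γ → r j = I (j + 1) - I j)
    (s : ℕ → ℕ) (hs : ∀ j, 1 ≤ j → j ≤ γ → s j = ∑ t ∈ Finset.Icc 1 j, r t)
    -- the function `f_S`:
    (fS : ℤ → ℤ)
    (hfS1 : ∀ j, 1 ≤ j → j ≤ γ - 1 → fS ((s j : ℤ)) = (-1) ^ j)
    (hfS0 : ∀ x : ℤ, (∀ j, 1 ≤ j → j ≤ γ - 1 → x ≠ (s j : ℤ)) → fS x = 0)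
    (k : ℕ) (hk1 : 1 ≤ k) (hk2 : k ≤ n - 1) :
    runVec a n k = fS (k : ℤ) + (-1) ^ γ * fS ((n : ℤ) - (k : ℤ))
      + 2 * ∑ j ∈ Finset.Icc 1 (γ - 1), (-1 : ℤ) ^ j * fS ((s j : ℤ) - (k : ℤ)) := by
  -- basic facts
  have hγ : 1 ≤ γ := by
    by_contra h
    interval_cases γ
    · rw [hI1] at hIlast; omega
  have hkn : k ≤ n - 1 := hk2
  -- strict monotonicity of I
  have hIlt : ∀ j j', 1 ≤ j → j < j' → j' ≤ γ + 1 → I j < I j' := by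
    intro j j' hj hlt hle
    induction j' with
    | zero => omega
    | succ m ih =>
      rcases Nat.lt_succ_iff_lt_or_eq.mp hlt with h | h
      · exact lt_trans (ih h (by omega)) (hImono m (by omega) (by omega))
      · subst h; exact hImono j hj (by omega)
  have hIinj : ∀ j j', 1 ≤ j → j ≤ γ + 1 → 1 ≤ j' → j' ≤ γ + 1 → I j = I j' → j = j' := by
    intro j j' h1 h2 h3 h4 he
    rcases lt_trichotomy j j' with h | h | h
    · exact absurd he (Nat.ne_of_lt (hIlt j j' h1 h h4))
    · exact h
    · exact absurd he.symm (Nat.ne_of_lt (hIlt j' j h3 h h2))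
  have hIge1 : ∀ j, 1 ≤ j → j ≤ γ + 1 → 1 ≤ I j := by
    intro j h1 h2
    rcases Nat.eq_or_lt_of_le h1 with h | h
    · rw [← h, hI1]
    · have := hIlt 1 j (le_refl 1) h h2; omega
  have hIlen : ∀ j, 1 ≤ j → j ≤ γ + 1 → I j ≤ n + 1 := by
    intro j h1 h2
    rcases Nat.eq_or_lt_of_le h2 with h | h
    · rw [h, hIlast]
    · have := hIlt j (γ + 1) h1 (by omega) (le_refl _); omega
  -- partial sums: s j + 1 = I (j+1)
  have hsI : ∀ j, 1 ≤ j → j ≤ γ → s j + 1 = I (j + 1) := by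
    intro j h1
    induction j, h1 using Nat.le_induction with
    | base =>
      intro h2
      rw [hs 1 le_rfl h2, show Finset.Icc 1 1 = {1} from Finset.Icc_self 1,
        Finset.sum_singleton, hr 1 le_rfl h2]
      have := hImono 1 le_rfl h2
      rw [hI1] at this ⊢
      omega
    | succ m hm ih =>
      intro h2
      have hmγ : m ≤ γ := by omega
      have ihm := ih hmγ
      have hstep : s (m + 1) = s m + r (m + 1) := by
        rw [hs (m+1) (by omega) h2, hs m hm hmγ, Finset.sum_Icc_succ_top (by omega : 1 ≤ m + 1)]
      rw [hstep, hr (m+1) (by omega) h2]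
      have := hImono (m+1) (by omega) h2
      omega
  have hsinj : ∀ j ∈ Finset.Icc 1 γ, ∀ j' ∈ Finset.Icc 1 γ, s j = s j' → j = j' := by
    intro j hj j' hj' he
    simp only [Finset.mem_Icc] at hj hj'
    have h1 := hsI j hj.1 hj.2
    have h2 := hsI j' hj'.1 hj'.2
    have : I (j + 1) = I (j' + 1) := by omega
    have := hIinj (j+1) (j'+1) (by omega) (by omega) (by omega) (by omega) this
    omega
  -- ±1 values
  have hbin' : ∀ i, 1 ≤ i → i ≤ n → a i * a i = 1 := by
    intro i h1 h2; rcases hbin i h1 h2 with h | h <;> rw [h] <;> ring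
  -- signs of runs
  have hIn : ∀ j, 1 ≤ j → j ≤ γ → I j ≤ n := by
    intro j h1 h2
    have := hIlt j (γ + 1) h1 (by omega) le_rfl; omega
  have hlastrun : ∀ j, 1 ≤ j → j ≤ γ → a (I (j + 1) - 1) = a (I j) := by
    intro j h1 h2
    have := hImono j h1 h2
    exact hconst j h1 h2 (I (j+1) - 1) (by omega) (by omega)
  have hsign : ∀ j, 1 ≤ j → j ≤ γ → a (I j) = a 1 * (-1) ^ (j - 1) := by
    intro j h1
    induction j, h1 using Nat.le_induction with
    | base => intro _; simp [hI1]
    | succ m hm ih =>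
      intro h2
      have hmγ : m ≤ γ := by omega
      have ihm := ih hmγ
      have hne := hchange (m + 1) (by omega) h2
      rw [hlastrun m hm hmγ] at hne
      have hv1 := hbin (I m) (hIge1 m hm (by omega)) (hIn m hm hmγ)
      have hv2 := hbin (I (m+1)) (hIge1 (m+1) (by omega) (by omega)) (hIn (m+1) (by omega) h2)
      have hflip : a (I (m + 1)) = -a (I m) := by
        rcases hv1 with h | h <;> rcases hv2 with h' | h' <;> rw [h, h'] at hne ⊢ <;> omega
      have hm1 : m - 1 + 1 = m := by omega
      rw [hflip, ihm, Nat.add_sub_cancel]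
      have hpow : (-1:ℤ) ^ m = -(-1) ^ (m - 1) := by
        conv_lhs => rw [← hm1]
        rw [pow_succ]; ring
      rw [hpow]; ring
  -- run start characterization
  have hrunstart : ∀ i, 1 ≤ i → i ≤ n → a (i - 1) ≠ a i → ∃ j, 1 ≤ j ∧ j ≤ γ ∧ I j = i := by
    intro i h1 h2 hne
    -- find the run containing i
    have hrun : ∃ j, 1 ≤ j ∧ j ≤ γ ∧ I j ≤ i ∧ i < I (j + 1) := by
      set T := (Finset.Icc 1 γ).filter (fun j => I j ≤ i) with hT
      have hne' : T.Nonempty := ⟨1, by simp [hT, hγ, hI1, h1]⟩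
      set j := T.max' hne' with hj
      have hjT' : j ∈ T := T.max'_mem hne'
      simp only [hT, Finset.mem_filter, Finset.mem_Icc] at hjT'
      refine ⟨j, hjT'.1.1, hjT'.1.2, hjT'.2, ?_⟩
      by_contra hc
      push_neg at hc
      rcases Nat.eq_or_lt_of_le hjT'.1.2 with h | h
      · rw [h, hIlast] at hc; omega
      · have : j + 1 ∈ T := by
          simp only [hT, Finset.mem_filter, Finset.mem_Icc]
          exact ⟨⟨by omega, by omega⟩, hc⟩
        have := Finset.le_max' T (j + 1) this
        omega
    obtain ⟨j, hj1, hj2, hle, hlt⟩ := hrun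
    refine ⟨j, hj1, hj2, ?_⟩
    rcases Nat.eq_or_lt_of_le hle with h | h
    · exact h
    · exfalso
      have e1 : a i = a (I j) := hconst j hj1 hj2 i hle hlt
      have e2 : a (i - 1) = a (I j) := hconst j hj1 hj2 (i - 1) (by omega) (by omega)
      rw [e1, e2] at hne
      exact hne rfl
  have hstart : ∀ j, 1 ≤ j → j ≤ γ → a (I j - 1) ≠ a (I j) := by
    intro j h1 h2
    rcases Nat.eq_or_lt_of_le h1 with h | h
    · rw [← h, hI1]
      simp only [Nat.sub_self]
      rw [h0]
      rcases hbin 1 le_rfl hn with h' | h' <;> rw [h'] <;> norm_num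
    · exact hchange j h h2
  have ha1 : a 1 * a 1 = 1 := hbin' 1 le_rfl hn
  have hstart' : ∀ j', 1 ≤ j' → j' ≤ γ → a (I (j' + 1) - 1) ≠ a (I (j' + 1)) := by
    intro j' h1 h2
    rcases Nat.eq_or_lt_of_le h2 with h | h
    · rw [h, hIlast, Nat.add_sub_cancel, htop]
      rcases hbin n hn le_rfl with h' | h' <;> rw [h'] <;> norm_num
    · exact hchange (j' + 1) (by omega) (by omega)
  have hIlt1 : ∀ j, 2 ≤ j → j ≤ γ + 1 → 1 < I j := by
    intro j h1 h2
    have := hIlt 1 j le_rfl (by omega) h2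
    omega
  have hsγ : s γ + 1 = n + 1 := by rw [hsI γ hγ le_rfl, hIlast]
  -- Step 1: localize the run-vector sum at run starts
  have hinj' : ∀ j ∈ Finset.Icc 1 γ, ∀ j' ∈ Finset.Icc 1 γ, I j = I j' → j = j' := by
    intro j hj j' hj' he
    simp only [Finset.mem_Icc] at hj hj'
    exact hIinj j j' hj.1 (by omega) hj'.1 (by omega) he
  have step1 : runVec a n k = -∑ j ∈ Finset.Icc 1 γ,
      (if I j ∈ Finset.Icc 1 (n + 1 - k) then
        (if a (I j - 1) ≠ a (I j) ∧ a (I j + k - 1) ≠ a (I j + k) then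
          (if 1 < I j ∧ I j + k < n + 1 then 2 else 1) * (a (I j) * a (I j + k - 1))
        else 0) else 0) := by
    simp only [runVec]
    congr 1
    apply sum_loc
    · exact hinj'
    · intro i hi hne0
      simp only [Finset.mem_Icc] at hi
      by_cases hA : a (i - 1) ≠ a i
      · obtain ⟨j, hj1, hj2, hj3⟩ := hrunstart i hi.1 (by omega) hA
        exact ⟨j, Finset.mem_Icc.mpr ⟨hj1, hj2⟩, hj3⟩
      · exfalso
        apply hne0
        rw [if_neg]
        tauto
  -- Step 2: rewrite each run-start term as a sum over the right endpoint
  have step2 : ∀ j ∈ Finset.Icc 1 γ,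
      (if I j ∈ Finset.Icc 1 (n + 1 - k) then
        (if a (I j - 1) ≠ a (I j) ∧ a (I j + k - 1) ≠ a (I j + k) then
          (if 1 < I j ∧ I j + k < n + 1 then 2 else 1) * (a (I j) * a (I j + k - 1))
        else 0) else 0)
      = ∑ j' ∈ Finset.Icc 1 γ,
          (if ((I j + k : ℕ) : ℤ) = ((I (j' + 1) : ℕ) : ℤ) then
            (if 2 ≤ j ∧ j' + 1 ≤ γ then 2 else 1) * (-(-1 : ℤ) ^ (j + j' + 1)) else 0) := by
    intro j hj
    simp only [Finset.mem_Icc] at hj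
    apply sum_loc_eval γ (fun j' => I (j' + 1))
    · intro j1 hj1 j2 hj2 he
      simp only [Finset.mem_Icc] at hj1 hj2
      have := hIinj (j1 + 1) (j2 + 1) (by omega) (by omega) (by omega) (by omega) he
      omega
    · intro j' hj' hx
      simp only [Finset.mem_Icc] at hj'
      have heq : I j + k = I (j' + 1) := by exact_mod_cast hx
      have hjm : I j ∈ Finset.Icc 1 (n + 1 - k) := by
        have := hIlen (j' + 1) (by omega) (by omega)
        have := hIge1 j hj.1 (by omega)
        simp only [Finset.mem_Icc]
        omega
      rw [if_pos hjm,
        if_pos ⟨hstart j hj.1 hj.2, by rw [heq]; exact hstart' j' hj'.1 hj'.2⟩]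
      have hcond : (1 < I j ∧ I j + k < n + 1) ↔ (2 ≤ j ∧ j' + 1 ≤ γ) := by
        constructor
        · rintro ⟨h1', h2'⟩
          constructor
          · by_contra h
            have : j = 1 := by omega
            rw [this, hI1] at h1'; omega
          · by_contra h
            have : j' = γ := by omega
            rw [this, hIlast] at heq; omega
        · rintro ⟨h1', h2'⟩
          refine ⟨hIlt1 j h1' (by omega), ?_⟩
          have := hIlt (j' + 1) (γ + 1) (by omega) (by omega) le_rfl
          rw [hIlast] at this; omega
      rw [if_congr hcond rfl rfl]
      congr 1
      have e1 : a (I j + k - 1) = a (I j') := by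
        rw [heq]; exact hlastrun j' hj'.1 hj'.2
      rw [e1, hsign j hj.1 hj.2, hsign j' hj'.1 hj'.2]
      have hexp : -(-1 : ℤ) ^ (j + j' + 1) = (-1) ^ (j - 1) * (-1) ^ (j' - 1) := by
        rw [← pow_add, show j + j' + 1 = (j - 1 + (j' - 1)) + 3 from by omega, pow_add]
        norm_num
      rw [hexp]
      linear_combination ((-1 : ℤ) ^ (j - 1) * (-1) ^ (j' - 1)) * ha1
    · intro hall
      by_cases hjm : I j ∈ Finset.Icc 1 (n + 1 - k)
      · rw [if_pos hjm]
        by_cases hcond : a (I j - 1) ≠ a (I j) ∧ a (I j + k - 1) ≠ a (I j + k)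
        · exfalso
          simp only [Finset.mem_Icc] at hjm
          rcases Nat.lt_or_ge (I j + k) (n + 1) with hlt | hge
          · obtain ⟨j0, h01, h02, h03⟩ := hrunstart (I j + k) (by omega) (by omega) hcond.2
            have h04 : 2 ≤ j0 := by
              by_contra h
              have : j0 = 1 := by omega
              rw [this, hI1] at h03
              have := hIge1 j hj.1 (by omega)
              omega
            refine hall (j0 - 1) (Finset.mem_Icc.mpr ⟨by omega, by omega⟩) ?_
            rw [show j0 - 1 + 1 = j0 from by omega, h03]
          · have he : I j + k = n + 1 := by omega
            refine hall γ (Finset.mem_Icc.mpr ⟨hγ, le_rfl⟩) ?_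
            rw [he, hIlast]
        · rw [if_neg hcond]
      · rw [if_neg hjm]
  -- Step 3: combined double-sum form
  have step3 : runVec a n k = ∑ j ∈ Finset.Icc 1 γ, ∑ j' ∈ Finset.Icc 1 γ,
      (if ((I j + k : ℕ) : ℤ) = ((I (j' + 1) : ℕ) : ℤ) then
        (if 2 ≤ j ∧ j' + 1 ≤ γ then 2 else 1) * ((-1 : ℤ) ^ (j + j' + 1)) else 0) := by
    rw [step1, Finset.sum_congr rfl step2, ← Finset.sum_neg_distrib]
    refine Finset.sum_congr rfl fun j hj => ?_
    rw [← Finset.sum_neg_distrib]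
    refine Finset.sum_congr rfl fun j' hj' => ?_
    split <;> ring
  -- splitting lemmas
  have hsplit1 : Finset.Icc 1 γ = insert 1 (Finset.Icc 2 γ) := by
    ext x; simp only [Finset.mem_Icc, Finset.mem_insert]; omega
  have h1notin : (1 : ℕ) ∉ Finset.Icc 2 γ := by simp
  have hsplit2 : Finset.Icc 1 γ = insert γ (Finset.Icc 1 (γ - 1)) := by
    ext x; simp only [Finset.mem_Icc, Finset.mem_insert]; omega
  have hγnotin : γ ∉ Finset.Icc 1 (γ - 1) := by
    simp only [Finset.mem_Icc]; omega
  -- expansion of fS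
  have hsinj' : ∀ j ∈ Finset.Icc 1 (γ - 1), ∀ j' ∈ Finset.Icc 1 (γ - 1), s j = s j' → j = j' := by
    intro j hj j' hj' he
    simp only [Finset.mem_Icc] at hj hj'
    exact hsinj j (Finset.mem_Icc.mpr ⟨hj.1, by omega⟩)
      j' (Finset.mem_Icc.mpr ⟨hj'.1, by omega⟩) he
  have hfSexp : ∀ x : ℤ,
      fS x = ∑ j0 ∈ Finset.Icc 1 (γ - 1), (if x = (s j0 : ℤ) then (-1 : ℤ) ^ j0 else 0) := by
    intro x
    apply sum_loc_eval (γ - 1) s (fun j0 => (-1 : ℤ) ^ j0) x (fS x) hsinj'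
    · intro j0 hj0 hx
      simp only [Finset.mem_Icc] at hj0
      rw [hx]; exact hfS1 j0 hj0.1 hj0.2
    · intro h
      apply hfS0
      intro j0 h1 h2
      exact h j0 (Finset.mem_Icc.mpr ⟨h1, h2⟩)
  -- evaluate each row: split off the `j' = γ` term
  have hrow : ∀ j ∈ Finset.Icc 1 γ,
      (∑ j' ∈ Finset.Icc 1 γ,
        (if ((I j + k : ℕ) : ℤ) = ((I (j' + 1) : ℕ) : ℤ) then
          (if 2 ≤ j ∧ j' + 1 ≤ γ then 2 else 1) * ((-1 : ℤ) ^ (j + j' + 1)) else 0))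
      = (if ((I j + k : ℕ) : ℤ) = ((I (γ + 1) : ℕ) : ℤ) then (-1 : ℤ) ^ (j + γ + 1) else 0)
        + ∑ j' ∈ Finset.Icc 1 (γ - 1),
          (if ((I j + k : ℕ) : ℤ) = ((I (j' + 1) : ℕ) : ℤ) then
            (if 2 ≤ j then 2 else 1) * ((-1 : ℤ) ^ (j + j' + 1)) else 0) := by
    intro j hj
    simp only [Finset.mem_Icc] at hj
    conv_lhs => rw [hsplit2]
    rw [Finset.sum_insert hγnotin]
    congr 1
    · rw [if_neg (by omega : ¬(2 ≤ j ∧ γ + 1 ≤ γ)), one_mul]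
    · refine Finset.sum_congr rfl fun j' hj' => ?_
      simp only [Finset.mem_Icc] at hj'
      have hiff : (2 ≤ j ∧ j' + 1 ≤ γ) ↔ (2 ≤ j) := by omega
      simp only [hiff]
  rw [step3, Finset.sum_congr rfl hrow, hsplit1, Finset.sum_insert h1notin,
    Finset.sum_add_distrib]
  have hA0 : (if ((I 1 + k : ℕ) : ℤ) = ((I (γ + 1) : ℕ) : ℤ) then (-1 : ℤ) ^ (1 + γ + 1)
      else 0) = 0 := by
    rw [if_neg]
    rw [hI1, hIlast]
    push_cast
    omega
  have hA : ∑ j' ∈ Finset.Icc 1 (γ - 1),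
      (if ((I 1 + k : ℕ) : ℤ) = ((I (j' + 1) : ℕ) : ℤ) then
        (if 2 ≤ 1 then 2 else 1) * ((-1 : ℤ) ^ (1 + j' + 1)) else 0) = fS (k : ℤ) := by
    rw [hfSexp (k : ℤ)]
    refine Finset.sum_congr rfl fun j' hj' => ?_
    simp only [Finset.mem_Icc] at hj'
    rw [← hsI j' hj'.1 (by omega), hI1, if_neg (by omega : ¬(2 ≤ 1)), one_mul]
    have hc : (((1 + k : ℕ) : ℤ) = ((s j' + 1 : ℕ) : ℤ)) ↔ ((k : ℤ) = (s j' : ℤ)) := by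
      push_cast; omega
    have hv : ((-1 : ℤ)) ^ (1 + j' + 1) = (-1 : ℤ) ^ j' := by
      rw [show 1 + j' + 1 = j' + 2 from by omega, pow_add]
      norm_num
    rw [if_congr hc hv rfl]
  have hB : ∑ j ∈ Finset.Icc 2 γ,
      (if ((I j + k : ℕ) : ℤ) = ((I (γ + 1) : ℕ) : ℤ) then (-1 : ℤ) ^ (j + γ + 1) else 0)
      = (-1 : ℤ) ^ γ * fS ((n : ℤ) - (k : ℤ)) := by
    rw [sum_shift γ hγ, hfSexp ((n : ℤ) - (k : ℤ)), Finset.mul_sum]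
    refine Finset.sum_congr rfl fun j0 hj0 => ?_
    simp only [Finset.mem_Icc] at hj0
    rw [← hsI j0 hj0.1 (by omega), hIlast]
    have hc : (((s j0 + 1 + k : ℕ) : ℤ) = ((n + 1 : ℕ) : ℤ))
        ↔ ((n : ℤ) - (k : ℤ) = (s j0 : ℤ)) := by push_cast; omega
    have hv : ((-1 : ℤ)) ^ (j0 + 1 + γ + 1) = (-1 : ℤ) ^ γ * (-1 : ℤ) ^ j0 := by
      rw [show j0 + 1 + γ + 1 = γ + j0 + 2 from by omega, pow_add, pow_add]
      norm_num
    rw [if_congr hc hv rfl, mul_ite, mul_zero]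
  have hC : ∑ j ∈ Finset.Icc 2 γ,
      (∑ j' ∈ Finset.Icc 1 (γ - 1),
        (if ((I j + k : ℕ) : ℤ) = ((I (j' + 1) : ℕ) : ℤ) then
          (if 2 ≤ j then 2 else 1) * ((-1 : ℤ) ^ (j + j' + 1)) else 0))
      = 2 * ∑ j' ∈ Finset.Icc 1 (γ - 1), (-1 : ℤ) ^ j' * fS ((s j' : ℤ) - (k : ℤ)) := by
    rw [sum_shift γ hγ, Finset.sum_comm, Finset.mul_sum]
    refine Finset.sum_congr rfl fun j' hj' => ?_
    simp only [Finset.mem_Icc] at hj'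
    rw [hfSexp ((s j' : ℤ) - (k : ℤ)), Finset.mul_sum, Finset.mul_sum]
    refine Finset.sum_congr rfl fun j0 hj0 => ?_
    simp only [Finset.mem_Icc] at hj0
    rw [← hsI j0 hj0.1 (by omega), ← hsI j' hj'.1 (by omega),
      if_pos (by omega : 2 ≤ j0 + 1)]
    have hc : (((s j0 + 1 + k : ℕ) : ℤ) = ((s j' + 1 : ℕ) : ℤ))
        ↔ ((s j' : ℤ) - (k : ℤ) = (s j0 : ℤ)) := by push_cast; omega
    have hv : 2 * ((-1 : ℤ)) ^ (j0 + 1 + j' + 1) = 2 * ((-1 : ℤ) ^ j' * (-1 : ℤ) ^ j0) := by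
      rw [show j0 + 1 + j' + 1 = j' + j0 + 2 from by omega, pow_add, pow_add]
      ring
    rw [if_congr hc hv rfl, mul_ite, mul_ite, mul_zero, mul_zero]
  rw [hA0, zero_add, hA, hB, hC]
  ring
end

section
/- Let a be a binary sequence of length n with γ runs and run length encoding r = (r_1,…,r_γ). Then for every k with 1 ≤ k ≤ n−1, Σ_{j=1}^{γ−1} (−1)^j·f_S(s_j − k) = Σ_{j=1}^{γ−1} (−1)^j·f_S(s_j + k) = Σ_{i=1}^{n−1} f_S(i+k)·f_S(i). -/
theorem stmt_12 (n γ : ℕ) (hn : 1 ≤ n) (a : ℕ → ℤ)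
    (hbin : ∀ i, 1 ≤ i → i ≤ n → a i = 1 ∨ a i = -1)
    (h0 : a 0 = 0)
    -- `I j` (for `1 ≤ j ≤ γ+1`) are the starting positions of the runs of `a`:
    (I : ℕ → ℕ) (hI1 : I 1 = 1) (hIlast : I (γ + 1) = n + 1)
    (hImono : ∀ j, 1 ≤ j → j ≤ γ → I j < I (j + 1))
    (hchange : ∀ j, 2 ≤ j → j ≤ γ → a (I j - 1) ≠ a (I j))
    (hconst : ∀ j, 1 ≤ j → j ≤ γ → ∀ p, I j ≤ p → p < I (j + 1) → a p = a (I j))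
    -- the run length encoding `r` and the partial sums `s`:
    (r : ℕ → ℕ) (hr : ∀ j, 1 ≤ j → j ≤ γ → r j = I (j + 1) - I j)
    (s : ℕ → ℕ) (hs : ∀ j, 1 ≤ j → j ≤ γ → s j = ∑ t ∈ Finset.Icc 1 j, r t)
    -- the function `f_S`:
    (fS : ℤ → ℤ)
    (hfS1 : ∀ j, 1 ≤ j → j ≤ γ - 1 → fS ((s j : ℤ)) = (-1) ^ j)
    (hfS0 : ∀ x : ℤ, (∀ j, 1 ≤ j → j ≤ γ - 1 → x ≠ (s j : ℤ)) → fS x = 0)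
    (k : ℕ) (hk1 : 1 ≤ k) (hk2 : k ≤ n - 1) :
    (∑ j ∈ Finset.Icc 1 (γ - 1), (-1 : ℤ) ^ j * fS ((s j : ℤ) - (k : ℤ))
      = ∑ j ∈ Finset.Icc 1 (γ - 1), (-1 : ℤ) ^ j * fS ((s j : ℤ) + (k : ℤ))) ∧
    (∑ j ∈ Finset.Icc 1 (γ - 1), (-1 : ℤ) ^ j * fS ((s j : ℤ) + (k : ℤ))
      = ∑ i ∈ Finset.Icc 1 (n - 1), fS ((i : ℤ) + (k : ℤ)) * fS (i : ℤ)) := by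
  -- I is strictly monotone on [1, γ+1]
  have hIm : ∀ p, 1 ≤ p → ∀ q, p < q → q ≤ γ + 1 → I p < I q := by
    intro p hp q
    induction q with
    | zero => intro h1 h2; omega
    | succ m ih =>
      intro h1 h2
      rcases Nat.lt_or_ge p m with h | h
      · have ha : I p < I m := ih h (by omega)
        have hb : I m < I (m + 1) := hImono m (by omega) (by omega)
        omega
      · have hpm : p = m := by omega
        subst hpm
        exact hImono p hp (by omega)
  -- s j + 1 = I (j+1)
  have hsI : ∀ j, 1 ≤ j → j ≤ γ → s j + 1 = I (j + 1) := by
    intro j hj1 hjγ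
    induction j with
    | zero => omega
    | succ m ih =>
      rcases Nat.eq_zero_or_pos m with hm | hm
      · subst hm
        have h2 : I 1 < I 2 := hImono 1 le_rfl (by omega)
        have h3 : s 1 = r 1 := by rw [hs 1 le_rfl (by omega)]; simp
        have h4 : r 1 = I 2 - I 1 := hr 1 le_rfl (by omega)
        show s 1 + 1 = I 2
        omega
      · have ihm : s m + 1 = I (m + 1) := ih hm (by omega)
        have hsum : s (m + 1) = s m + r (m + 1) := by
          rw [hs (m + 1) (by omega) (by omega), hs m hm (by omega),
            Finset.sum_Icc_succ_top (by omega : 1 ≤ m + 1)]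
        have h2 : I (m + 1) < I (m + 2) := hImono (m + 1) (by omega) (by omega)
        have h4 : r (m + 1) = I (m + 2) - I (m + 1) := hr (m + 1) (by omega) (by omega)
        show s (m + 1) + 1 = I (m + 2)
        omega
  -- bounds and injectivity for s on Icc 1 (γ-1)
  have hsmem : ∀ l, 1 ≤ l → l ≤ γ - 1 → s l ∈ Finset.Icc 1 (n - 1) := by
    intro l hl1 hl2
    have hlγ : l < γ := by omega
    have h1 : s l + 1 = I (l + 1) := hsI l hl1 (by omega)
    have h2 : I 1 < I (l + 1) := hIm 1 le_rfl (l + 1) (by omega) (by omega)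
    have h3 : I (l + 1) < I (γ + 1) := hIm (l + 1) (by omega) (γ + 1) (by omega) le_rfl
    rw [Finset.mem_Icc]
    omega
  have hsinj : ∀ j l, 1 ≤ j → j ≤ γ - 1 → 1 ≤ l → l ≤ γ - 1 → s j = s l → j = l := by
    intro j l hj1 hj2 hl1 hl2 hsl
    by_contra hne
    have h1 : s j + 1 = I (j + 1) := hsI j hj1 (by omega)
    have h2 : s l + 1 = I (l + 1) := hsI l hl1 (by omega)
    rcases Nat.lt_or_ge j l with h | h
    · have := hIm (j + 1) (by omega) (l + 1) (by omega) (by omega); omega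
    · have := hIm (l + 1) (by omega) (j + 1) (by omega) (by omega); omega
  -- expansion of fS as a sum of indicators
  have expand : ∀ x : ℤ, fS x =
      ∑ l ∈ Finset.Icc 1 (γ - 1), (if x = (s l : ℤ) then (-1 : ℤ) ^ l else 0) := by
    intro x
    by_cases h : ∃ l, 1 ≤ l ∧ l ≤ γ - 1 ∧ x = (s l : ℤ)
    · obtain ⟨l, hl1, hl2, hx⟩ := h
      have hmem : l ∈ Finset.Icc 1 (γ - 1) := Finset.mem_Icc.mpr ⟨hl1, hl2⟩
      rw [hx, hfS1 l hl1 hl2]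
      rw [Finset.sum_eq_single_of_mem l hmem]
      · rw [if_pos rfl]
      · intro b hb hbl
        rw [Finset.mem_Icc] at hb
        rw [if_neg]
        intro hc
        have : s b = s l := by exact_mod_cast hc.symm
        exact hbl (hsinj b l hb.1 hb.2 hl1 hl2 this)
    · push_neg at h
      rw [hfS0 x (fun j hj1 hj2 => h j hj1 hj2)]
      rw [Finset.sum_eq_zero]
      intro l hl
      rw [Finset.mem_Icc] at hl
      rw [if_neg (h l hl.1 hl.2)]
  -- first equality
  have h1 : ∑ j ∈ Finset.Icc 1 (γ - 1), (-1 : ℤ) ^ j * fS ((s j : ℤ) - (k : ℤ))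
      = ∑ j ∈ Finset.Icc 1 (γ - 1), ∑ l ∈ Finset.Icc 1 (γ - 1),
          (if (s j : ℤ) = (s l : ℤ) + (k : ℤ) then (-1 : ℤ) ^ (j + l) else 0) := by
    refine Finset.sum_congr rfl fun j _ => ?_
    rw [expand, Finset.mul_sum]
    refine Finset.sum_congr rfl fun l _ => ?_
    by_cases h : (s j : ℤ) = (s l : ℤ) + (k : ℤ)
    · rw [if_pos h, if_pos (by linarith), pow_add]
    · rw [if_neg h, if_neg (by intro hc; exact h (by linarith)), mul_zero]
  have h2 : ∑ j ∈ Finset.Icc 1 (γ - 1), (-1 : ℤ) ^ j * fS ((s j : ℤ) + (k : ℤ))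
      = ∑ l ∈ Finset.Icc 1 (γ - 1), ∑ j ∈ Finset.Icc 1 (γ - 1),
          (if (s j : ℤ) = (s l : ℤ) + (k : ℤ) then (-1 : ℤ) ^ (j + l) else 0) := by
    refine Finset.sum_congr rfl fun l _ => ?_
    rw [expand, Finset.mul_sum]
    refine Finset.sum_congr rfl fun j _ => ?_
    by_cases h : (s j : ℤ) = (s l : ℤ) + (k : ℤ)
    · rw [if_pos (by linarith : (s l : ℤ) + (k : ℤ) = (s j : ℤ)), if_pos h, pow_add,
        mul_comm]
    · rw [if_neg (by intro hc; exact h (by linarith)), if_neg h, mul_zero]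
  constructor
  · rw [h1, h2, Finset.sum_comm]
  · -- second equality
    rw [h2]
    have h3 : ∑ i ∈ Finset.Icc 1 (n - 1), fS ((i : ℤ) + (k : ℤ)) * fS (i : ℤ)
        = ∑ i ∈ Finset.Icc 1 (n - 1), ∑ l ∈ Finset.Icc 1 (γ - 1),
            (if i = s l then fS ((i : ℤ) + (k : ℤ)) * (-1 : ℤ) ^ l else 0) := by
      refine Finset.sum_congr rfl fun i _ => ?_
      rw [expand (i : ℤ), Finset.mul_sum]
      refine Finset.sum_congr rfl fun l _ => ?_
      by_cases h : i = s l
      · rw [if_pos h, if_pos (by exact_mod_cast h)]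
      · rw [if_neg h, if_neg (by exact_mod_cast h), mul_zero]
    have h4 : ∑ i ∈ Finset.Icc 1 (n - 1), ∑ l ∈ Finset.Icc 1 (γ - 1),
          (if i = s l then fS ((i : ℤ) + (k : ℤ)) * (-1 : ℤ) ^ l else 0)
        = ∑ l ∈ Finset.Icc 1 (γ - 1), ∑ i ∈ Finset.Icc 1 (n - 1),
          (if i = s l then fS ((i : ℤ) + (k : ℤ)) * (-1 : ℤ) ^ l else 0) :=
      Finset.sum_comm
    rw [h3, h4]
    refine Finset.sum_congr rfl fun l hl => ?_
    rw [Finset.mem_Icc] at hl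
    have hmem := hsmem l hl.1 hl.2
    rw [Finset.sum_ite_eq' (Finset.Icc 1 (n - 1)) (s l)
      (fun i => fS ((i : ℤ) + (k : ℤ)) * (-1 : ℤ) ^ l), if_pos hmem]
    rw [expand ((s l : ℤ) + (k : ℤ)), Finset.sum_mul]
    refine Finset.sum_congr rfl fun j _ => ?_
    by_cases h : (s j : ℤ) = (s l : ℤ) + (k : ℤ)
    · rw [if_pos h, if_pos h.symm, pow_add]
    · rw [if_neg h, if_neg (fun hc => h hc.symm), zero_mul]
end

section
/- Let a be a binary sequence of length n with γ runs and run length encoding r = (r_1,…,r_γ). Then for every k with 1 ≤ k ≤ n−1, (−1)^γ·R_{n−k}(a) = f_S(k) + f_T(k) + 2·Σ_{j=1}^{γ−1} (−1)^j·f_T(k − s_j). -/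
theorem stmt_13 (n γ : ℕ) (hn : 1 ≤ n) (a : ℕ → ℤ)
    (hbin : ∀ i, 1 ≤ i → i ≤ n → a i = 1 ∨ a i = -1)
    (h0 : a 0 = 0) (htop : a (n + 1) = 0)
    -- `I j` (for `1 ≤ j ≤ γ+1`) are the starting positions of the runs of `a`:
    (I : ℕ → ℕ) (hI1 : I 1 = 1) (hIlast : I (γ + 1) = n + 1)
    (hImono : ∀ j, 1 ≤ j → j ≤ γ → I j < I (j + 1))
    (hchange : ∀ j, 2 ≤ j → j ≤ γ → a (I j - 1) ≠ a (I j))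
    (hconst : ∀ j, 1 ≤ j → j ≤ γ → ∀ p, I j ≤ p → p < I (j + 1) → a p = a (I j))
    -- the run length encoding `r` and the partial sums `s`, `t`:
    (r : ℕ → ℕ) (hr : ∀ j, 1 ≤ j → j ≤ γ → r j = I (j + 1) - I j)
    (s : ℕ → ℕ) (hs : ∀ j, 1 ≤ j → j ≤ γ → s j = ∑ u ∈ Finset.Icc 1 j, r u)
    (t : ℕ → ℕ) (ht : ∀ j, 1 ≤ j → j ≤ γ → t j = ∑ u ∈ Finset.Icc (γ - j + 1) γ, r u)
    -- the functions `f_S` and `f_T`: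
    (fS : ℤ → ℤ)
    (hfS1 : ∀ j, 1 ≤ j → j ≤ γ - 1 → fS ((s j : ℤ)) = (-1) ^ j)
    (hfS0 : ∀ x : ℤ, (∀ j, 1 ≤ j → j ≤ γ - 1 → x ≠ (s j : ℤ)) → fS x = 0)
    (fT : ℤ → ℤ)
    (hfT1 : ∀ j, 1 ≤ j → j ≤ γ - 1 → fT ((t j : ℤ)) = (-1) ^ j)
    (hfT0 : ∀ x : ℤ, (∀ j, 1 ≤ j → j ≤ γ - 1 → x ≠ (t j : ℤ)) → fT x = 0)
    (k : ℕ) (hk1 : 1 ≤ k) (hk2 : k ≤ n - 1) :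
    (-1 : ℤ) ^ γ * runVec a n (n - k) = fS (k : ℤ) + fT (k : ℤ)
      + 2 * ∑ j ∈ Finset.Icc 1 (γ - 1), (-1 : ℤ) ^ j * fT ((k : ℤ) - (s j : ℤ)) := by

  classical
  have hγ : 1 ≤ γ := by
    by_contra h
    have hγ0 : γ = 0 := by omega
    rw [hγ0, zero_add, hI1] at hIlast
    omega
  have hkn : k ≤ n - 1 ∧ 1 ≤ n := ⟨hk2, hn⟩
  have hkn' : k < n := by omega
  set S : ℕ → ℕ := fun p => ∑ u ∈ Finset.Icc 1 p, r u with hSdef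
  set T : ℕ → ℕ := fun q => ∑ u ∈ Finset.Icc (γ - q + 1) γ, r u with hTdef
  have hr1 : ∀ u, 1 ≤ u → u ≤ γ → I (u + 1) = I u + r u := by
    intro u h1 h2
    have := hImono u h1 h2
    have := hr u h1 h2
    omega
  have hrpos : ∀ u, 1 ≤ u → u ≤ γ → 1 ≤ r u := by
    intro u h1 h2
    have := hImono u h1 h2
    have := hr u h1 h2
    omega
  have hSstep : ∀ p, S (p + 1) = S p + r (p + 1) := by
    intro p
    simpa using Finset.sum_Icc_succ_top (by omega : 1 ≤ p + 1) r
  have hIS : ∀ p, p ≤ γ → I (p + 1) = 1 + S p := by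
    intro p
    induction p with
    | zero => intro _; simp [hSdef, hI1]
    | succ p ih =>
      intro h
      rw [hr1 (p + 1) (by omega) h, ih (by omega), hSstep]
      omega
  have hSγ : S γ = n := by
    have := hIS γ le_rfl
    rw [hIlast] at this
    omega
  have hSlt : ∀ p q, p < q → q ≤ γ → S p < S q := by
    intro p q hpq hq
    induction q with
    | zero => omega
    | succ q ih =>
      have h1 : S q < S (q + 1) := by
        have := hrpos (q + 1) (by omega) hq
        rw [hSstep]; omega
      rcases Nat.lt_succ_iff_lt_or_eq.mp hpq with h | h
      · exact (ih h (by omega)).trans h1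
      · subst h; exact h1
  have hST : ∀ q, q ≤ γ → S (γ - q) + T q = n := by
    intro q hq
    have : S (γ - q) + T q = S γ := by
      rw [hSdef, hTdef]
      simp only [← Finset.Ico_add_one_right_eq_Icc]
      exact Finset.sum_Ico_consecutive r (by omega) (by omega)
    omega
  have hTlt : ∀ p q, p < q → q ≤ γ → T p < T q := by
    intro p q h1 h2
    have e1 := hST p (by omega)
    have e2 := hST q h2
    have := hSlt (γ - q) (γ - p) (by omega) (by omega)
    omega
  have hT0 : T 0 = 0 := by
    have := hST 0 (by omega)
    have h0' : γ - 0 = γ := by omega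
    rw [h0'] at this
    omega
  have hS0 : S 0 = 0 := by simp [hSdef]
  have hTγ : T γ = n := by
    have := hST γ le_rfl
    simp at this
    omega
  have hIS' : ∀ q, q ≤ γ → I (γ + 1 - q) + T q = n + 1 := by
    intro q hq
    have h1 := hIS (γ - q) (by omega)
    have h2 := hST q hq
    rw [show γ - q + 1 = γ + 1 - q by omega] at h1
    omega
  have hIlt : ∀ j j', 1 ≤ j → j < j' → j' ≤ γ + 1 → I j < I j' := by
    intro j j' h1 h2 h3
    have e1 := hIS (j - 1) (by omega)
    have e2 := hIS (j' - 1) (by omega)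
    rw [show j - 1 + 1 = j by omega] at e1
    rw [show j' - 1 + 1 = j' by omega] at e2
    have := hSlt (j - 1) (j' - 1) (by omega) (by omega)
    omega
  have hIinj : ∀ j j', 1 ≤ j → j ≤ γ + 1 → 1 ≤ j' → j' ≤ γ + 1 → I j = I j' → j = j' := by
    intro j j' h1 h2 h3 h4 h5
    rcases lt_trichotomy j j' with h | h | h
    · have := hIlt j j' h1 h h4; omega
    · exact h
    · have := hIlt j' j h3 h h2; omega
  have hIbound : ∀ j, 1 ≤ j → j ≤ γ + 1 → 1 ≤ I j ∧ I j ≤ n + 1 := by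
    intro j h1 h2
    constructor
    · rcases eq_or_lt_of_le h1 with h | h
      · rw [← h, hI1]
      · have := hIlt 1 j le_rfl h h2; omega
    · rcases eq_or_lt_of_le h2 with h | h
      · rw [h, hIlast]
      · have := hIlt j (γ + 1) h1 h le_rfl; rw [hIlast] at this; omega
  have hInn : ∀ j, 1 ≤ j → j ≤ γ → I j ≤ n := by
    intro j h1 h2
    have := hIlt j (γ + 1) h1 (by omega) le_rfl
    rw [hIlast] at this; omega
  have ha1 : a 1 = 1 ∨ a 1 = -1 := hbin 1 le_rfl hn
  have ha1sq : a 1 * a 1 = 1 := by rcases ha1 with h | h <;> rw [h] <;> ring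
  have hsign : ∀ j, 1 ≤ j → j ≤ γ → a (I j) = a 1 * (-1) ^ (j - 1) := by
    intro j
    induction j with
    | zero => omega
    | succ j ih =>
      intro h1 h2
      rcases Nat.eq_zero_or_pos j with hj0 | hj0
      · subst hj0; simp [hI1]
      · have hmono := hImono j hj0 (by omega)
        have hne := hchange (j + 1) (by omega) h2
        have hprev : a (I (j + 1) - 1) = a (I j) :=
          hconst j hj0 (by omega) (I (j + 1) - 1) (by omega) (by omega)
        have hj1 : a (I j) = a 1 * (-1) ^ (j - 1) := ih hj0 (by omega)
        have hb1 : a (I j) = 1 ∨ a (I j) = -1 :=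
          hbin _ (hIbound j hj0 (by omega)).1 (hInn j hj0 (by omega))
        have hb2 : a (I (j + 1)) = 1 ∨ a (I (j + 1)) = -1 :=
          hbin _ (hIbound (j + 1) (by omega) (by omega)).1 (hInn (j + 1) (by omega) h2)
        have hflip : a (I (j + 1)) = -a (I j) := by
          rw [hprev] at hne
          rcases hb1 with h | h <;> rcases hb2 with h' | h' <;> rw [h, h'] at hne ⊢ <;> omega
        rw [hflip, hj1, show j + 1 - 1 = (j - 1) + 1 by omega, pow_succ]
        ring
  have hchar : ∀ i, 1 ≤ i → i ≤ n + 1 →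
      (a (i - 1) ≠ a i ↔ ∃ j, 1 ≤ j ∧ j ≤ γ + 1 ∧ I j = i) := by
    intro i h1 h2
    constructor
    · intro hne
      by_contra hno
      push_neg at hno
      have hi1 : i ≠ 1 := fun h => hno 1 le_rfl (by omega) (by rw [hI1, h])
      have hin : i ≠ n + 1 := fun h => hno (γ + 1) (by omega) le_rfl (by rw [hIlast, h])
      set F := (Finset.Icc 1 γ).filter (fun j => I j < i) with hF
      have h1F : 1 ∈ F := by
        simp only [hF, Finset.mem_filter, Finset.mem_Icc]
        exact ⟨⟨le_rfl, hγ⟩, by rw [hI1]; omega⟩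
      have hFne : F.Nonempty := ⟨1, h1F⟩
      set j := F.max' hFne with hj
      have hjF : j ∈ F := F.max'_mem hFne
      simp only [hF, Finset.mem_filter, Finset.mem_Icc] at hjF
      obtain ⟨⟨hj1, hj2⟩, hji⟩ := hjF
      have hub : i < I (j + 1) := by
        rcases eq_or_lt_of_le hj2 with h | h
        · rw [h, hIlast]; omega
        · have hnotmem : ¬ I (j + 1) < i := by
            intro hc
            have : j + 1 ∈ F := by
              simp only [hF, Finset.mem_filter, Finset.mem_Icc]
              exact ⟨⟨by omega, by omega⟩, hc⟩
            have := F.le_max' (j + 1) this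
            omega
          have := hno (j + 1) (by omega) (by omega)
          omega
      have e1 : a i = a (I j) := hconst j hj1 hj2 i (le_of_lt hji) hub
      have e2 : a (i - 1) = a (I j) := hconst j hj1 hj2 (i - 1) (by omega) (by omega)
      rw [e1, e2] at hne
      exact hne rfl
    · rintro ⟨j, hj1, hj2, rfl⟩
      rcases eq_or_lt_of_le hj1 with h | h
      · rw [← h, hI1]
        simp only [Nat.sub_self, h0]
        rcases ha1 with h' | h' <;> rw [h'] <;> norm_num
      · rcases eq_or_lt_of_le hj2 with h' | h'
        · rw [h', hIlast]
          simp only [Nat.add_sub_cancel, htop]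
          have := hbin n hn le_rfl
          rcases this with h'' | h'' <;> rw [h''] <;> norm_num
        · exact hchange j h (by omega)
  -- helper conversions between S/T and s/t
  have hSs : ∀ p, 1 ≤ p → p ≤ γ → S p = s p := fun p h1 h2 => (hs p h1 h2).symm
  have hTt : ∀ q, 1 ≤ q → q ≤ γ → T q = t q := fun q h1 h2 => (ht q h1 h2).symm
  -- the length of the blocks
  set m := n - k with hmdef
  have hmk : m + k = n := by omega
  have hm1 : 1 ≤ m := by omega
  set G : ℕ → ℤ := fun i =>
    if a (i - 1) ≠ a i ∧ a (i + m - 1) ≠ a (i + m) then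
      (if 1 < i ∧ i + m < n + 1 then 2 else 1) * (a i * a (i + m - 1))
    else 0 with hGdef
  have hrv : runVec a n m = -∑ i ∈ Finset.Icc 1 (k + 1), G i := by
    rw [runVec, show n + 1 - m = k + 1 by omega]
  have hGzero : ∀ i, 1 ≤ i → i ≤ k + 1 → (¬∃ j, 1 ≤ j ∧ j ≤ γ + 1 ∧ I j = i) → G i = 0 := by
    intro i h1 h2 hno
    simp only [hGdef]
    rw [if_neg]
    rintro ⟨hc1, _⟩
    exact hno ((hchar i h1 (by omega)).mp hc1)
  have hstepB : ∑ i ∈ Finset.Icc 1 (k + 1), G i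
      = ∑ j ∈ Finset.Icc 1 (γ + 1), (if I j ≤ k + 1 then G (I j) else 0) := by
    have hinj : ∀ x ∈ (Finset.Icc 1 (γ + 1)).filter (fun j => I j ≤ k + 1),
        ∀ y ∈ (Finset.Icc 1 (γ + 1)).filter (fun j => I j ≤ k + 1), I x = I y → x = y := by
      intro x hx y hy hxy
      simp only [Finset.mem_filter, Finset.mem_Icc] at hx hy
      exact hIinj x y hx.1.1 hx.1.2 hy.1.1 hy.1.2 hxy
    have himg : ∑ x ∈ Finset.image I ((Finset.Icc 1 (γ + 1)).filter (fun j => I j ≤ k + 1)), G x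
        = ∑ j ∈ (Finset.Icc 1 (γ + 1)).filter (fun j => I j ≤ k + 1), G (I j) :=
      Finset.sum_image hinj
    calc ∑ i ∈ Finset.Icc 1 (k + 1), G i
        = ∑ x ∈ Finset.image I ((Finset.Icc 1 (γ + 1)).filter (fun j => I j ≤ k + 1)), G x := by
          refine (Finset.sum_subset ?_ ?_).symm
          · intro i hi
            simp only [Finset.mem_image, Finset.mem_filter, Finset.mem_Icc] at hi
            obtain ⟨j, ⟨⟨hj1, hj2⟩, hle⟩, rfl⟩ := hi
            simp only [Finset.mem_Icc]
            exact ⟨(hIbound j hj1 hj2).1, hle⟩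
          · intro i hi hni
            simp only [Finset.mem_Icc] at hi
            apply hGzero i hi.1 hi.2
            rintro ⟨j, hj1, hj2, rfl⟩
            apply hni
            simp only [Finset.mem_image, Finset.mem_filter, Finset.mem_Icc]
            exact ⟨j, ⟨⟨hj1, hj2⟩, hi.2⟩, rfl⟩
      _ = ∑ j ∈ (Finset.Icc 1 (γ + 1)).filter (fun j => I j ≤ k + 1), G (I j) := himg
      _ = ∑ j ∈ Finset.Icc 1 (γ + 1), (if I j ≤ k + 1 then G (I j) else 0) :=
          Finset.sum_filter _ _
  have hmul : ∀ x y : ℤ, (a 1 * x) * (a 1 * y) = x * y := by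
    intro x y
    calc (a 1 * x) * (a 1 * y) = (a 1 * a 1) * (x * y) := by ring
    _ = x * y := by rw [ha1sq, one_mul]
  have hstepC : ∀ j, 1 ≤ j → j ≤ γ + 1 →
      (if I j ≤ k + 1 then G (I j) else 0)
      = ∑ q ∈ Finset.Icc 0 γ, (if I j + m = I (γ + 1 - q) then
          (if 2 ≤ j ∧ 1 ≤ q then (2 : ℤ) else 1) * ((-1 : ℤ) ^ (j - 1) * (-1 : ℤ) ^ (γ - 1 - q))
        else 0) := by
    intro j hj1 hj2
    by_cases hle : I j ≤ k + 1
    · rw [if_pos hle]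
      by_cases hex : ∃ j', 1 ≤ j' ∧ j' ≤ γ + 1 ∧ I j' = I j + m
      · obtain ⟨j', hj'1, hj'2, hj'⟩ := hex
        have hjlt : j < j' := by
          by_contra hc
          push_neg at hc
          rcases eq_or_lt_of_le hc with h | h
          · rw [h] at hj'; omega
          · have := hIlt j' j hj'1 h hj2; omega
        have hj'2' : 2 ≤ j' := by omega
        have hjγ : j ≤ γ := by omega
        set q0 := γ + 1 - j' with hq0
        have hq0' : γ + 1 - q0 = j' := by omega
        have h₀ : ∀ b ∈ Finset.Icc 0 γ, b ≠ q0 →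
            (if I j + m = I (γ + 1 - b) then
              (if 2 ≤ j ∧ 1 ≤ b then (2 : ℤ) else 1) * ((-1 : ℤ) ^ (j - 1) * (-1 : ℤ) ^ (γ - 1 - b))
            else 0) = 0 := by
          intro b hb hbne
          simp only [Finset.mem_Icc] at hb
          rw [if_neg]
          intro hc
          have heq : γ + 1 - b = j' :=
            hIinj _ _ (by omega) (by omega) hj'1 hj'2 (by rw [← hc, hj'])
          omega
        have h₁ : q0 ∉ Finset.Icc 0 γ →
            (if I j + m = I (γ + 1 - q0) then
              (if 2 ≤ j ∧ 1 ≤ q0 then (2 : ℤ) else 1) * ((-1 : ℤ) ^ (j - 1) * (-1 : ℤ) ^ (γ - 1 - q0))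
            else 0) = 0 := by
          intro hq0mem
          exfalso
          apply hq0mem
          simp only [Finset.mem_Icc]
          omega
        rw [Finset.sum_eq_single q0 h₀ h₁, if_pos (by rw [hq0', hj'])]
        have hia : a (I j - 1) ≠ a (I j) :=
          (hchar (I j) (hIbound j hj1 hj2).1 (hIbound j hj1 hj2).2).mpr ⟨j, hj1, hj2, rfl⟩
        have hib : a (I j + m - 1) ≠ a (I j + m) := by
          rw [← hj']
          exact (hchar (I j') (hIbound j' hj'1 hj'2).1 (hIbound j' hj'1 hj'2).2).mpr
            ⟨j', hj'1, hj'2, rfl⟩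
        have hGval : G (I j)
            = (if 1 < I j ∧ I j + m < n + 1 then (2 : ℤ) else 1) * (a (I j) * a (I j + m - 1)) := by
          simp only [hGdef]
          rw [if_pos ⟨hia, hib⟩]
        rw [hGval]
        have hval : a (I j + m - 1) = a (I (j' - 1)) := by
          have hlt := hIlt (j' - 1) j' (by omega) (by omega) hj'2
          have hIj'pos := (hIbound j' hj'1 hj'2).1
          have := hconst (j' - 1) (by omega) (by omega) (I j' - 1) (by omega)
            (by rw [show j' - 1 + 1 = j' by omega]; omega)
          rw [show I j + m - 1 = I j' - 1 by omega]
          exact this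
        have hiff : (1 < I j ∧ I j + m < n + 1) ↔ (2 ≤ j ∧ 1 ≤ q0) := by
          constructor
          · rintro ⟨c1, c2⟩
            constructor
            · by_contra hcc
              push_neg at hcc
              have hj1' : j = 1 := by omega
              rw [hj1', hI1] at c1
              omega
            · by_contra hcc
              push_neg at hcc
              have : j' = γ + 1 := by omega
              rw [this, hIlast] at hj'
              omega
          · rintro ⟨c1, c2⟩
            have hlt1 := hIlt 1 j le_rfl (by omega) hj2
            rw [hI1] at hlt1
            have hj'γ : j' ≤ γ := by omega
            have hlt2 := hIlt j' (γ + 1) hj'1 (by omega) le_rfl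
            rw [hIlast] at hlt2
            omega
        rw [if_congr hiff rfl rfl, hval, hsign j hj1 hjγ, hsign (j' - 1) (by omega) (by omega),
          hmul, show j' - 1 - 1 = γ - 1 - q0 by omega]
      · have hib : ¬(a (I j + m - 1) ≠ a (I j + m)) := by
          intro hc
          have hb1 : 1 ≤ I j + m := by omega
          have hb2 : I j + m ≤ n + 1 := by omega
          obtain ⟨j', h1, h2, h3⟩ := (hchar (I j + m) hb1 hb2).mp hc
          exact hex ⟨j', h1, h2, h3⟩
        have hG0 : G (I j) = 0 := by
          simp only [hGdef]
          exact if_neg (fun hcc => hib hcc.2)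
        rw [hG0]
        symm
        apply Finset.sum_eq_zero
        intro q hq
        simp only [Finset.mem_Icc] at hq
        rw [if_neg]
        intro hc
        exact hex ⟨γ + 1 - q, by omega, by omega, hc.symm⟩
    · rw [if_neg hle]
      symm
      apply Finset.sum_eq_zero
      intro q hq
      simp only [Finset.mem_Icc] at hq
      rw [if_neg]
      intro hc
      have := (hIbound (γ + 1 - q) (by omega) (by omega)).2
      omega
  have hstepD : ∑ j ∈ Finset.Icc 1 (γ + 1), (if I j ≤ k + 1 then G (I j) else 0)
      = ∑ p ∈ Finset.Icc 0 γ, ∑ q ∈ Finset.Icc 0 γ, (if S p + T q = k then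
          (if 1 ≤ p ∧ 1 ≤ q then (2 : ℤ) else 1) * ((-1 : ℤ) ^ p * (-1 : ℤ) ^ (γ - 1 - q))
        else 0) := by
    rw [Finset.sum_congr rfl
      (fun j hj => by
        simp only [Finset.mem_Icc] at hj
        exact hstepC j hj.1 hj.2)]
    refine Finset.sum_nbij' (fun j => j - 1) (fun p => p + 1) ?_ ?_ ?_ ?_ ?_
    · intro j hj
      simp only [Finset.mem_Icc] at hj ⊢
      omega
    · intro p hp
      simp only [Finset.mem_Icc] at hp ⊢
      omega
    · intro j hj
      simp only [Finset.mem_Icc] at hj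
      show j - 1 + 1 = j
      omega
    · intro p hp
      simp only [Finset.mem_Icc] at hp
      show p + 1 - 1 = p
      omega
    · intro j hj
      simp only [Finset.mem_Icc] at hj
      apply Finset.sum_congr rfl
      intro q hq
      simp only [Finset.mem_Icc] at hq
      have e1 : I j = 1 + S (j - 1) := by
        have := hIS (j - 1) (by omega)
        rw [show j - 1 + 1 = j by omega] at this
        exact this
      have e2 : I (γ + 1 - q) + T q = n + 1 := hIS' q (by omega)
      have hiff : (I j + m = I (γ + 1 - q)) ↔ (S (j - 1) + T q = k) := by omega
      have hiff2 : (2 ≤ j ∧ 1 ≤ q) ↔ (1 ≤ j - 1 ∧ 1 ≤ q) := by omega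
      rw [if_congr hiff rfl rfl, if_congr hiff2 rfl rfl]
  have hA2 : ∀ x : ℕ, (-1 : ℤ) ^ x * (-1 : ℤ) ^ x = 1 := by
    intro x
    rw [← pow_add]
    exact Even.neg_one_pow ⟨x, rfl⟩
  have key2 : (-1 : ℤ) ^ γ * runVec a n m
      = ∑ p ∈ Finset.Icc 0 γ, ∑ q ∈ Finset.Icc 0 γ, (if S p + T q = k then
          (if 1 ≤ p ∧ 1 ≤ q then (2 : ℤ) else 1) * (-1 : ℤ) ^ (p + q) else 0) := by
    rw [hrv, hstepB, hstepD, mul_neg, Finset.mul_sum, ← Finset.sum_neg_distrib]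
    apply Finset.sum_congr rfl
    intro p hp
    rw [Finset.mul_sum, ← Finset.sum_neg_distrib]
    apply Finset.sum_congr rfl
    intro q hq
    simp only [Finset.mem_Icc] at hp hq
    by_cases hc : S p + T q = k
    · rw [if_pos hc, if_pos hc]
      have hqγ : q < γ := by
        by_contra hcc
        have hqq : q = γ := by omega
        rw [hqq, hTγ] at hc
        omega
      have epow : (-1 : ℤ) ^ γ = (-1 : ℤ) ^ (γ - 1 - q) * ((-1 : ℤ) ^ q * (-1 : ℤ)) := by
        conv_lhs => rw [show γ = (γ - 1 - q) + (q + 1) by omega]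
        rw [pow_add, pow_succ]
      rw [epow, pow_add]
      have hA := hA2 (γ - 1 - q)
      linear_combination ((if 1 ≤ p ∧ 1 ≤ q then (2 : ℤ) else 1) * (-1 : ℤ) ^ p * (-1 : ℤ) ^ q) * hA
    · rw [if_neg hc, if_neg hc, mul_zero, neg_zero]
  have hfT_sum : ∀ x : ℤ, fT x
      = ∑ q ∈ Finset.Icc 1 (γ - 1), (if x = (t q : ℤ) then (-1 : ℤ) ^ q else 0) := by
    intro x
    by_cases hex : ∃ q, 1 ≤ q ∧ q ≤ γ - 1 ∧ x = (t q : ℤ)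
    · obtain ⟨q0, h1, h2, h3⟩ := hex
      have h₀ : ∀ b ∈ Finset.Icc 1 (γ - 1), b ≠ q0 →
          (if x = (t b : ℤ) then (-1 : ℤ) ^ b else 0) = 0 := by
        intro b hb hbne
        simp only [Finset.mem_Icc] at hb
        rw [if_neg]
        intro hcc
        rw [h3] at hcc
        have hnat : t q0 = t b := by exact_mod_cast hcc
        rw [← hTt q0 h1 (by omega), ← hTt b hb.1 (by omega)] at hnat
        rcases lt_trichotomy b q0 with h | h | h
        · have := hTlt b q0 h (by omega); omega
        · exact hbne h
        · have := hTlt q0 b h (by omega); omega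
      have h₁ : q0 ∉ Finset.Icc 1 (γ - 1) →
          (if x = (t q0 : ℤ) then (-1 : ℤ) ^ q0 else 0) = 0 := by
        intro hmem
        exfalso
        apply hmem
        simp only [Finset.mem_Icc]
        omega
      rw [Finset.sum_eq_single q0 h₀ h₁, if_pos h3, h3, hfT1 q0 h1 h2]
    · push_neg at hex
      rw [hfT0 x hex]
      symm
      apply Finset.sum_eq_zero
      intro q hq
      simp only [Finset.mem_Icc] at hq
      rw [if_neg (hex q hq.1 hq.2)]
  have hfS_sum : fS (k : ℤ)
      = ∑ p ∈ Finset.Icc 1 (γ - 1), (if (k : ℤ) = (s p : ℤ) then (-1 : ℤ) ^ p else 0) := by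
    by_cases hex : ∃ p, 1 ≤ p ∧ p ≤ γ - 1 ∧ (k : ℤ) = (s p : ℤ)
    · obtain ⟨p0, h1, h2, h3⟩ := hex
      have h₀ : ∀ b ∈ Finset.Icc 1 (γ - 1), b ≠ p0 →
          (if (k : ℤ) = (s b : ℤ) then (-1 : ℤ) ^ b else 0) = 0 := by
        intro b hb hbne
        simp only [Finset.mem_Icc] at hb
        rw [if_neg]
        intro hcc
        rw [h3] at hcc
        have hnat : s p0 = s b := by exact_mod_cast hcc
        rw [← hSs p0 h1 (by omega), ← hSs b hb.1 (by omega)] at hnat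
        rcases lt_trichotomy b p0 with h | h | h
        · have := hSlt b p0 h (by omega); omega
        · exact hbne h
        · have := hSlt p0 b h (by omega); omega
      have h₁ : p0 ∉ Finset.Icc 1 (γ - 1) →
          (if (k : ℤ) = (s p0 : ℤ) then (-1 : ℤ) ^ p0 else 0) = 0 := by
        intro hmem
        exfalso
        apply hmem
        simp only [Finset.mem_Icc]
        omega
      rw [Finset.sum_eq_single p0 h₀ h₁, if_pos h3, h3, hfS1 p0 h1 h2]
    · push_neg at hex
      rw [hfS0 (k : ℤ) hex]
      symm
      apply Finset.sum_eq_zero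
      intro p hp
      simp only [Finset.mem_Icc] at hp
      rw [if_neg (hex p hp.1 hp.2)]
  obtain ⟨g, hg⟩ : ∃ g, γ = g + 1 := ⟨γ - 1, by omega⟩
  have hg1 : γ - 1 = g := by omega
  have houter : ∀ F : ℕ → ℤ, F γ = 0 →
      ∑ p ∈ Finset.Icc 0 γ, F p = ∑ p ∈ Finset.Icc 0 g, F p := by
    intro F hF
    rw [hg, Finset.sum_Icc_succ_top (Nat.zero_le _), show g + 1 = γ from hg.symm, hF, add_zero]
  have hinsert0 : ∀ F : ℕ → ℤ, ∑ p ∈ Finset.Icc 0 g, F p = F 0 + ∑ p ∈ Finset.Icc 1 g, F p := by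
    intro F
    have hins : Finset.Icc 0 g = insert 0 (Finset.Icc 1 g) := by
      ext x
      simp only [Finset.mem_Icc, Finset.mem_insert]
      omega
    rw [hins, Finset.sum_insert (by simp)]
  have hdropq : ∀ p, (∑ q ∈ Finset.Icc 0 γ, (if S p + T q = k then
        (if 1 ≤ p ∧ 1 ≤ q then (2 : ℤ) else 1) * (-1 : ℤ) ^ (p + q) else 0))
      = ∑ q ∈ Finset.Icc 0 g, (if S p + T q = k then
        (if 1 ≤ p ∧ 1 ≤ q then (2 : ℤ) else 1) * (-1 : ℤ) ^ (p + q) else 0) := by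
    intro p
    apply houter
    rw [if_neg]
    have := hTγ
    omega
  have hFγ : (∑ q ∈ Finset.Icc 0 g, (if S γ + T q = k then
        (if 1 ≤ γ ∧ 1 ≤ q then (2 : ℤ) else 1) * (-1 : ℤ) ^ (γ + q) else 0)) = 0 := by
    apply Finset.sum_eq_zero
    intro q hq
    rw [if_neg]
    have := hSγ
    omega
  have h00 : (if S 0 + T 0 = k then
        (if 1 ≤ 0 ∧ 1 ≤ 0 then (2 : ℤ) else 1) * (-1 : ℤ) ^ (0 + 0) else 0) = 0 := by
    rw [if_neg]
    omega
  have hrow0 : (∑ q ∈ Finset.Icc 1 g, (if S 0 + T q = k then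
        (if 1 ≤ 0 ∧ 1 ≤ q then (2 : ℤ) else 1) * (-1 : ℤ) ^ (0 + q) else 0))
      = ∑ q ∈ Finset.Icc 1 g, (if T q = k then (-1 : ℤ) ^ q else 0) := by
    apply Finset.sum_congr rfl
    intro q hq
    simp only [Finset.mem_Icc] at hq
    have hiff : (S 0 + T q = k) ↔ (T q = k) := by omega
    rw [if_congr hiff (by rw [if_neg (by omega), one_mul, zero_add]) rfl]
  have hrowp : ∀ p, 1 ≤ p → p ≤ g →
      (∑ q ∈ Finset.Icc 0 g, (if S p + T q = k then
        (if 1 ≤ p ∧ 1 ≤ q then (2 : ℤ) else 1) * (-1 : ℤ) ^ (p + q) else 0))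
      = (if S p = k then (-1 : ℤ) ^ p else 0)
        + ∑ q ∈ Finset.Icc 1 g, (if S p + T q = k then 2 * (-1 : ℤ) ^ (p + q) else 0) := by
    intro p h1 h2
    rw [hinsert0]
    congr 1
    · have hiff : (S p + T 0 = k) ↔ (S p = k) := by omega
      rw [if_congr hiff (by rw [if_neg (by omega), one_mul, Nat.add_zero]) rfl]
    · apply Finset.sum_congr rfl
      intro q hq
      simp only [Finset.mem_Icc] at hq
      rw [if_congr Iff.rfl (by rw [if_pos ⟨h1, hq.1⟩]) rfl]
  have hXsplit : (∑ p ∈ Finset.Icc 0 γ, ∑ q ∈ Finset.Icc 0 γ, (if S p + T q = k then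
          (if 1 ≤ p ∧ 1 ≤ q then (2 : ℤ) else 1) * (-1 : ℤ) ^ (p + q) else 0))
      = (∑ q ∈ Finset.Icc 1 g, (if T q = k then (-1 : ℤ) ^ q else 0))
        + ((∑ p ∈ Finset.Icc 1 g, (if S p = k then (-1 : ℤ) ^ p else 0))
        + ∑ p ∈ Finset.Icc 1 g, ∑ q ∈ Finset.Icc 1 g,
            (if S p + T q = k then 2 * (-1 : ℤ) ^ (p + q) else 0)) := by
    have hmid : ∑ p ∈ Finset.Icc 1 g, (∑ q ∈ Finset.Icc 0 g, (if S p + T q = k then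
          (if 1 ≤ p ∧ 1 ≤ q then (2 : ℤ) else 1) * (-1 : ℤ) ^ (p + q) else 0))
        = ∑ p ∈ Finset.Icc 1 g, ((if S p = k then (-1 : ℤ) ^ p else 0)
          + ∑ q ∈ Finset.Icc 1 g, (if S p + T q = k then 2 * (-1 : ℤ) ^ (p + q) else 0)) :=
      Finset.sum_congr rfl (fun p hp => by
        simp only [Finset.mem_Icc] at hp
        exact hrowp p hp.1 hp.2)
    rw [Finset.sum_congr rfl (fun p _ => hdropq p), houter _ hFγ, hinsert0, hmid,
      Finset.sum_add_distrib, hinsert0, h00, zero_add, hrow0]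
  have hRB : fT (k : ℤ) = ∑ q ∈ Finset.Icc 1 g, (if T q = k then (-1 : ℤ) ^ q else 0) := by
    rw [hfT_sum (k : ℤ), hg1]
    apply Finset.sum_congr rfl
    intro q hq
    simp only [Finset.mem_Icc] at hq
    have := hTt q hq.1 (by omega)
    have hiff : ((k : ℤ) = (t q : ℤ)) ↔ (T q = k) := by omega
    rw [if_congr hiff rfl rfl]
  have hRC : fS (k : ℤ) = ∑ p ∈ Finset.Icc 1 g, (if S p = k then (-1 : ℤ) ^ p else 0) := by
    rw [hfS_sum, hg1]
    apply Finset.sum_congr rfl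
    intro p hp
    simp only [Finset.mem_Icc] at hp
    have := hSs p hp.1 (by omega)
    have hiff : ((k : ℤ) = (s p : ℤ)) ↔ (S p = k) := by omega
    rw [if_congr hiff rfl rfl]
  have hRD : 2 * (∑ j ∈ Finset.Icc 1 g, (-1 : ℤ) ^ j * fT ((k : ℤ) - (s j : ℤ)))
      = ∑ p ∈ Finset.Icc 1 g, ∑ q ∈ Finset.Icc 1 g,
          (if S p + T q = k then 2 * (-1 : ℤ) ^ (p + q) else 0) := by
    rw [Finset.mul_sum]
    apply Finset.sum_congr rfl
    intro p hp
    simp only [Finset.mem_Icc] at hp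
    rw [hfT_sum ((k : ℤ) - (s p : ℤ)), hg1, Finset.mul_sum, Finset.mul_sum]
    apply Finset.sum_congr rfl
    intro q hq
    simp only [Finset.mem_Icc] at hq
    have e1 := hSs p hp.1 (by omega)
    have e2 := hTt q hq.1 (by omega)
    have hiff : ((k : ℤ) - (s p : ℤ) = (t q : ℤ)) ↔ (S p + T q = k) := by omega
    simp only [mul_ite, mul_zero]
    rw [if_congr hiff (by rw [← pow_add]) rfl]
  rw [key2, hXsplit, hRB, hRC, hg1, hRD]
  ring
end

section
/- Let a be a skew-symmetric binary sequence of odd length n = 2m−1. Then R_k(a) = C_k(a) for every even k with 2 ≤ k ≤ n−1, and R_k(a) = −(C_{k−1}(a) + C_{k+1}(a))/2 for every odd k with 1 ≤ k ≤ n−1, where C_n(a) := 0. -/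
lemma sq_one (a : ℕ → ℤ) (n : ℕ) (hbin : ∀ i, 1 ≤ i → i ≤ n → a i = 1 ∨ a i = -1)
    {i : ℕ} (h1 : 1 ≤ i) (h2 : i ≤ n) : a i * a i = 1 := by
  rcases hbin i h1 h2 with h | h <;> rw [h] <;> ring

lemma pairprod_le (m n : ℕ) (hm : 1 ≤ m) (hnm : n = 2 * m - 1) (a : ℕ → ℤ)
    (hbin : ∀ i, 1 ≤ i → i ≤ n → a i = 1 ∨ a i = -1)
    (hskew : ∀ i, 1 ≤ i → i ≤ m - 1 → a (m - i) = (-1) ^ i * a (m + i))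
    (p q : ℕ) (hp : 1 ≤ p) (hpm : p ≤ m) (hq : p + q = 2 * m) :
    a p * a q = (-1) ^ (m + p) := by
  rcases eq_or_lt_of_le hpm with heq | hlt
  · have hq' : q = p := by omega
    rw [hq']
    rw [sq_one a n hbin hp (by omega)]
    rw [show m + p = 2 * p by omega, pow_mul]
    simp
  · have hi1 : 1 ≤ m - p := by omega
    have hi2 : m - p ≤ m - 1 := by omega
    have hs := hskew (m - p) hi1 hi2
    have e1 : m - (m - p) = p := by omega
    have e2 : m + (m - p) = q := by omega
    rw [e1, e2] at hs
    rw [hs, mul_assoc, sq_one a n hbin (by omega : 1 ≤ q) (by omega : q ≤ n), mul_one]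
    have : m + p = (m - p) + 2 * p := by omega
    rw [this, pow_add, pow_mul]
    simp

lemma pairprod (m n : ℕ) (hm : 1 ≤ m) (hnm : n = 2 * m - 1) (a : ℕ → ℤ)
    (hbin : ∀ i, 1 ≤ i → i ≤ n → a i = 1 ∨ a i = -1)
    (hskew : ∀ i, 1 ≤ i → i ≤ m - 1 → a (m - i) = (-1) ^ i * a (m + i))
    (p q : ℕ) (hp : 1 ≤ p) (hq1 : 1 ≤ q) (hq : p + q = 2 * m) :
    a p * a q = (-1) ^ (m + p) := by
  rcases le_total p m with h | h
  · exact pairprod_le m n hm hnm a hbin hskew p q hp h hq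
  · have := pairprod_le m n hm hnm a hbin hskew q p hq1 (by omega) (by omega)
    rw [mul_comm] at this
    rw [this]
    have : m + p = (m + q) + 2 * (p - m) := by omega
    rw [this, pow_add (-1 : ℤ) (m + q), pow_mul]
    simp

lemma Codd (m n : ℕ) (hm : 1 ≤ m) (hnm : n = 2 * m - 1) (a : ℕ → ℤ)
    (hbin : ∀ i, 1 ≤ i → i ≤ n → a i = 1 ∨ a i = -1)
    (hskew : ∀ i, 1 ≤ i → i ≤ m - 1 → a (m - i) = (-1) ^ i * a (m + i))
    (k : ℕ) (hk : k ≤ n) (hodd : Odd k) : aperCorr a n k = 0 := by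
  obtain ⟨t, ht⟩ := hodd
  unfold aperCorr
  refine Finset.sum_involution (fun i _ => n + 1 - k - i) (fun i hi => ?_) ?_ ?_ ?_
  · simp only [Finset.mem_Icc] at hi
    obtain ⟨hi1, hi2⟩ := hi
    set i' := n + 1 - k - i with hi'
    have hA : i' + (i + k) = 2 * m := by omega
    have hB : i + (i' + k) = 2 * m := by omega
    have h1 := pairprod m n hm hnm a hbin hskew i' (i + k) (by omega) (by omega) hA
    have h2 := pairprod m n hm hnm a hbin hskew i (i' + k) (by omega) (by omega) hB
    have hsq1 : a i * a i = 1 := sq_one a n hbin (by omega) (by omega)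
    have hsq2 : a (i + k) * a (i + k) = 1 := sq_one a n hbin (by omega) (by omega)
    have key : a i' * a (i' + k) * ((a i * a i) * (a (i + k) * a (i + k)))
        = (a i' * a (i + k)) * (a i * a (i' + k)) * (a i * a (i + k)) := by ring
    rw [hsq1, hsq2, h1, h2, mul_one, mul_one] at key
    have hsign : ((-1 : ℤ) ^ (m + i')) * ((-1) ^ (m + i)) = -1 := by
      rw [← pow_add]
      have : (m + i') + (m + i) = 2 * m + (n + 1 - k) := by omega
      rw [this]
      have hodd : Odd (2 * m + (n + 1 - k)) := ⟨2 * m - t - 1, by omega⟩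
      rw [hodd.neg_one_pow]
    rw [key, hsign]
    ring
  · intro i hi hne
    simp only [Finset.mem_Icc] at hi
    show n + 1 - k - i ≠ i
    omega
  · intro i hi
    simp only [Finset.mem_Icc] at hi
    show n + 1 - k - i ∈ Finset.Icc 1 (n - k)
    simp only [Finset.mem_Icc]
    omega
  · intro i hi
    simp only [Finset.mem_Icc] at hi
    show n + 1 - k - (n + 1 - k - i) = i
    omega

lemma shiftSum (f : ℕ → ℤ) (B : ℕ) :
    ∑ i ∈ Finset.Icc 1 (B + 1), f (i - 1) = ∑ j ∈ Finset.Icc 0 B, f j := by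
  refine Finset.sum_nbij' (fun i => i - 1) (fun j => j + 1) ?_ ?_ ?_ ?_ ?_ <;>
    intro x hx <;> simp only [Finset.mem_Icc] at hx ⊢ <;> omega

lemma key_id (n : ℕ) (a : ℕ → ℤ)
    (hbin : ∀ i, 1 ≤ i → i ≤ n → a i = 1 ∨ a i = -1)
    (h0 : a 0 = 0) (htop : a (n + 1) = 0)
    (k : ℕ) (hk1 : 1 ≤ k) (hk2 : k ≤ n - 1) :
    2 * runVec a n k
      = 2 * aperCorr a n k - aperCorr a n (k - 1) - aperCorr a n (k + 1) := by
  have hn : 2 ≤ n := by omega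
  have hpt : ∀ i ∈ Finset.Icc 1 (n + 1 - k),
      (2 : ℤ) * (if a (i - 1) ≠ a i ∧ a (i + k - 1) ≠ a (i + k) then
        (if 1 < i ∧ i + k < n + 1 then 2 else 1) * (a i * a (i + k - 1)) else 0)
      = (a i - a (i - 1)) * (a (i + k - 1) - a (i + k)) := by
    intro i hi
    simp only [Finset.mem_Icc] at hi
    obtain ⟨hi1, hi2⟩ := hi
    by_cases hcond : a (i - 1) ≠ a i ∧ a (i + k - 1) ≠ a (i + k)
    · rw [if_pos hcond]
      obtain ⟨hc1, hc2⟩ := hcond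
      have hL : a i - a (i - 1) = (if 1 < i then 2 else 1) * a i := by
        by_cases h1 : 1 < i
        · rw [if_pos h1]
          rcases hbin (i - 1) (by omega) (by omega) with h | h <;>
            rcases hbin i (by omega) (by omega) with h' | h' <;>
            rw [h, h'] <;> rw [h, h'] at hc1 <;> first | (exact absurd rfl hc1) | ring
        · have hie : i = 1 := by omega
          subst hie
          rw [if_neg h1]
          simp [h0]
      have hR : a (i + k - 1) - a (i + k) = (if i + k < n + 1 then 2 else 1) * a (i + k - 1) := by
        by_cases h2 : i + k < n + 1
        · rw [if_pos h2]
          rcases hbin (i + k - 1) (by omega) (by omega) with h | h <;>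
            rcases hbin (i + k) (by omega) (by omega) with h' | h' <;>
            rw [h, h'] <;> rw [h, h'] at hc2 <;> first | (exact absurd rfl hc2) | ring
        · rw [if_neg h2]
          rw [show i + k = n + 1 by omega, htop]
          ring
      rw [hL, hR]
      by_cases hA : 1 < i <;> by_cases hB : i + k < n + 1
      · rw [if_pos (And.intro hA hB), if_pos hA, if_pos hB]; ring
      · rw [if_neg (by tauto), if_pos hA, if_neg hB]; ring
      · rw [if_neg (by tauto), if_neg hA, if_pos hB]; ring
      · exfalso; omega
    · rw [if_neg hcond]
      rcases not_and_or.mp hcond with h | h <;> push_neg at h <;> rw [h] <;> ring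
  unfold runVec
  rw [mul_neg, Finset.mul_sum, Finset.sum_congr rfl hpt]
  have expand : ∀ i ∈ Finset.Icc 1 (n + 1 - k),
      (a i - a (i - 1)) * (a (i + k - 1) - a (i + k))
      = (a i * a (i + k - 1) + a (i - 1) * a (i + k))
        - (a (i - 1) * a (i + k - 1) + a i * a (i + k)) := by
    intro i _; ring
  rw [Finset.sum_congr rfl expand, Finset.sum_sub_distrib, Finset.sum_add_distrib,
    Finset.sum_add_distrib]
  -- E1
  have E1 : ∑ i ∈ Finset.Icc 1 (n + 1 - k), a i * a (i + k - 1) = aperCorr a n (k - 1) := by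
    unfold aperCorr
    rw [show n - (k - 1) = n + 1 - k by omega]
    refine Finset.sum_congr rfl fun i _ => ?_
    rw [show i + (k - 1) = i + k - 1 by omega]
  -- E2
  have E2 : ∑ i ∈ Finset.Icc 1 (n + 1 - k), a (i - 1) * a (i + k - 1) = aperCorr a n k := by
    have h1 : ∀ i ∈ Finset.Icc 1 (n + 1 - k),
        a (i - 1) * a (i + k - 1) = a (i - 1) * a ((i - 1) + k) := by
      intro i hi
      simp only [Finset.mem_Icc] at hi
      rw [show (i - 1) + k = i + k - 1 by omega]
    rw [Finset.sum_congr rfl h1, show n + 1 - k = (n - k) + 1 by omega,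
      shiftSum (fun j => a j * a (j + k)) (n - k),
      show Finset.Icc 0 (n - k) = insert 0 (Finset.Icc 1 (n - k)) by
        ext x; simp only [Finset.mem_Icc, Finset.mem_insert]; omega,
      Finset.sum_insert (by simp)]
    simp [h0, aperCorr]
  -- E3
  have E3 : ∑ i ∈ Finset.Icc 1 (n + 1 - k), a i * a (i + k) = aperCorr a n k := by
    rw [show n + 1 - k = (n - k) + 1 by omega,
      Finset.sum_Icc_succ_top (by omega) (fun i => a i * a (i + k)),
      show (n - k) + 1 + k = n + 1 by omega, htop]
    simp [aperCorr]
  -- E4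
  have E4 : ∑ i ∈ Finset.Icc 1 (n + 1 - k), a (i - 1) * a (i + k) = aperCorr a n (k + 1) := by
    have h1 : ∀ i ∈ Finset.Icc 1 (n + 1 - k),
        a (i - 1) * a (i + k) = a (i - 1) * a ((i - 1) + (k + 1)) := by
      intro i hi
      simp only [Finset.mem_Icc] at hi
      rw [show (i - 1) + (k + 1) = i + k by omega]
    rw [Finset.sum_congr rfl h1, show n + 1 - k = (n - k) + 1 by omega,
      shiftSum (fun j => a j * a (j + (k + 1))) (n - k),
      show Finset.Icc 0 (n - k) = insert 0 (Finset.Icc 1 (n - k)) by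
        ext x; simp only [Finset.mem_Icc, Finset.mem_insert]; omega,
      Finset.sum_insert (by simp), h0,
      show n - k = (n - (k + 1)) + 1 by omega,
      Finset.sum_Icc_succ_top (by omega) (fun j => a j * a (j + (k + 1))),
      show (n - (k + 1)) + 1 + (k + 1) = n + 1 by omega, htop]
    simp [aperCorr]
  rw [E1, E2, E3, E4]
  ring

theorem stmt_15 (m n : ℕ) (hm : 1 ≤ m) (hnm : n = 2 * m - 1) (a : ℕ → ℤ)
    (hbin : ∀ i, 1 ≤ i → i ≤ n → a i = 1 ∨ a i = -1)
    (h0 : a 0 = 0) (htop : a (n + 1) = 0)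
    (hskew : ∀ i, 1 ≤ i → i ≤ m - 1 → a (m - i) = (-1) ^ i * a (m + i)) :
    (∀ k, 2 ≤ k → k ≤ n - 1 → Even k → runVec a n k = aperCorr a n k) ∧
    (∀ k, 1 ≤ k → k ≤ n - 1 → Odd k →
      runVec a n k = (-(aperCorr a n (k - 1) + aperCorr a n (k + 1))) / 2) := by
  constructor
  · intro k hk2 hkn hkeven
    obtain ⟨t, ht⟩ := hkeven
    have hkey := key_id n a hbin h0 htop k (by omega) hkn
    have hC1 : aperCorr a n (k - 1) = 0 :=
      Codd m n hm hnm a hbin hskew (k - 1) (by omega) ⟨t - 1, by omega⟩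
    have hC2 : aperCorr a n (k + 1) = 0 :=
      Codd m n hm hnm a hbin hskew (k + 1) (by omega) ⟨t, by omega⟩
    linarith
  · intro k hk1 hkn hkodd
    have hkey := key_id n a hbin h0 htop k hk1 hkn
    have hCk : aperCorr a n k = 0 :=
      Codd m n hm hnm a hbin hskew k (by omega) hkodd
    have h2 : -(aperCorr a n (k - 1) + aperCorr a n (k + 1)) = 2 * runVec a n k := by
      linarith
    rw [h2, Int.mul_ediv_cancel_left _ (by norm_num)]
end

section
/- A binary sequence a of odd length n = 2m−1 is skew-symmetric if and only if its run length encoding r is balanced, i.e. if and only if S ∪ T = {1,2,…,n−1} and S ∩ T = ∅. -/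
theorem stmt_16 (m n γ : ℕ) (hm : 1 ≤ m) (hnm : n = 2 * m - 1) (a : ℕ → ℤ)
    (hbin : ∀ i, 1 ≤ i → i ≤ n → a i = 1 ∨ a i = -1)
    (h0 : a 0 = 0)
    -- `I j` (for `1 ≤ j ≤ γ+1`) are the starting positions of the runs of `a`:
    (I : ℕ → ℕ) (hI1 : I 1 = 1) (hIlast : I (γ + 1) = n + 1)
    (hImono : ∀ j, 1 ≤ j → j ≤ γ → I j < I (j + 1))
    (hchange : ∀ j, 2 ≤ j → j ≤ γ → a (I j - 1) ≠ a (I j))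
    (hconst : ∀ j, 1 ≤ j → j ≤ γ → ∀ p, I j ≤ p → p < I (j + 1) → a p = a (I j))
    -- the run length encoding `r` and the partial sums `s`, `t`:
    (r : ℕ → ℕ) (hr : ∀ j, 1 ≤ j → j ≤ γ → r j = I (j + 1) - I j)
    (s : ℕ → ℕ) (hs : ∀ j, 1 ≤ j → j ≤ γ → s j = ∑ u ∈ Finset.Icc 1 j, r u)
    (t : ℕ → ℕ) (ht : ∀ j, 1 ≤ j → j ≤ γ → t j = ∑ u ∈ Finset.Icc (γ - j + 1) γ, r u)
    -- the sets `S` and `T`: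
    (S T : Finset ℕ)
    (hS : S = (Finset.Icc 1 (γ - 1)).image s)
    (hT : T = (Finset.Icc 1 (γ - 1)).image t) :
    -- `a` is skew-symmetric iff its run length encoding is balanced:
    (∀ i, 1 ≤ i → i ≤ m - 1 → a (m - i) = (-1) ^ i * a (m + i)) ↔
      (S ∪ T = Finset.Icc 1 (n - 1) ∧ S ∩ T = ∅) := by
  have hn1 : 1 ≤ n := by omega
  -- γ ≥ 1
  have hγ1 : 1 ≤ γ := by
    by_contra h
    interval_cases γ
    · rw [hI1] at hIlast; omega
  -- monotonicity of I on [1, γ+1]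
  have hmono : ∀ j j', 1 ≤ j → j < j' → j' ≤ γ + 1 → I j < I j' := by
    intro j j' hj hlt hub
    induction j' with
    | zero => omega
    | succ k ih =>
      rcases Nat.lt_or_ge j k with h | h
      · exact lt_trans (ih h (by omega)) (hImono k (by omega) (by omega))
      · have : j = k := by omega
        subst this
        exact hImono j hj (by omega)
  have hmono' : ∀ j j', 1 ≤ j → j ≤ j' → j' ≤ γ + 1 → I j ≤ I j' := by
    intro j j' hj hle hub
    rcases Nat.eq_or_lt_of_le hle with h | h
    · exact le_of_eq (congrArg I h)
    · exact le_of_lt (hmono j j' hj h hub)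
  have hIub : ∀ j, 1 ≤ j → j ≤ γ + 1 → I j ≤ n + 1 := by
    intro j hj hub
    calc I j ≤ I (γ + 1) := hmono' j (γ + 1) hj hub le_rfl
    _ = n + 1 := hIlast
  have hIlb : ∀ j, 1 ≤ j → j ≤ γ + 1 → 1 ≤ I j := by
    intro j hj hub
    calc 1 = I 1 := hI1.symm
    _ ≤ I j := hmono' 1 j le_rfl hj hub
  -- closed form for s
  have hs' : ∀ j, 1 ≤ j → j ≤ γ → s j = I (j + 1) - 1 := by
    intro j hj hub
    induction j with
    | zero => omega
    | succ k ih =>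
      rcases Nat.eq_or_lt_of_le hj with h | h
      · rw [← h, hs 1 le_rfl (by omega)]
        simp [hr 1 le_rfl (by omega), hI1]
      · have hk1 : 1 ≤ k := by omega
        have hsum : s (k + 1) = s k + r (k + 1) := by
          rw [hs (k+1) (by omega) hub, hs k hk1 (by omega),
            Finset.sum_Icc_succ_top (by omega : 1 ≤ k + 1)]
        have h1 : I (k + 1) ≤ I (k + 1 + 1) := hmono' _ _ (by omega) (by omega) (by omega)
        have h2 : 1 ≤ I (k + 1) := hIlb _ (by omega) (by omega)
        rw [hsum, ih hk1 (by omega), hr (k+1) (by omega) hub]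
        omega
  -- closed form for t
  have ht' : ∀ j, 1 ≤ j → j ≤ γ → t j = n + 1 - I (γ + 1 - j) := by
    intro j hj hub
    induction j with
    | zero => omega
    | succ k ih =>
      rcases Nat.eq_or_lt_of_le hj with h | h
      · rw [← h, ht 1 le_rfl (by omega)]
        have he : Finset.Icc (γ - 1 + 1) γ = {γ} := by
          ext x; simp; omega
        have he2 : γ + 1 - 1 = γ := by omega
        rw [he, Finset.sum_singleton, hr γ hγ1 le_rfl, hIlast, he2]
      · have hk1 : 1 ≤ k := by omega
        have hins : Finset.Icc (γ - (k+1) + 1) γ = insert (γ - k) (Finset.Icc (γ - k + 1) γ) := by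
          ext x; simp; omega
        have hsum : t (k + 1) = r (γ - k) + t k := by
          rw [ht (k+1) (by omega) hub, ht k hk1 (by omega), hins,
            Finset.sum_insert (by simp)]
        have e1 : γ + 1 - k = γ - k + 1 := by omega
        have h1 : I (γ - k) ≤ I (γ - k + 1) := hmono' _ _ (by omega) (by omega) (by omega)
        have h2 : I (γ - k + 1) ≤ n + 1 := hIub _ (by omega) (by omega)
        rw [hsum, ih hk1 (by omega), hr (γ - k) (by omega) (by omega), e1]
        have : γ + 1 - (k + 1) = γ - k := by omega
        rw [this]
        omega
  -- every position lies in some run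
  have hrun : ∀ p, 1 ≤ p → p ≤ n → ∃ j, 1 ≤ j ∧ j ≤ γ ∧ I j ≤ p ∧ p < I (j + 1) := by
    intro p hp1 hpn
    classical
    set F := (Finset.Icc 1 γ).filter (fun j => I j ≤ p) with hF
    have hne : F.Nonempty := ⟨1, by simp [hF, hI1, hγ1, hp1]⟩
    obtain ⟨j0, hj0, hmax⟩ := F.exists_max_image id hne
    simp only [hF, Finset.mem_filter, Finset.mem_Icc] at hj0
    refine ⟨j0, hj0.1.1, hj0.1.2, hj0.2, ?_⟩
    by_contra hlt
    push_neg at hlt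
    rcases Nat.eq_or_lt_of_le hj0.1.2 with h | h
    · rw [h, hIlast] at hlt; omega
    · have : j0 + 1 ∈ F := by
        simp only [hF, Finset.mem_filter, Finset.mem_Icc]
        exact ⟨⟨by omega, by omega⟩, hlt⟩
      have := hmax (j0 + 1) this
      simp at this
  -- if a changes at k then k+1 starts a run
  have hstart : ∀ k, 1 ≤ k → k ≤ n - 1 → a k ≠ a (k + 1) → ∃ j, 2 ≤ j ∧ j ≤ γ ∧ I j = k + 1 := by
    intro k hk1 hkn hne
    obtain ⟨j, hj1, hjγ, hle, hlt⟩ := hrun (k + 1) (by omega) (by omega)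
    refine ⟨j, ?_, hjγ, ?_⟩
    · rcases Nat.eq_or_lt_of_le hle with h | h
      · by_contra hj2
        have : j = 1 := by omega
        rw [this, hI1] at h; omega
      · exfalso
        have e1 : a k = a (I j) := hconst j hj1 hjγ k (by omega) (by omega)
        have e2 : a (k + 1) = a (I j) := hconst j hj1 hjγ (k + 1) hle hlt
        exact hne (e1.trans e2.symm)
    · rcases Nat.eq_or_lt_of_le hle with h | h
      · omega
      · exfalso
        have e1 : a k = a (I j) := hconst j hj1 hjγ k (by omega) (by omega)
        have e2 : a (k + 1) = a (I j) := hconst j hj1 hjγ (k + 1) hle hlt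
        exact hne (e1.trans e2.symm)
  -- membership in S
  have hSmem : ∀ k, 1 ≤ k → k ≤ n - 1 → (k ∈ S ↔ a k ≠ a (k + 1)) := by
    intro k hk1 hkn
    constructor
    · intro hk
      rw [hS, Finset.mem_image] at hk
      obtain ⟨j, hj, hsj⟩ := hk
      rw [Finset.mem_Icc] at hj
      have hj2 : j + 1 ≤ γ := by omega
      rw [hs' j hj.1 (by omega)] at hsj
      have hlb : 1 ≤ I (j + 1) := hIlb _ (by omega) (by omega)
      have hch := hchange (j + 1) (by omega) hj2
      have : I (j + 1) - 1 = k := hsj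
      have hk1' : I (j + 1) = k + 1 := by omega
      rw [hk1'] at hch
      simpa using hch
    · intro hne
      obtain ⟨j, hj2, hjγ, hIj⟩ := hstart k hk1 hkn hne
      rw [hS, Finset.mem_image]
      refine ⟨j - 1, ?_, ?_⟩
      · rw [Finset.mem_Icc]; omega
      · have e : j - 1 + 1 = j := by omega
        rw [hs' (j - 1) (by omega) (by omega), e, hIj]
        omega
  -- membership in T
  have hTmem : ∀ k, 1 ≤ k → k ≤ n - 1 → (k ∈ T ↔ n - k ∈ S) := by
    intro k hk1 hkn
    have hSk : ∀ x, x ∈ S ↔ ∃ j, 2 ≤ j ∧ j ≤ γ ∧ I j - 1 = x := by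
      intro x
      rw [hS, Finset.mem_image]
      constructor
      · rintro ⟨j, hj, hsj⟩
        rw [Finset.mem_Icc] at hj
        exact ⟨j + 1, by omega, by omega, by rw [← hs' j hj.1 (by omega)]; exact hsj⟩
      · rintro ⟨j, hj2, hjγ, hIj⟩
        refine ⟨j - 1, by rw [Finset.mem_Icc]; omega, ?_⟩
        have e : j - 1 + 1 = j := by omega
        rw [hs' (j - 1) (by omega) (by omega), e, hIj]
    have hTk : ∀ x, x ∈ T ↔ ∃ j, 2 ≤ j ∧ j ≤ γ ∧ n + 1 - I j = x := by
      intro x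
      rw [hT, Finset.mem_image]
      constructor
      · rintro ⟨j, hj, htj⟩
        rw [Finset.mem_Icc] at hj
        rw [ht' j hj.1 (by omega)] at htj
        exact ⟨γ + 1 - j, by omega, by omega, htj⟩
      · rintro ⟨j, hj2, hjγ, hIj⟩
        refine ⟨γ + 1 - j, by rw [Finset.mem_Icc]; omega, ?_⟩
        rw [ht' (γ + 1 - j) (by omega) (by omega)]
        have e : γ + 1 - (γ + 1 - j) = j := by omega
        rw [e, hIj]
    rw [hTk, hSk]
    constructor
    · rintro ⟨j, hj2, hjγ, hIj⟩
      have hb1 : 2 ≤ I j := by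
        have := hmono 1 j le_rfl (by omega) (by omega); rw [hI1] at this; omega
      have hb2 : I j ≤ n := by
        have := hmono j (γ + 1) (by omega) (by omega) le_rfl; rw [hIlast] at this; omega
      exact ⟨j, hj2, hjγ, by omega⟩
    · rintro ⟨j, hj2, hjγ, hIj⟩
      have hb1 : 2 ≤ I j := by
        have := hmono 1 j le_rfl (by omega) (by omega); rw [hI1] at this; omega
      have hb2 : I j ≤ n := by
        have := hmono j (γ + 1) (by omega) (by omega) le_rfl; rw [hIlast] at this; omega
      exact ⟨j, hj2, hjγ, by omega⟩
  -- S and T are contained in Icc 1 (n-1)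
  have hSsub : ∀ k ∈ S, k ∈ Finset.Icc 1 (n - 1) := by
    intro k hk
    rw [hS, Finset.mem_image] at hk
    obtain ⟨j, hj, hsj⟩ := hk
    rw [Finset.mem_Icc] at hj
    rw [hs' j hj.1 (by omega)] at hsj
    have hb1 : 1 < I (j + 1) := by
      have := hmono 1 (j + 1) le_rfl (by omega) (by omega); omega
    have hb2 : I (j + 1) < n + 1 := by
      have := hmono (j + 1) (γ + 1) (by omega) (by omega) le_rfl; omega
    rw [Finset.mem_Icc]; omega
  have hTsub : ∀ k ∈ T, k ∈ Finset.Icc 1 (n - 1) := by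
    intro k hk
    rw [hT, Finset.mem_image] at hk
    obtain ⟨j, hj, htj⟩ := hk
    rw [Finset.mem_Icc] at hj
    rw [ht' j hj.1 (by omega)] at htj
    have hb1 : 1 < I (γ + 1 - j) := by
      have := hmono 1 (γ + 1 - j) le_rfl (by omega) (by omega); omega
    have hb2 : I (γ + 1 - j) < n + 1 := by
      have := hmono (γ + 1 - j) (γ + 1) (by omega) (by omega) le_rfl; omega
    rw [Finset.mem_Icc]; omega
  -- balancedness as a pointwise condition
  have hbal : (S ∪ T = Finset.Icc 1 (n - 1) ∧ S ∩ T = ∅) ↔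
      (∀ k, 1 ≤ k → k ≤ n - 1 → (k ∈ S ↔ k ∉ T)) := by
    constructor
    · rintro ⟨hu, hd⟩ k hk1 hkn
      constructor
      · intro hkS hkT
        have : k ∈ S ∩ T := Finset.mem_inter.2 ⟨hkS, hkT⟩
        rw [hd] at this; simp at this
      · intro hkT
        have : k ∈ S ∪ T := by rw [hu, Finset.mem_Icc]; omega
        rcases Finset.mem_union.1 this with h | h
        · exact h
        · exact absurd h hkT
    · intro h
      constructor
      · apply Finset.Subset.antisymm
        · intro k hk
          rcases Finset.mem_union.1 hk with h' | h'
          exacts [hSsub _ h', hTsub _ h']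
        · intro k hk
          rw [Finset.mem_Icc] at hk
          by_cases hkT : k ∈ T
          · exact Finset.mem_union_right _ hkT
          · exact Finset.mem_union_left _ ((h k hk.1 hk.2).2 hkT)
      · apply Finset.eq_empty_iff_forall_notMem.2
        intro k hk
        obtain ⟨hkS, hkT⟩ := Finset.mem_inter.1 hk
        have hb := Finset.mem_Icc.1 (hSsub _ hkS)
        exact (h k hb.1 hb.2).1 hkS hkT
  -- pointwise bridge to the sign condition
  have hQiff : ∀ k, 1 ≤ k → k ≤ n - 1 →
      (((a k ≠ a (k + 1)) ↔ a (n - k) = a (n - k + 1)) ↔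
        a k * a (k + 1) = -(a (n - k) * a (n - k + 1))) := by
    intro k hk1 hkn
    obtain h1 | h1 := hbin k (by omega) (by omega) <;>
    obtain h2 | h2 := hbin (k + 1) (by omega) (by omega) <;>
    obtain h3 | h3 := hbin (n - k) (by omega) (by omega) <;>
    obtain h4 | h4 := hbin (n - k + 1) (by omega) (by omega) <;>
    rw [h1, h2, h3, h4] <;> norm_num
  have hpt : ∀ k, 1 ≤ k → k ≤ n - 1 →
      ((k ∈ S ↔ k ∉ T) ↔ a k * a (k + 1) = -(a (n - k) * a (n - k + 1))) := by
    intro k hk1 hkn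
    rw [hSmem k hk1 hkn, hTmem k hk1 hkn, hSmem (n - k) (by omega) (by omega), not_ne_iff]
    exact hQiff k hk1 hkn
  -- the main combinatorial equivalence
  have main : (∀ i, 1 ≤ i → i ≤ m - 1 → a (m - i) = (-1) ^ i * a (m + i)) ↔
      (∀ k, 1 ≤ k → k ≤ n - 1 → a k * a (k + 1) = -(a (n - k) * a (n - k + 1))) := by
    constructor
    · -- skew-symmetric implies the sign condition
      intro hL
      have hdir : ∀ k, 1 ≤ k → k ≤ m - 1 →
          a k * a (k + 1) = -(a (n - k) * a (n - k + 1)) := by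
        intro k hk1 hkm
        have ha : a k = (-1) ^ (m - k) * a (n - k + 1) := by
          have h := hL (m - k) (by omega) (by omega)
          rw [show m - (m - k) = k from by omega,
            show m + (m - k) = n - k + 1 from by omega] at h
          exact h
        have hb : a (k + 1) = (-1) ^ (m - k - 1) * a (n - k) := by
          rcases Nat.eq_or_lt_of_le hkm with h' | h'
          · rw [show m - k - 1 = 0 from by omega, show k + 1 = n - k from by omega]
            simp
          · have h := hL (m - k - 1) (by omega) (by omega)
            rw [show m - (m - k - 1) = k + 1 from by omega,
              show m + (m - k - 1) = n - k from by omega] at h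
            exact h
        obtain ⟨e, he⟩ : ∃ e, m - k = e + 1 := ⟨m - k - 1, by omega⟩
        rw [show m - k - 1 = e from by omega] at hb
        rw [he] at ha
        rw [ha, hb, pow_succ]
        rcases Nat.even_or_odd e with hp | hp
        · rw [hp.neg_one_pow]; ring
        · rw [hp.neg_one_pow]; ring
      intro k hk1 hkn
      rcases le_or_gt k (m - 1) with hkm | hkm
      · exact hdir k hk1 hkm
      · have h := hdir (n - k) (by omega) (by omega)
        rw [show n - (n - k) = k from by omega] at h
        linarith
    · -- the sign condition implies skew-symmetry
      intro hQ i hi1 him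
      induction i with
      | zero => omega
      | succ i ih =>
        rcases Nat.eq_or_lt_of_le hi1 with h1 | h1
        · -- base case i + 1 = 1
          have h0' : i = 0 := by omega
          subst h0'
          have hq := hQ (m - 1) (by omega) (by omega)
          rw [show m - 1 + 1 = m from by omega, show n - (m - 1) = m from by omega] at hq
          norm_num
          obtain hv | hv := hbin m (by omega) (by omega) <;> rw [hv] at hq <;> nlinarith [hq]
        · -- inductive step
          have hih := ih (by omega) (by omega)
          have hq := hQ (m - i - 1) (by omega) (by omega)
          rw [show m - i - 1 + 1 = m - i from by omega,
            show n - (m - i - 1) = m + i from by omega] at hq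
          rw [hih] at hq
          rw [show m - (i + 1) = m - i - 1 from by omega,
            show m + (i + 1) = m + i + 1 from by omega, pow_succ]
          obtain hv | hv := hbin (m + i) (by omega) (by omega) <;> rw [hv] at hq <;>
            rcases Nat.even_or_odd i with hp | hp <;>
            rw [hp.neg_one_pow] at hq ⊢ <;> linarith
  rw [hbal]
  constructor
  · intro hL k hk1 hkn
    exact (hpt k hk1 hkn).2 (main.1 hL k hk1 hkn)
  · intro h
    exact main.2 (fun k hk1 hkn => (hpt k hk1 hkn).1 (h k hk1 hkn))
end

section
/- Let a be a binary sequence of length n which is not constant and satisfies a_1 ≠ a_n. Then for every k with 1 ≤ k ≤ n−1, 2·R̃_k(a) = R_k(a) + R_{n−k}(a). -/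
/-- The length of the p-substring `r(i,j)` of a run length encoding with `γ` runs. -/
def plen (γ i j : ℕ) : ℕ := if i < j then j - i else γ + j - i

/-- The sum of the entries of the p-substring `r(i,j)`. -/
def psum (r : ℕ → ℕ) (γ i j : ℕ) : ℕ :=
  if i < j then ∑ u ∈ Finset.Icc i (j - 1), r u
  else (∑ u ∈ Finset.Icc i γ, r u) + ∑ u ∈ Finset.Icc 1 (j - 1), r u

/-- The `k`-th component of the periodic run vector: the sum of `(-1)^{|u|}` over
all p-substrings `u = r(i,j)` (`1 ≤ i,j ≤ γ`, `i ≠ j`) of `r` with sum `k`. -/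
def runVecPer (r : ℕ → ℕ) (γ k : ℕ) : ℤ :=
  ∑ p ∈ (Finset.Icc 1 γ ×ˢ Finset.Icc 1 γ).filter
      (fun p => p.1 ≠ p.2 ∧ psum r γ p.1 p.2 = k),
    (-1 : ℤ) ^ plen γ p.1 p.2

lemma npow_sub_eq {a b : ℕ} (h : b ≤ a) : ((-1:ℤ))^(a-b) = (-1:ℤ)^(a+b) := by
  have : a + b = (a - b) + 2*b := by omega
  rw [this, pow_add, pow_mul]
  simp

/-- Sum over run-block index pairs of weighted signs (pair version of `runVec`). -/
def Tm (I : ℕ → ℕ) (γ m : ℕ) : ℤ :=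
  ∑ p ∈ Finset.Icc 1 (γ+1) ×ˢ Finset.Icc 1 (γ+1),
    if p.1 < p.2 ∧ I p.2 = I p.1 + m then
      (if 2 ≤ p.1 ∧ p.2 ≤ γ then 2 else 1) * (-1:ℤ)^(p.1+p.2) else 0

/-- Sum over non-wrapping p-substrings of signs. -/
def Am (I : ℕ → ℕ) (γ m : ℕ) : ℤ :=
  ∑ p ∈ Finset.Icc 1 (γ+1) ×ˢ Finset.Icc 1 (γ+1),
    if p.1 < p.2 ∧ p.2 ≤ γ ∧ I p.2 = I p.1 + m then (-1:ℤ)^(p.1+p.2) else 0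

/-- Boundary correction term. -/
def Em (I : ℕ → ℕ) (γ m : ℕ) : ℤ :=
  ∑ t ∈ Finset.Icc 1 (γ+1),
    if 1 < t ∧ t ≤ γ ∧ I t = 1 + m then (-1:ℤ)^(1+t) else 0

lemma aux_TA (n γ m : ℕ) (I : ℕ → ℕ) (hn : 1 ≤ n) (hm1 : 1 ≤ m) (hmn : m ≤ n - 1)
    (hγeven : Even γ) (hI1 : I 1 = 1) (hIlast : I (γ+1) = n+1)
    (hIpos : ∀ s, 1 ≤ s → s ≤ γ+1 → 1 ≤ I s) :
    Tm I γ m = 2 * Am I γ m - Em I γ m + Em I γ (n - m) := by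
  have key : Tm I γ m =
      2 * Am I γ m
      - (∑ p ∈ Finset.Icc 1 (γ+1) ×ˢ Finset.Icc 1 (γ+1),
          if p.1 = 1 ∧ p.1 < p.2 ∧ p.2 ≤ γ ∧ I p.2 = I p.1 + m then (-1:ℤ)^(p.1+p.2) else 0)
      + (∑ p ∈ Finset.Icc 1 (γ+1) ×ˢ Finset.Icc 1 (γ+1),
          if p.1 < p.2 ∧ p.2 = γ+1 ∧ I p.2 = I p.1 + m then (-1:ℤ)^(p.1+p.2) else 0) := by
    rw [Am, Tm, Finset.mul_sum, ← Finset.sum_sub_distrib, ← Finset.sum_add_distrib]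
    apply Finset.sum_congr rfl
    intro p hp
    simp only [Finset.mem_product, Finset.mem_Icc] at hp
    split_ifs <;> first | ring1 | (exfalso; omega)
  rw [key]
  congr 1
  · congr 1
    rw [Em, Finset.sum_product]
    rw [Finset.sum_eq_single_of_mem 1 (by simp)]
    · apply Finset.sum_congr rfl
      intro t ht
      have : (1 = 1 ∧ 1 < t ∧ t ≤ γ ∧ I t = I 1 + m) ↔ (1 < t ∧ t ≤ γ ∧ I t = 1 + m) := by
        rw [hI1]; tauto
      by_cases h : 1 < t ∧ t ≤ γ ∧ I t = 1 + m
      · rw [if_pos (this.mpr h), if_pos h]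
      · rw [if_neg (fun hc => h (this.mp hc)), if_neg h]
    · intro b _ hb1
      apply Finset.sum_eq_zero
      intro t _
      rw [if_neg (by tauto)]
  · rw [Em, Finset.sum_product]
    have inner : ∀ s ∈ Finset.Icc 1 (γ+1),
        (∑ t ∈ Finset.Icc 1 (γ+1),
          if s < t ∧ t = γ+1 ∧ I t = I s + m then (-1:ℤ)^(s+t) else 0)
        = if 1 < s ∧ s ≤ γ ∧ I s = 1 + (n - m) then (-1:ℤ)^(1+s) else 0 := by
      intro s hs
      simp only [Finset.mem_Icc] at hs
      rw [Finset.sum_eq_single_of_mem (γ+1) (by simp)]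
      · have hIs1 : 1 ≤ I s := hIpos s hs.1 hs.2
        have hcond : (s < γ+1 ∧ γ+1 = γ+1 ∧ I (γ+1) = I s + m) ↔
            (1 < s ∧ s ≤ γ ∧ I s = 1 + (n - m)) := by
          rw [hIlast]
          constructor
          · rintro ⟨h1, -, h3⟩
            have hs1 : s ≠ 1 := by
              intro h; rw [h, hI1] at h3; omega
            exact ⟨by omega, by omega, by omega⟩
          · rintro ⟨h1, h2, h3⟩
            exact ⟨by omega, rfl, by omega⟩
        by_cases h : s < γ+1 ∧ γ+1 = γ+1 ∧ I (γ+1) = I s + m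
        · rw [if_pos h, if_pos (hcond.mp h)]
          have : s + (γ+1) = (1 + s) + γ := by omega
          rw [this, pow_add, Even.neg_one_pow hγeven, mul_one]
        · rw [if_neg h, if_neg (fun hc => h (hcond.mpr hc))]
      · intro b _ hb
        rw [if_neg (by tauto)]
    rw [Finset.sum_congr rfl inner]

lemma aux_Per (r : ℕ → ℕ) (I : ℕ → ℕ) (n γ k : ℕ) (hn : 1 ≤ n) (hk1 : 1 ≤ k) (hk2 : k ≤ n - 1)
    (hγeven : Even γ) (hI1 : I 1 = 1) (hIlast : I (γ+1) = n+1)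
    (hmono : ∀ s t, 1 ≤ s → s < t → t ≤ γ+1 → I s < I t)
    (hIpos : ∀ s, 1 ≤ s → s ≤ γ+1 → 1 ≤ I s)
    (hIub : ∀ s, 1 ≤ s → s ≤ γ+1 → I s ≤ n+1)
    (htel : ∀ t s, 1 ≤ s → s ≤ t → t ≤ γ+1 → (∑ u ∈ Finset.Icc s (t-1), r u) = I t - I s) :
    runVecPer r γ k = Am I γ k + Am I γ (n-k) := by
  rw [runVecPer, Finset.sum_filter]
  have step : ∀ p ∈ Finset.Icc 1 γ ×ˢ Finset.Icc 1 γ,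
      (if p.1 ≠ p.2 ∧ psum r γ p.1 p.2 = k then (-1:ℤ)^(plen γ p.1 p.2) else 0)
      = (if p.1 < p.2 ∧ p.2 ≤ γ ∧ I p.2 = I p.1 + k then (-1:ℤ)^(p.1+p.2) else 0)
        + (if p.2 < p.1 ∧ p.1 ≤ γ ∧ I p.1 = I p.2 + (n-k) then (-1:ℤ)^(p.2+p.1) else 0) := by
    intro p hp
    simp only [Finset.mem_product, Finset.mem_Icc] at hp
    rcases lt_trichotomy p.1 p.2 with h | h | h
    · have hps : psum r γ p.1 p.2 = I p.2 - I p.1 := by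
        rw [psum, if_pos h]
        exact htel p.2 p.1 hp.1.1 (le_of_lt h) (by omega)
      have hpl : plen γ p.1 p.2 = p.2 - p.1 := by rw [plen, if_pos h]
      have hlt : I p.1 < I p.2 := hmono p.1 p.2 hp.1.1 h (by omega)
      rw [hps, hpl]
      by_cases hc : I p.2 = I p.1 + k
      · rw [if_pos ⟨by omega, by omega⟩, if_pos ⟨h, hp.2.2, hc⟩, if_neg (by omega),
          npow_sub_eq (le_of_lt h), Nat.add_comm p.2 p.1]
        ring
      · rw [if_neg (by omega), if_neg (by tauto), if_neg (by omega)]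
        ring
    · rw [if_neg (by omega), if_neg (by omega), if_neg (by omega)]
      ring
    · have hs1 : (∑ u ∈ Finset.Icc p.1 γ, r u) = n + 1 - I p.1 := by
        have := htel (γ+1) p.1 hp.1.1 (by omega) (by omega)
        simpa [hIlast] using this
      have hs2 : (∑ u ∈ Finset.Icc 1 (p.2 - 1), r u) = I p.2 - 1 := by
        have := htel p.2 1 le_rfl hp.2.1 (by omega)
        rwa [hI1] at this
      have hps : psum r γ p.1 p.2 = (n + 1 - I p.1) + (I p.2 - 1) := by
        rw [psum, if_neg (by omega), hs1, hs2]
      have hpl : plen γ p.1 p.2 = γ + p.2 - p.1 := by rw [plen, if_neg (by omega)]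
      have hlt : I p.2 < I p.1 := hmono p.2 p.1 hp.2.1 h (by omega)
      have hub : I p.1 ≤ n + 1 := hIub p.1 hp.1.1 (by omega)
      have hpos : 1 ≤ I p.2 := hIpos p.2 hp.2.1 (by omega)
      rw [hps, hpl]
      by_cases hc : I p.1 = I p.2 + (n - k)
      · rw [if_pos ⟨by omega, by omega⟩, if_neg (by omega), if_pos ⟨h, hp.1.2, hc⟩,
          npow_sub_eq (by omega : p.1 ≤ γ + p.2)]
        have he : γ + p.2 + p.1 = (p.2 + p.1) + γ := by omega
        rw [he, pow_add, Even.neg_one_pow hγeven, mul_one]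
        ring
      · rw [if_neg (by omega), if_neg (by omega), if_neg (by tauto)]
        ring
  rw [Finset.sum_congr rfl step, Finset.sum_add_distrib]
  congr 1
  · apply Finset.sum_subset
    · apply Finset.product_subset_product <;> exact Finset.Icc_subset_Icc le_rfl (by omega)
    · intro p hp hnp
      simp only [Finset.mem_product, Finset.mem_Icc] at hp hnp
      rw [if_neg]
      intro hc
      exact hnp ⟨⟨hp.1.1, by omega⟩, ⟨hp.2.1, hc.2.1⟩⟩
  · have swap : (∑ p ∈ Finset.Icc 1 γ ×ˢ Finset.Icc 1 γ,
        if p.2 < p.1 ∧ p.1 ≤ γ ∧ I p.1 = I p.2 + (n-k) then (-1:ℤ)^(p.2+p.1) else 0)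
        = ∑ p ∈ Finset.Icc 1 γ ×ˢ Finset.Icc 1 γ,
        (if p.1 < p.2 ∧ p.2 ≤ γ ∧ I p.2 = I p.1 + (n-k) then (-1:ℤ)^(p.1+p.2) else 0) := by
      apply Finset.sum_nbij' (i := Prod.swap) (j := Prod.swap)
      · intro p hp
        simp only [Finset.mem_product, Finset.mem_Icc, Prod.fst_swap, Prod.snd_swap] at *
        tauto
      · intro p hp
        simp only [Finset.mem_product, Finset.mem_Icc, Prod.fst_swap, Prod.snd_swap] at *
        tauto
      · intro p _; exact Prod.swap_swap p
      · intro p _; exact Prod.swap_swap p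
      · intro p _; rfl
    rw [swap]
    apply Finset.sum_subset
    · apply Finset.product_subset_product <;> exact Finset.Icc_subset_Icc le_rfl (by omega)
    · intro p hp hnp
      simp only [Finset.mem_product, Finset.mem_Icc] at hp hnp
      rw [if_neg]
      intro hc
      exact hnp ⟨⟨hp.1.1, by omega⟩, ⟨hp.2.1, hc.2.1⟩⟩

lemma aux_T (a : ℕ → ℤ) (I : ℕ → ℕ) (n γ m : ℕ) (hn : 1 ≤ n) (hm1 : 1 ≤ m) (hmn : m ≤ n - 1)
    (hI1 : I 1 = 1) (hIlast : I (γ+1) = n+1)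
    (hIpos : ∀ s, 1 ≤ s → s ≤ γ+1 → 1 ≤ I s)
    (hIub : ∀ s, 1 ≤ s → s ≤ γ+1 → I s ≤ n+1)
    (hmono : ∀ s t, 1 ≤ s → s < t → t ≤ γ+1 → I s < I t)
    (hinj : ∀ s t, 1 ≤ s → s ≤ γ+1 → 1 ≤ t → t ≤ γ+1 → I s = I t → s = t)
    (hbd : ∀ p, 1 ≤ p → p ≤ n+1 → a (p-1) ≠ a p → ∃ j, 1 ≤ j ∧ j ≤ γ+1 ∧ I j = p)
    (hboundary : ∀ j, 1 ≤ j → j ≤ γ+1 → a (I j - 1) ≠ a (I j))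
    (hprod : ∀ s t, 1 ≤ s → s < t → t ≤ γ+1 → a (I s) * a (I t - 1) = -(-1:ℤ)^(s+t)) :
    runVec a n m = Tm I γ m := by
  rw [runVec, Tm, ← Finset.sum_filter, ← Finset.sum_filter, ← Finset.sum_neg_distrib]
  refine (Finset.sum_nbij (fun p : ℕ × ℕ => I p.1) ?_ ?_ ?_ ?_).symm
  · intro p hp
    simp only [Finset.mem_filter, Finset.mem_product, Finset.mem_Icc] at hp ⊢
    obtain ⟨⟨⟨h11, h12⟩, h21, h22⟩, hlt, hIeq⟩ := hp
    have hub : I p.2 ≤ n + 1 := hIub p.2 h21 h22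
    refine ⟨⟨hIpos p.1 h11 h12, by omega⟩, hboundary p.1 h11 h12, ?_⟩
    rw [← hIeq]
    exact hboundary p.2 h21 h22
  · intro p hp q hq h
    simp only [Finset.coe_filter, Finset.mem_product, Finset.mem_Icc, Set.mem_setOf_eq] at hp hq
    obtain ⟨⟨⟨h11, h12⟩, h21, h22⟩, hlt, hIeq⟩ := hp
    obtain ⟨⟨⟨g11, g12⟩, g21, g22⟩, glt, gIeq⟩ := hq
    have e1 : p.1 = q.1 := hinj p.1 q.1 h11 h12 g11 g12 h
    have e2 : p.2 = q.2 := by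
      apply hinj p.2 q.2 h21 h22 g21 g22
      rw [hIeq, gIeq, e1]
    exact Prod.ext e1 e2
  · intro x hx
    simp only [Finset.coe_filter, Finset.mem_Icc, Set.mem_setOf_eq] at hx
    obtain ⟨⟨hx1, hx2⟩, hb1, hb2⟩ := hx
    obtain ⟨s, hs1, hs2, hs3⟩ := hbd x hx1 (by omega) hb1
    obtain ⟨t, ht1, ht2, ht3⟩ := hbd (x + m) (by omega) (by omega) hb2
    have hst : s < t := by
      by_contra hc
      rcases Nat.lt_or_ge t s with h | h
      · have := hmono t s ht1 h hs2
        omega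
      · have : s = t := by omega
        rw [this, ht3] at hs3
        omega
    refine ⟨(s, t), ?_, hs3⟩
    simp only [Finset.coe_filter, Finset.mem_product, Finset.mem_Icc, Set.mem_setOf_eq]
    exact ⟨⟨⟨hs1, hs2⟩, ht1, ht2⟩, hst, by rw [hs3, ht3]⟩
  · intro p hp
    simp only [Finset.mem_filter, Finset.mem_product, Finset.mem_Icc] at hp
    obtain ⟨⟨⟨h11, h12⟩, h21, h22⟩, hlt, hIeq⟩ := hp
    show (if 2 ≤ p.1 ∧ p.2 ≤ γ then 2 else 1) * (-1:ℤ)^(p.1+p.2)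
        = -((if 1 < I p.1 ∧ I p.1 + m < n + 1 then 2 else 1) * (a (I p.1) * a (I p.1 + m - 1)))
    rw [← hIeq]
    have hc : (1 < I p.1 ∧ I p.2 < n + 1) = (2 ≤ p.1 ∧ p.2 ≤ γ) := by
      apply propext
      constructor
      · rintro ⟨ha, hb⟩
        constructor
        · by_contra hc
          have : p.1 = 1 := by omega
          rw [this, hI1] at ha
          omega
        · by_contra hc
          have : p.2 = γ + 1 := by omega
          rw [this, hIlast] at hb
          omega
      · rintro ⟨ha, hb⟩
        constructor
        · have := hmono 1 p.1 le_rfl (by omega) h12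
          omega
        · have := hmono p.2 (γ+1) h21 (by omega) le_rfl
          rw [hIlast] at this
          omega
    simp only [hc]
    rw [hprod p.1 p.2 h11 hlt h22]
    ring

theorem stmt_17 (n γ : ℕ) (hn : 1 ≤ n) (a : ℕ → ℤ)
    (hbin : ∀ i, 1 ≤ i → i ≤ n → a i = 1 ∨ a i = -1)
    (h0 : a 0 = 0) (htop : a (n + 1) = 0)
    (hnc : ∃ i j, 1 ≤ i ∧ i ≤ n ∧ 1 ≤ j ∧ j ≤ n ∧ a i ≠ a j)
    (h1n : a 1 ≠ a n)
    -- `I j` (for `1 ≤ j ≤ γ+1`) are the starting positions of the runs of `a`: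
    (I : ℕ → ℕ) (hI1 : I 1 = 1) (hIlast : I (γ + 1) = n + 1)
    (hImono : ∀ j, 1 ≤ j → j ≤ γ → I j < I (j + 1))
    (hchange : ∀ j, 2 ≤ j → j ≤ γ → a (I j - 1) ≠ a (I j))
    (hconst : ∀ j, 1 ≤ j → j ≤ γ → ∀ p, I j ≤ p → p < I (j + 1) → a p = a (I j))
    -- the run length encoding `r`:
    (r : ℕ → ℕ) (hr : ∀ j, 1 ≤ j → j ≤ γ → r j = I (j + 1) - I j)
    (k : ℕ) (hk1 : 1 ≤ k) (hk2 : k ≤ n - 1) :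
    2 * runVecPer r γ k = runVec a n k + runVec a n (n - k) := by
  classical
  -- strict monotonicity of I
  have hmono : ∀ s t, 1 ≤ s → s < t → t ≤ γ + 1 → I s < I t := by
    intro s t hs hst ht
    induction t with
    | zero => omega
    | succ t ih =>
      rcases Nat.lt_or_ge s t with h | h
      · exact lt_trans (ih h (by omega)) (hImono t (by omega) (by omega))
      · have hst' : s = t := by omega
        subst hst'
        exact hImono s hs (by omega)
  have hIpos : ∀ s, 1 ≤ s → s ≤ γ + 1 → 1 ≤ I s := by
    intro s h1 h2
    rcases Nat.lt_or_ge 1 s with h | h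
    · have := hmono 1 s le_rfl h h2
      rw [hI1] at this
      omega
    · have : s = 1 := by omega
      rw [this, hI1]
  have hIub : ∀ s, 1 ≤ s → s ≤ γ + 1 → I s ≤ n + 1 := by
    intro s h1 h2
    rcases Nat.lt_or_ge s (γ+1) with h | h
    · have := hmono s (γ+1) h1 h le_rfl
      rw [hIlast] at this
      omega
    · have : s = γ + 1 := by omega
      rw [this, hIlast]
  have hinj : ∀ s t, 1 ≤ s → s ≤ γ+1 → 1 ≤ t → t ≤ γ+1 → I s = I t → s = t := by
    intro s t h1 h2 h3 h4 h
    rcases lt_trichotomy s t with hc | hc | hc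
    · have := hmono s t h1 hc h4; omega
    · exact hc
    · have := hmono t s h3 hc h2; omega
  have hγ1 : 1 ≤ γ := by
    by_contra hc
    have h0' : γ = 0 := by omega
    have h2 : I (γ + 1) = n + 1 := hIlast
    rw [h0'] at h2
    simp only [Nat.zero_add] at h2
    rw [hI1] at h2
    omega
  have hbin1 : a 1 * a 1 = 1 := by
    rcases hbin 1 le_rfl hn with h | h <;> rw [h] <;> norm_num
  have hend : ∀ j, 1 ≤ j → j ≤ γ → a (I (j+1) - 1) = a (I j) := by
    intro j h1 h2
    have hlt : I j < I (j+1) := hImono j h1 h2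
    have hp : 1 ≤ I j := hIpos j h1 (by omega)
    exact hconst j h1 h2 (I (j+1) - 1) (by omega) (by omega)
  have halt : ∀ j, 1 ≤ j → j ≤ γ → a (I j) = (-1:ℤ)^(j+1) * a 1 := by
    intro j
    induction j with
    | zero => omega
    | succ j ih =>
      intro h1 h2
      rcases Nat.lt_or_ge 1 (j+1) with h | h
      · have hj1 : 1 ≤ j := by omega
        have ihv := ih hj1 (by omega)
        have hne := hchange (j+1) (by omega) h2
        have heq := hend j hj1 (by omega)
        rw [heq] at hne
        have hjn : I j ≤ n := by
          have := hmono j (γ+1) hj1 (by omega) le_rfl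
          rw [hIlast] at this
          omega
        have hjn1 : I (j+1) ≤ n := by
          have := hmono (j+1) (γ+1) (by omega) (by omega) le_rfl
          rw [hIlast] at this
          omega
        have hv1 : a (I j) = 1 ∨ a (I j) = -1 := hbin _ (hIpos j hj1 (by omega)) hjn
        have hv2 : a (I (j+1)) = 1 ∨ a (I (j+1)) = -1 :=
          hbin _ (hIpos (j+1) (by omega) (by omega)) hjn1
        have hval : a (I (j+1)) = - a (I j) := by
          rcases hv1 with hh | hh <;> rcases hv2 with gg | gg
          · exact absurd (by rw [hh, gg]) hne
          · rw [gg, hh]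
          · rw [gg, hh]; norm_num
          · exact absurd (by rw [hh, gg]) hne
        rw [hval, ihv, pow_succ]
        ring
      · have hj0 : j = 0 := by omega
        subst hj0
        rw [hI1]
        norm_num
  have hγeven : Even γ := by
    have hv1 := halt γ hγ1 le_rfl
    have hv2 : a n = a (I γ) := by
      have := hend γ hγ1 le_rfl
      rw [hIlast] at this
      simpa using this
    rcases Nat.even_or_odd γ with h | h
    · exact h
    · exfalso
      have hp : (-1:ℤ)^(γ+1) = 1 := (Odd.add_one h).neg_one_pow
      rw [hp, one_mul] at hv1
      exact h1n (by rw [hv2, hv1])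
  have hprod : ∀ s t, 1 ≤ s → s < t → t ≤ γ+1 → a (I s) * a (I t - 1) = -(-1:ℤ)^(s+t) := by
    intro s t hs hst ht
    have e1 : a (I t - 1) = a (I (t-1)) := by
      have := hend (t-1) (by omega) (by omega)
      rwa [(by omega : t - 1 + 1 = t)] at this
    have e2 : a (I (t-1)) = (-1:ℤ)^t * a 1 := by
      have := halt (t-1) (by omega) (by omega)
      rwa [(by omega : t - 1 + 1 = t)] at this
    have e3 : a (I s) = (-1:ℤ)^(s+1) * a 1 := halt s hs (by omega)
    rw [e1, e2, e3]
    have e4 : (-1:ℤ)^(s+1) * a 1 * ((-1:ℤ)^t * a 1) = (-1:ℤ)^(s+1) * (-1:ℤ)^t * (a 1 * a 1) := by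
      ring
    rw [e4, hbin1, mul_one, ← pow_add, (by omega : s+1+t = (s+t)+1), pow_succ]
    ring
  have hboundary : ∀ j, 1 ≤ j → j ≤ γ+1 → a (I j - 1) ≠ a (I j) := by
    intro j h1 h2
    rcases Nat.lt_or_ge j 2 with h | h
    · have : j = 1 := by omega
      subst this
      rw [hI1]
      show a 0 ≠ a 1
      rw [h0]
      rcases hbin 1 le_rfl hn with hh | hh <;> rw [hh] <;> norm_num
    · rcases Nat.lt_or_ge j (γ+1) with hl | hl
      · exact hchange j h (by omega)
      · have : j = γ + 1 := by omega
        subst this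
        rw [hIlast]
        show a (n + 1 - 1) ≠ a (n + 1)
        rw [(by omega : n + 1 - 1 = n), htop]
        rcases hbin n hn le_rfl with hh | hh <;> rw [hh] <;> norm_num
  have hloc : ∀ p, 1 ≤ p → p ≤ n → ∃ j, 1 ≤ j ∧ j ≤ γ ∧ I j ≤ p ∧ p < I (j+1) := by
    intro p hp1 hp2
    have hQ1 : 1 ≤ 1 ∧ I 1 ≤ p := ⟨le_rfl, by rw [hI1]; omega⟩
    set j := Nat.findGreatest (fun j => 1 ≤ j ∧ I j ≤ p) γ with hjdef
    have hj1 : 1 ≤ j := Nat.le_findGreatest hγ1 hQ1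
    have hjγ : j ≤ γ := Nat.findGreatest_le γ
    have hQj : 1 ≤ j ∧ I j ≤ p := by
      have := Nat.findGreatest_spec (P := fun j => 1 ≤ j ∧ I j ≤ p) hγ1 hQ1
      simpa [← hjdef] using this
    refine ⟨j, hj1, hjγ, hQj.2, ?_⟩
    rcases Nat.lt_or_ge j γ with h | h
    · by_contra hc
      exact Nat.findGreatest_is_greatest (show j < j + 1 by omega) (by omega : j + 1 ≤ γ)
        ⟨by omega, by omega⟩
    · have : j = γ := by omega
      rw [this, hIlast]
      omega
  have hbd : ∀ p, 1 ≤ p → p ≤ n+1 → a (p-1) ≠ a p → ∃ j, 1 ≤ j ∧ j ≤ γ+1 ∧ I j = p := by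
    intro p hp1 hp2 hne
    rcases Nat.lt_or_ge p (n+1) with h | h
    · obtain ⟨j, h1, h2, h3, h4⟩ := hloc p hp1 (by omega)
      rcases Nat.eq_or_lt_of_le h3 with h5 | h5
      · exact ⟨j, h1, by omega, h5⟩
      · exfalso
        have e1 : a p = a (I j) := hconst j h1 h2 p h3 h4
        have e2 : a (p-1) = a (I j) := hconst j h1 h2 (p-1) (by omega) (by omega)
        exact hne (by rw [e1, e2])
    · exact ⟨γ+1, by omega, le_rfl, by omega⟩
  have htel : ∀ t s, 1 ≤ s → s ≤ t → t ≤ γ+1 → (∑ u ∈ Finset.Icc s (t-1), r u) = I t - I s := by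
    intro t
    induction t with
    | zero => intro s h1 h2 h3; omega
    | succ t ih =>
      intro s h1 h2 h3
      rcases Nat.eq_or_lt_of_le h2 with h | h
      · subst h
        rw [Finset.Icc_eq_empty (by omega), Finset.sum_empty]
        omega
      · have hst : s ≤ t := by omega
        have ht1 : 1 ≤ t := by omega
        have step : (∑ u ∈ Finset.Icc s (t+1-1), r u)
            = (∑ u ∈ Finset.Icc s (t-1), r u) + r t := by
          rw [(by omega : t + 1 - 1 = (t-1)+1), Finset.sum_Icc_succ_top (by omega : s ≤ t-1+1),
            (by omega : t - 1 + 1 = t)]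
        rw [step, ih s h1 hst (by omega), hr t ht1 (by omega)]
        have o1 : I s ≤ I t := by
          rcases Nat.eq_or_lt_of_le hst with e | e
          · rw [e]
          · exact le_of_lt (hmono s t h1 e (by omega))
        have o2 : I t ≤ I (t+1) := le_of_lt (hImono t ht1 (by omega))
        omega
  have hnk1 : 1 ≤ n - k := by omega
  have hnk2 : n - k ≤ n - 1 := by omega
  have e1 := aux_T a I n γ k hn hk1 hk2 hI1 hIlast hIpos hIub hmono hinj hbd hboundary hprod
  have e2 := aux_T a I n γ (n-k) hn hnk1 hnk2 hI1 hIlast hIpos hIub hmono hinj hbd hboundary hprod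
  have e3 := aux_Per r I n γ k hn hk1 hk2 hγeven hI1 hIlast hmono hIpos hIub htel
  have e4 := aux_TA n γ k I hn hk1 hk2 hγeven hI1 hIlast hIpos
  have e5 := aux_TA n γ (n-k) I hn hnk1 hnk2 hγeven hI1 hIlast hIpos
  rw [(by omega : n - (n - k) = k)] at e5
  rw [e1, e2, e3, e4, e5]
  ring
end
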